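/- arXiv:2006.13659 — 3 statements merged into one kernel-verified Lean document; each statement's English description precedes it below -/
import Mathlib

section
/- Theorem 1 (Truth sharing implies truth learning without self-awareness). Suppose the agents run the partial-information social learning algorithm without self-awareness with transmitted hypothesis θ_TX = θ₀. Under Assumptions 1, 2 and 3, for every agent k the belief on the transmitted hypothesis converges to one almost surely: μ_{k,i}(θ_TX) → 1 a.s. as i → ∞. -/
open MeasureTheory ProbabilityTheory Filter Topology

lemma aux_integrable_of_integral_eq_one {α : Type*} [MeasurableSpace α] {μ : Measure α}
    {f : α → ℝ} (h : ∫ x, f x ∂μ = 1) : Integrable f μ := by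
  by_contra h'
  rw [integral_undef h'] at h
  norm_num at h

lemma aux_D1 {c : ℝ} (hc0 : 0 < c) (hc1 : c < 1) {u t : ℕ → ℝ}
    (hrec : ∀ q, (1 - c) * u q + t q ≤ u (q + 1))
    (ht : Tendsto t atTop atTop) : Tendsto u atTop atTop := by
  rw [tendsto_atTop_atTop]
  intro C
  obtain ⟨Q, hQ⟩ := tendsto_atTop_atTop.mp ht (c * (C + 1))
  set M := max ((C + 1) - u Q) 0 with hMdef
  have hM0 : 0 ≤ M := le_max_right _ _
  have key : ∀ p, (C + 1) - (1 - c) ^ p * M ≤ u (Q + p) := by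
    intro p
    induction p with
    | zero => simp [hMdef]; cases le_total ((C+1) - u Q) 0 with
      | inl h => simp [max_eq_right h]; linarith
      | inr h => simp [max_eq_left h]
    | succ p ih =>
      have h1 : c * (C + 1) ≤ t (Q + p) := hQ (Q + p) (Nat.le_add_right _ _)
      have h2 := hrec (Q + p)
      have h3 : (1 - c) * ((C + 1) - (1 - c) ^ p * M) ≤ (1 - c) * u (Q + p) :=
        mul_le_mul_of_nonneg_left ih (by linarith)
      have : Q + (p + 1) = (Q + p) + 1 := by omega
      rw [this, pow_succ]
      nlinarith [h2, h3, h1]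
  have hpow : Tendsto (fun p => (1 - c) ^ p * M) atTop (𝓝 0) := by
    have h0 : Tendsto (fun p : ℕ => (1 - c) ^ p) atTop (𝓝 0) :=
      tendsto_pow_atTop_nhds_zero_of_lt_one (by linarith) (by linarith)
    simpa using h0.mul_const M
  have hev : ∀ᶠ p in atTop, (1 - c) ^ p * M ≤ 1 := by
    have := hpow.eventually_le_const (show (0:ℝ) < 1 by norm_num)
    exact this
  obtain ⟨p0, hp0⟩ := eventually_atTop.mp hev
  refine ⟨Q + p0, fun i hi => ?_⟩
  have hiQ : Q ≤ i := le_trans (Nat.le_add_right _ _) hi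
  have : i = Q + (i - Q) := by omega
  rw [this]
  have hp : p0 ≤ i - Q := by omega
  have := key (i - Q)
  have := hp0 (i - Q) hp
  linarith

lemma aux_cesaro {b : ℕ → ℝ} {β : ℝ}
    (h : Tendsto (fun q : ℕ => (q : ℝ)⁻¹ * ∑ j ∈ Finset.range q, b j) atTop (𝓝 β)) :
    Tendsto (fun j => b j / j) atTop (𝓝 0) := by
  set S : ℕ → ℝ := fun q => (q : ℝ)⁻¹ * ∑ j ∈ Finset.range q, b j with hSdef
  have h1 : Tendsto (fun j : ℕ => (1 + (j:ℝ)⁻¹) * S (j + 1) - S j) atTop (𝓝 0) := by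
    have hr : Tendsto (fun j : ℕ => 1 + (j:ℝ)⁻¹) atTop (𝓝 1) := by
      simpa using tendsto_const_nhds.add (tendsto_inv_atTop_nhds_zero_nat (𝕜 := ℝ))
    have hS1 : Tendsto (fun j : ℕ => S (j + 1)) atTop (𝓝 β) :=
      (tendsto_add_atTop_iff_nat 1).mpr h
    have := (hr.mul hS1).sub h
    simpa using this
  refine h1.congr' ?_
  filter_upwards [eventually_ge_atTop 1] with j hj
  have hj0 : (j : ℝ) ≠ 0 := Nat.cast_ne_zero.mpr (by omega)
  have hj1 : ((j : ℝ) + 1) ≠ 0 := by positivity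
  simp only [hSdef]
  rw [Finset.sum_range_succ]
  push_cast
  field_simp
  ring

lemma aux_subseq_div {f : ℕ → ℝ} {β : ℝ}
    (h : Tendsto (fun i => f i / i) atTop (𝓝 β)) {n : ℕ} (hn : 1 ≤ n) (r : ℕ) :
    Tendsto (fun q => f (q * n + r) / q) atTop (𝓝 (β * n)) := by
  have hmono : Tendsto (fun q : ℕ => q * n + r) atTop atTop := by
    apply tendsto_atTop_atTop.mpr
    intro b
    exact ⟨b, fun q hq => by nlinarith⟩
  have hcomp : Tendsto (fun q => f (q * n + r) / (q * n + r : ℕ)) atTop (𝓝 β) := h.comp hmono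
  have hratio : Tendsto (fun q : ℕ => ((q * n + r : ℕ) : ℝ) / q) atTop (𝓝 n) := by
    have : Tendsto (fun q : ℕ => (n : ℝ) + r * (q:ℝ)⁻¹) atTop (𝓝 n) := by
      simpa using tendsto_const_nhds.add
        (tendsto_inv_atTop_nhds_zero_nat.const_mul (r:ℝ))
    refine this.congr' ?_
    filter_upwards [eventually_ge_atTop 1] with q hq
    have hq0 : (q : ℝ) ≠ 0 := Nat.cast_ne_zero.mpr (by omega)
    push_cast
    field_simp
  have := hcomp.mul hratio
  refine this.congr' ?_
  filter_upwards [eventually_ge_atTop 1] with q hq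
  have hq0 : (q : ℝ) ≠ 0 := Nat.cast_ne_zero.mpr (by omega)
  have hi0 : ((q * n + r : ℕ) : ℝ) ≠ 0 := by
    have : 1 ≤ q * n + r := by nlinarith
    exact Nat.cast_ne_zero.mpr (by omega)
  field_simp

lemma aux_D2 {n : ℕ} (hn : 1 ≤ n) {c α : ℝ} (hc0 : 0 < c) (hc1 : c < 1)
    (m s g : ℕ → ℝ)
    (hrec : ∀ i, c * s i + (1 - c) * m i - (∑ j ∈ Finset.range n, g (i + j)) ≤ m (i + n))
    (hs : Tendsto (fun i => s i / i) atTop (𝓝 α)) (hα : 0 < α)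
    (hg : Tendsto (fun i => g i / i) atTop (𝓝 0)) :
    Tendsto m atTop atTop := by
  have hr : ∀ r : Fin n, Tendsto (fun q => m (q * n + (r : ℕ))) atTop atTop := by
    intro r
    apply aux_D1 hc0 hc1 (t := fun q => c * s (q * n + (r:ℕ)) -
      ∑ j ∈ Finset.range n, g (q * n + (r:ℕ) + j))
    · intro q
      have h1 := hrec (q * n + (r : ℕ))
      have he : q * n + (r : ℕ) + n = (q + 1) * n + (r : ℕ) := by ring
      rw [he] at h1
      linarith
    · -- tendsto atTop
      have hts : Tendsto (fun q => (c * s (q * n + (r:ℕ)) -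
          ∑ j ∈ Finset.range n, g (q * n + (r:ℕ) + j)) / q) atTop (𝓝 (c * (α * n))) := by
        have h1 : Tendsto (fun q => c * (s (q * n + (r:ℕ)) / q)) atTop (𝓝 (c * (α * n))) :=
          (aux_subseq_div hs hn (r : ℕ)).const_mul c
        have h2 : Tendsto (fun q => ∑ j ∈ Finset.range n,
            g (q * n + ((r:ℕ) + j)) / q) atTop (𝓝 0) := by
          have : Tendsto (fun q => ∑ j ∈ Finset.range n,
              g (q * n + ((r:ℕ) + j)) / q) atTop (𝓝 (∑ j ∈ Finset.range n, (0:ℝ))) := by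
            apply tendsto_finset_sum
            intro j _
            simpa using aux_subseq_div hg hn ((r:ℕ) + j)
          simpa using this
        have h3 := h1.sub h2
        rw [sub_zero] at h3
        refine h3.congr ?_
        intro q
        rw [← Finset.sum_div, ← mul_div_assoc, ← sub_div]
        congr 2
        apply Finset.sum_congr rfl
        intro j _
        congr 1
        omega
      have hq : Tendsto (fun q : ℕ => (q : ℝ)) atTop atTop := tendsto_natCast_atTop_atTop
      have hprod := Filter.Tendsto.pos_mul_atTop (by positivity) hts hq
      refine hprod.congr' ?_
      filter_upwards [eventually_ge_atTop 1] with q hq1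
      have hq0 : (q : ℝ) ≠ 0 := Nat.cast_ne_zero.mpr (by omega)
      field_simp
  rw [tendsto_atTop_atTop]
  intro C
  have H : ∀ r : Fin n, ∃ N, ∀ q ≥ N, C ≤ m (q * n + (r:ℕ)) :=
    fun r => tendsto_atTop_atTop.mp (hr r) C
  choose N hN using H
  haveI : Nonempty (Fin n) := ⟨⟨0, by omega⟩⟩
  set N0 := Finset.univ.sup N with hN0
  refine ⟨(N0 + 1) * n, fun i hi => ?_⟩
  have hn0 : 0 < n := hn
  set q := i / n with hqdef
  set r := i % n with hrdef
  have hrn : r < n := Nat.mod_lt _ hn0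
  have hi' : i = q * n + r := by
    have h := Nat.div_add_mod i n
    rw [Nat.mul_comm] at h
    exact h.symm
  have hq1 : N0 + 1 ≤ q := by
    have := Nat.div_le_div_right (c := n) hi
    rwa [Nat.mul_div_cancel _ hn0] at this
  have hNr : N ⟨r, hrn⟩ ≤ q := le_trans (le_trans (Finset.le_sup (Finset.mem_univ _)) (by omega)) le_rfl
  have := hN ⟨r, hrn⟩ q hNr
  rwa [← hi'] at this

lemma aux_avg_shift {W : ℕ → ℝ} {α C : ℝ}
    (h : Tendsto (fun q : ℕ => (q:ℝ)⁻¹ * ∑ j ∈ Finset.range q, W j) atTop (𝓝 α)) :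
    Tendsto (fun i : ℕ => (C + ∑ j ∈ Finset.range (i+1), W j) / i) atTop (𝓝 α) := by
  set S : ℕ → ℝ := fun q => (q : ℝ)⁻¹ * ∑ j ∈ Finset.range q, W j with hSdef
  have h1 : Tendsto (fun i : ℕ => C * (i:ℝ)⁻¹ + (1 + (i:ℝ)⁻¹) * S (i + 1)) atTop (𝓝 α) := by
    have hr : Tendsto (fun i : ℕ => 1 + (i:ℝ)⁻¹) atTop (𝓝 1) := by
      simpa using tendsto_const_nhds.add (tendsto_inv_atTop_nhds_zero_nat (𝕜 := ℝ))
    have hC : Tendsto (fun i : ℕ => C * (i:ℝ)⁻¹) atTop (𝓝 0) := by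
      simpa using tendsto_inv_atTop_nhds_zero_nat.const_mul C
    have hS1 : Tendsto (fun i : ℕ => S (i + 1)) atTop (𝓝 α) :=
      (tendsto_add_atTop_iff_nat 1).mpr h
    simpa using hC.add (hr.mul hS1)
  refine h1.congr' ?_
  filter_upwards [eventually_ge_atTop 1] with i hi
  have hi0 : (i : ℝ) ≠ 0 := Nat.cast_ne_zero.mpr (by omega)
  have hi1 : ((i : ℝ) + 1) ≠ 0 := by positivity
  simp only [hSdef]
  push_cast
  field_simp

lemma aux_shift_div {b : ℕ → ℝ} (h : Tendsto (fun j : ℕ => b j / j) atTop (𝓝 0)) :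
    Tendsto (fun j : ℕ => b (j+1) / j) atTop (𝓝 0) := by
  have h1 : Tendsto (fun j : ℕ => b (j+1) / (j+1 : ℕ)) atTop (𝓝 0) :=
    (tendsto_add_atTop_iff_nat 1).mpr h
  have hr : Tendsto (fun j : ℕ => ((j:ℝ) + 1) / j) atTop (𝓝 1) := by
    have : Tendsto (fun j : ℕ => 1 + (j:ℝ)⁻¹) atTop (𝓝 1) := by
      simpa using tendsto_const_nhds.add (tendsto_inv_atTop_nhds_zero_nat (𝕜 := ℝ))
    refine this.congr' ?_
    filter_upwards [eventually_ge_atTop 1] with j hj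
    have hj0 : (j : ℝ) ≠ 0 := Nat.cast_ne_zero.mpr (by omega)
    field_simp
  have := h1.mul hr
  rw [mul_one] at this
  refine this.congr' ?_
  filter_upwards [eventually_ge_atTop 1] with j hj
  have hj0 : (j : ℝ) ≠ 0 := Nat.cast_ne_zero.mpr (by omega)
  have hj1 : ((j : ℝ) + 1) ≠ 0 := by positivity
  push_cast
  field_simp

lemma aux_pow_nonneg {K : ℕ} {a : Fin K → Fin K → ℝ} (ha : ∀ ℓ k, 0 ≤ a ℓ k) :
    ∀ n ℓ k, 0 ≤ ((Matrix.of a) ^ n) ℓ k := by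
  intro n
  induction n with
  | zero => intro ℓ k; rw [pow_zero]; rw [Matrix.one_apply]; positivity
  | succ n ih =>
    intro ℓ k
    rw [pow_succ, Matrix.mul_apply]
    exact Finset.sum_nonneg fun m _ => mul_nonneg (ih ℓ m) (ha m k)

lemma aux_pow_colsum {K : ℕ} {a : Fin K → Fin K → ℝ} (ha : ∀ k, ∑ ℓ, a ℓ k = 1) :
    ∀ n k, ∑ ℓ, ((Matrix.of a) ^ n) ℓ k = 1 := by
  intro n
  induction n with
  | zero =>
    intro k
    simp [Matrix.one_apply]
  | succ n ih =>
    intro k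
    have : ∀ ℓ, ((Matrix.of a) ^ (n+1)) ℓ k = ∑ m, ((Matrix.of a) ^ n) ℓ m * a m k := by
      intro ℓ; rw [pow_succ, Matrix.mul_apply]; rfl
    simp_rw [this]
    rw [Finset.sum_comm]
    have : ∀ m, ∑ ℓ, ((Matrix.of a) ^ n) ℓ m * a m k = a m k := by
      intro m; rw [← Finset.sum_mul, ih m, one_mul]
    simp_rw [this]
    exact ha k

lemma aux_matrix_bound {K : ℕ} {a : Fin K → Fin K → ℝ}
    (ha_nonneg : ∀ ℓ k, 0 ≤ a ℓ k) (ha_stoch : ∀ k, ∑ ℓ, a ℓ k = 1)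
    (Y x : Fin K → ℕ → ℝ) (g : ℕ → ℝ)
    (hY : ∀ k i, Y k (i+1) = ∑ ℓ, a ℓ k * (Y ℓ i + x ℓ i))
    (hxg : ∀ ℓ i, -(g i) ≤ x ℓ i) (hg0 : ∀ i, 0 ≤ g i) :
    ∀ n i k, ∑ ℓ, ((Matrix.of a) ^ n) ℓ k * Y ℓ i - (∑ j ∈ Finset.range n, g (i + j)) ≤ Y k (i + n) := by
  intro n
  induction n with
  | zero =>
    intro i k
    simp only [pow_zero, Finset.range_zero, Finset.sum_empty, sub_zero, Nat.add_zero]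
    rw [Finset.sum_eq_single k]
    · rw [Matrix.one_apply_eq, one_mul]
    · intro b _ hb; rw [Matrix.one_apply_ne hb, zero_mul]
    · intro hk; exact absurd (Finset.mem_univ k) hk
  | succ n ih =>
    intro i k
    have hstep : ∀ ℓ, ∑ m, a m ℓ * Y m i - g i ≤ Y ℓ (i + 1) := by
      intro ℓ
      rw [hY ℓ i]
      have h1 : ∑ m, a m ℓ * (Y m i + x m i) = ∑ m, a m ℓ * Y m i + ∑ m, a m ℓ * x m i := by
        rw [← Finset.sum_add_distrib]; apply Finset.sum_congr rfl; intro m _; ring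
      rw [h1]
      have h2 : -(g i) ≤ ∑ m, a m ℓ * x m i := by
        calc -(g i) = ∑ m, a m ℓ * (-(g i)) := by
              rw [← Finset.sum_mul, ha_stoch ℓ, one_mul]
          _ ≤ ∑ m, a m ℓ * x m i :=
              Finset.sum_le_sum fun m _ => mul_le_mul_of_nonneg_left (hxg m i) (ha_nonneg m ℓ)
      linarith
    have ihs := ih (i + 1) k
    have hmono : ∑ ℓ, ((Matrix.of a) ^ n) ℓ k * (∑ m, a m ℓ * Y m i - g i) ≤
        ∑ ℓ, ((Matrix.of a) ^ n) ℓ k * Y ℓ (i + 1) :=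
      Finset.sum_le_sum fun ℓ _ =>
        mul_le_mul_of_nonneg_left (hstep ℓ) (aux_pow_nonneg ha_nonneg n ℓ k)
    have hexp : ∑ ℓ, ((Matrix.of a) ^ n) ℓ k * (∑ m, a m ℓ * Y m i - g i) =
        ∑ m, ((Matrix.of a) ^ (n+1)) m k * Y m i - g i := by
      have h1 : ∀ ℓ, ((Matrix.of a) ^ n) ℓ k * (∑ m, a m ℓ * Y m i - g i) =
          (∑ m, ((Matrix.of a) ^ n) ℓ k * (a m ℓ * Y m i)) - ((Matrix.of a) ^ n) ℓ k * g i := by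
        intro ℓ; rw [mul_sub, Finset.mul_sum]
      simp_rw [h1]
      rw [Finset.sum_sub_distrib, ← Finset.sum_mul, aux_pow_colsum ha_stoch n k, one_mul]
      congr 1
      rw [Finset.sum_comm]
      apply Finset.sum_congr rfl
      intro m _
      have : ((Matrix.of a) ^ (n+1)) m k = ∑ ℓ, a m ℓ * ((Matrix.of a) ^ n) ℓ k := by
        rw [pow_succ']
        rw [Matrix.mul_apply]
        rfl
      rw [this, Finset.sum_mul]
      apply Finset.sum_congr rfl
      intro ℓ _
      ring
    have hsum : ∑ j ∈ Finset.range (n+1), g (i + j) =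
        (∑ j ∈ Finset.range n, g (i + 1 + j)) + g i := by
      rw [Finset.sum_range_succ']
      congr 1
      apply Finset.sum_congr rfl; intro j _; congr 1; omega
    have : i + (n + 1) = (i + 1) + n := by omega
    rw [this, hsum]
    have := le_trans (le_of_eq hexp.symm) (by linarith [hmono, ihs] : ∑ ℓ, ((Matrix.of a) ^ n) ℓ k * (∑ m, a m ℓ * Y m i - g i) ≤ Y k (i + 1 + n) + (∑ j ∈ Finset.range n, g (i+1+j)))
    linarith

lemma aux_det {K n : ℕ} (hK : 0 < K) (hn : 1 ≤ n)
    {a : Fin K → Fin K → ℝ} (ha_nonneg : ∀ ℓ k, 0 ≤ a ℓ k) (ha_stoch : ∀ k, ∑ ℓ, a ℓ k = 1)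
    (hpos : ∀ ℓ k, 0 < ((Matrix.of a) ^ n) ℓ k)
    {v : Fin K → ℝ} (hv_pos : ∀ ℓ, 0 < v ℓ) (hv_sum : ∑ ℓ, v ℓ = 1)
    (Y x : Fin K → ℕ → ℝ) (g : ℕ → ℝ) {α : ℝ}
    (hY : ∀ k i, Y k (i+1) = ∑ ℓ, a ℓ k * (Y ℓ i + x ℓ i))
    (hxg : ∀ ℓ i, -(g i) ≤ x ℓ i) (hg0 : ∀ i, 0 ≤ g i)
    (hs : Tendsto (fun i : ℕ => (∑ ℓ, v ℓ * Y ℓ i) / i) atTop (𝓝 α)) (hα : 0 < α)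
    (hg : Tendsto (fun i : ℕ => g i / i) atTop (𝓝 0)) :
    ∀ k, Tendsto (fun i => Y k i) atTop atTop := by
  haveI : Nonempty (Fin K) := Fin.pos_iff_nonempty.mp hK
  set AP := (Matrix.of a) ^ n with hAP
  -- choose c
  set δ : ℝ := Finset.univ.inf' Finset.univ_nonempty (fun p : Fin K × Fin K => AP p.1 p.2) with hδ
  have hδpos : 0 < δ := by
    rw [hδ, Finset.lt_inf'_iff]
    intro p _
    exact hpos p.1 p.2
  have hδle : ∀ ℓ k, δ ≤ AP ℓ k := fun ℓ k =>
    Finset.inf'_le _ (Finset.mem_univ (ℓ, k))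
  have hvle : ∀ ℓ, v ℓ ≤ 1 := by
    intro ℓ
    rw [← hv_sum]
    exact Finset.single_le_sum (fun m _ => (hv_pos m).le) (Finset.mem_univ ℓ)
  have hδ1 : δ ≤ 1 := by
    obtain ⟨k0⟩ := (inferInstance : Nonempty (Fin K))
    have h1 : AP k0 k0 ≤ ∑ ℓ, AP ℓ k0 :=
      Finset.single_le_sum (fun ℓ _ => aux_pow_nonneg ha_nonneg n ℓ k0) (Finset.mem_univ k0)
    have h2 := aux_pow_colsum ha_stoch n k0
    have := hδle k0 k0
    linarith
  set c : ℝ := δ / 2 with hc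
  have hc0 : 0 < c := by positivity
  have hc1 : c < 1 := by rw [hc]; linarith
  have hcv : ∀ ℓ k, c * v ℓ ≤ AP ℓ k := by
    intro ℓ k
    have : c * v ℓ ≤ c * 1 := mul_le_mul_of_nonneg_left (hvle ℓ) hc0.le
    calc c * v ℓ ≤ c := by linarith
      _ ≤ δ := by rw [hc]; linarith
      _ ≤ AP ℓ k := hδle ℓ k
  set m : ℕ → ℝ := fun i => Finset.univ.inf' Finset.univ_nonempty (fun k => Y k i) with hm
  have hmle : ∀ i k, m i ≤ Y k i := fun i k => Finset.inf'_le _ (Finset.mem_univ k)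
  have hmat := aux_matrix_bound ha_nonneg ha_stoch Y x g hY hxg hg0 n
  have hrec : ∀ i, c * ((∑ ℓ, v ℓ * Y ℓ i)) + (1 - c) * m i -
      (∑ j ∈ Finset.range n, g (i + j)) ≤ m (i + n) := by
    intro i
    rw [hm]
    apply Finset.le_inf'
    intro k _
    have h1 := hmat i k
    have h2 : c * (∑ ℓ, v ℓ * Y ℓ i) + (1 - c) * m i ≤ ∑ ℓ, AP ℓ k * Y ℓ i := by
      have hsplit : ∑ ℓ, AP ℓ k * Y ℓ i =
          ∑ ℓ, (AP ℓ k - c * v ℓ) * Y ℓ i + c * (∑ ℓ, v ℓ * Y ℓ i) := by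
        rw [Finset.mul_sum, ← Finset.sum_add_distrib]
        apply Finset.sum_congr rfl
        intro ℓ _
        ring
      have hlb : (1 - c) * m i ≤ ∑ ℓ, (AP ℓ k - c * v ℓ) * Y ℓ i := by
        have e : ∑ ℓ, (AP ℓ k - c * v ℓ) = 1 - c := by
          rw [Finset.sum_sub_distrib, aux_pow_colsum ha_stoch n k, ← Finset.mul_sum, hv_sum,
            mul_one]
        calc (1 - c) * m i = ∑ ℓ, (AP ℓ k - c * v ℓ) * m i := by rw [← Finset.sum_mul, e]
          _ ≤ ∑ ℓ, (AP ℓ k - c * v ℓ) * Y ℓ i :=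
            Finset.sum_le_sum fun ℓ _ => mul_le_mul_of_nonneg_left (hmle i ℓ)
              (by linarith [hcv ℓ k])
      linarith [hsplit, hlb]
    linarith [h1, h2]
  have hmtop : Tendsto m atTop atTop := aux_D2 hn hc0 hc1 m _ g hrec hs hα hg
  intro k
  exact tendsto_atTop_mono (fun i => hmle i k) hmtop

lemma aux_prim {K : ℕ} (hK : 0 < K) {a : Fin K → Fin K → ℝ}
    (ha_stoch : ∀ k, ∑ ℓ, a ℓ k = 1)
    (h : ∃ n : ℕ, ∀ ℓ k, 0 < ((Matrix.of a) ^ n) ℓ k) :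
    ∃ n : ℕ, 1 ≤ n ∧ ∀ ℓ k, 0 < ((Matrix.of a) ^ n) ℓ k := by
  obtain ⟨n, hn⟩ := h
  match n, hn with
  | (n+1), hn => exact ⟨n+1, by omega, hn⟩
  | 0, hn =>
    have hsub : ∀ x y : Fin K, x = y := by
      intro x y
      by_contra hxy
      have := hn x y
      rw [pow_zero, Matrix.one_apply_ne hxy] at this
      exact lt_irrefl 0 this
    refine ⟨1, le_rfl, ?_⟩
    intro ℓ k
    rw [pow_one]
    have huniv : (Finset.univ : Finset (Fin K)) = {k} := by
      apply Finset.eq_singleton_iff_unique_mem.mpr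
      exact ⟨Finset.mem_univ k, fun x _ => hsub x k⟩
    have := ha_stoch k
    rw [huniv, Finset.sum_singleton] at this
    have hℓk : ℓ = k := hsub ℓ k
    show 0 < a ℓ k
    rw [hℓk, this]
    norm_num

lemma aux_field (x y d p s h : ℝ) (hd : d ≠ 0) (hp : p ≠ 0) (hs : s ≠ 0) (hh : h ≠ 0) :
    (x * y / d) / (p * s / d / h) = (x / p) * (y / (s / h)) := by
  field_simp

lemma aux_field2 (x y c : ℝ) (hx : x ≠ 0) (h : x + c * y = 1) : x * (1 + c * (y / x)) = 1 := by
  have e : x * (1 + c * (y / x)) = x + c * y := by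
    field_simp
  rw [e, h]

set_option maxHeartbeats 1000000 in
theorem truth_sharing_implies_truth_learning_without_self_awareness
    {Ω : Type} [mΩ : MeasurableSpace Ω] (P : Measure Ω) [IsProbabilityMeasure P]
    (K H : ℕ) (hK : 0 < K) (hH : 2 ≤ H)
    (X : Fin K → Type) [∀ k, MeasurableSpace (X k)]
    (ν : ∀ k, Measure (X k))
    (L : ∀ k : Fin K, Fin H → X k → ℝ)
    (θ0 : Fin H)
    (hLpos : ∀ k θ x, 0 < L k θ x)
    (hLmeas : ∀ k θ, Measurable (L k θ))
    (hLdens : ∀ k θ, ∫ x, L k θ x ∂(ν k) = 1)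
    (ξ : ∀ k : Fin K, ℕ → Ω → X k)
    (hξmeas : ∀ k i, Measurable (ξ k i))
    (hξdist : ∀ k (i : ℕ), 1 ≤ i →
      Measure.map (ξ k i) P = (ν k).withDensity (fun x => ENNReal.ofReal (L k θ0 x)))
    (hξindep : iIndepFun
      (fun (i : ℕ) (ω : Ω) (k : Fin K) => ξ k (i + 1) ω) P)
    (hKL : ∀ k θ θ',
      Integrable (fun x => L k θ x * Real.log (L k θ x / L k θ' x)) (ν k))
    (a : Fin K → Fin K → ℝ)
    (ha_nonneg : ∀ ℓ k, 0 ≤ a ℓ k)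
    (ha_stoch : ∀ k, ∑ ℓ, a ℓ k = 1)
    (ha_prim : ∃ n : ℕ, ∀ ℓ k, 0 < ((Matrix.of a) ^ n) ℓ k)
    (v : Fin K → ℝ)
    (hv_pos : ∀ ℓ, 0 < v ℓ)
    (hv_sum : ∑ ℓ, v ℓ = 1)
    (hv_eig : ∀ ℓ, ∑ k, a ℓ k * v k = v ℓ)
    (θTX : Fin H)
    (hθTX : θTX = θ0)
    (μb ψ ψh : Fin K → ℕ → Fin H → Ω → ℝ)
    (μinit : Fin K → Fin H → ℝ)
    (hμinit_pos : ∀ k θ, 0 < μinit k θ)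
    (hμinit_sum : ∀ k, ∑ θ, μinit k θ = 1)
    (hμb0 : ∀ k θ ω, μb k 0 θ ω = μinit k θ)
    (hψ : ∀ k (i : ℕ) θ ω, ψ k (i + 1) θ ω =
      μb k i θ ω * L k θ (ξ k (i + 1) ω) /
        ∑ θ', μb k i θ' ω * L k θ' (ξ k (i + 1) ω))
    (hψh_tx : ∀ k (i : ℕ) ω, ψh k (i + 1) θTX ω = ψ k (i + 1) θTX ω)
    (hψh_ntx : ∀ k (i : ℕ) θ ω, θ ≠ θTX →
      ψh k (i + 1) θ ω = (1 - ψ k (i + 1) θTX ω) / ((H : ℝ) - 1))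
    (hcomb : ∀ k (i : ℕ) θ ω, μb k (i + 1) θ ω =
      Real.exp (∑ ℓ, a ℓ k * Real.log (ψh ℓ (i + 1) θ ω)) /
        ∑ θ', Real.exp (∑ ℓ, a ℓ k * Real.log (ψh ℓ (i + 1) θ' ω)))
    (hclear : ∃ kstar : Fin K,
      (∃ θ : Fin H, 0 < (∫ ω, Real.log (L kstar θ0 (ξ kstar 1 ω) / L kstar θ (ξ kstar 1 ω)) ∂P)) ∧
      0 < (∫ ω, Real.log (L kstar θ0 (ξ kstar 1 ω) / ((∑ τ ∈ Finset.univ.erase θ0, L kstar τ (ξ kstar 1 ω)) / ((H : ℝ) - 1))) ∂P)) :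
    ∀ k : Fin K, ∀ᵐ ω ∂P,
      Tendsto (fun (i : ℕ) => μb k i θTX ω) atTop (𝓝 1) := by
  subst hθTX
  haveI : Nonempty (Fin K) := Fin.pos_iff_nonempty.mp hK
  haveI : Nonempty (Fin H) := ⟨θTX⟩
  have hH1 : (0:ℝ) < (H:ℝ) - 1 := by
    have : (2:ℝ) ≤ (H:ℝ) := by exact_mod_cast hH
    linarith
  have hlogH1 : 0 ≤ Real.log ((H:ℝ) - 1) := by
    apply Real.log_nonneg
    have : (2:ℝ) ≤ (H:ℝ) := by exact_mod_cast hH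
    linarith
  obtain ⟨θp, hθp⟩ : ∃ θp : Fin H, θp ≠ θTX :=
    Fintype.exists_ne_of_one_lt_card (by simp; omega) θTX
  have hθpmem : θp ∈ Finset.univ.erase θTX :=
    Finset.mem_erase.mpr ⟨hθp, Finset.mem_univ _⟩
  have hcard : (Finset.univ.erase θTX).card = H - 1 := by
    rw [Finset.card_erase_of_mem (Finset.mem_univ θTX), Finset.card_univ, Fintype.card_fin]
  have hcardR : ((H - 1 : ℕ) : ℝ) = (H:ℝ) - 1 := by
    rw [Nat.cast_sub (by omega)]; norm_num
  -- basic positivity and normalization of beliefs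
  have hbasic : ∀ i k (ω : Ω), (∀ θ, 0 < μb k i θ ω) ∧ (∑ θ, μb k i θ ω) = 1 := by
    intro i
    cases i with
    | zero =>
      intro k ω
      refine ⟨fun θ => ?_, ?_⟩
      · rw [hμb0]; exact hμinit_pos k θ
      · simp only [hμb0]; exact hμinit_sum k
    | succ i =>
      intro k ω
      have hZ : 0 < ∑ θ', Real.exp (∑ ℓ, a ℓ k * Real.log (ψh ℓ (i + 1) θ' ω)) :=
        Finset.sum_pos (fun θ' _ => Real.exp_pos _) Finset.univ_nonempty
      constructor
      · intro θ
        rw [hcomb]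
        exact div_pos (Real.exp_pos _) hZ
      · simp only [hcomb]
        rw [← Finset.sum_div]
        exact div_self (ne_of_gt hZ)
  have hD : ∀ i k (ω : Ω), 0 < ∑ θ', μb k i θ' ω * L k θ' (ξ k (i+1) ω) :=
    fun i k ω => Finset.sum_pos
      (fun θ' _ => mul_pos ((hbasic i k ω).1 θ') (hLpos k θ' _)) Finset.univ_nonempty
  have hψpos : ∀ i k θ (ω : Ω), 0 < ψ k (i+1) θ ω := by
    intro i k θ ω
    rw [hψ]
    exact div_pos (mul_pos ((hbasic i k ω).1 θ) (hLpos k θ _)) (hD i k ω)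
  have hψsum : ∀ i k (ω : Ω), ∑ θ, ψ k (i+1) θ ω = 1 := by
    intro i k ω
    simp only [hψ]
    rw [← Finset.sum_div]
    exact div_self (ne_of_gt (hD i k ω))
  have hψlt1 : ∀ i k (ω : Ω), ψ k (i+1) θTX ω < 1 := by
    intro i k ω
    have hsum := hψsum i k ω
    rw [← Finset.sum_erase_add _ _ (Finset.mem_univ θTX)] at hsum
    have h2 : 0 < ∑ θ ∈ Finset.univ.erase θTX, ψ k (i+1) θ ω :=
      Finset.sum_pos (fun θ _ => hψpos i k θ ω) ⟨θp, hθpmem⟩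
    linarith
  have hψhpos : ∀ i k θ (ω : Ω), 0 < ψh k (i+1) θ ω := by
    intro i k θ ω
    by_cases hθ : θ = θTX
    · subst hθ; rw [hψh_tx]; exact hψpos i k θ ω
    · rw [hψh_ntx _ _ _ _ hθ]
      exact div_pos (by linarith [hψlt1 i k ω]) hH1
  have hmueq : ∀ i k (ω : Ω) θ, θ ≠ θTX → μb k (i+1) θ ω = μb k (i+1) θp ω := by
    intro i k ω θ hθ
    have e : (∑ ℓ, a ℓ k * Real.log (ψh ℓ (i+1) θ ω)) =
        ∑ ℓ, a ℓ k * Real.log (ψh ℓ (i+1) θp ω) := by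
      apply Finset.sum_congr rfl
      intro ℓ _
      rw [hψh_ntx _ _ _ _ hθ, hψh_ntx _ _ _ _ hθp]
    rw [hcomb, hcomb, e]
  -- the per-signal log-likelihood-ratio function
  set hfun : ∀ ℓ : Fin K, X ℓ → ℝ := fun ℓ z =>
    Real.log (L ℓ θTX z / ((∑ τ ∈ Finset.univ.erase θTX, L ℓ τ z) / ((H:ℝ) - 1))) with hfundef
  set negfun : ∀ ℓ : Fin K, X ℓ → ℝ := fun ℓ z => max (-(hfun ℓ z)) 0 with hnegfundef
  set XX : Fin K → ℕ → Ω → ℝ := fun ℓ j ω => hfun ℓ (ξ ℓ (j+1) ω) with hXXdef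
  set BB : Fin K → ℕ → Ω → ℝ := fun ℓ j ω => negfun ℓ (ξ ℓ (j+1) ω) with hBBdef
  set Y : Fin K → ℕ → Ω → ℝ := fun k i ω =>
    Real.log (μb k (i+1) θTX ω / μb k (i+1) θp ω) with hYdef
  have hSpos : ∀ ℓ z, 0 < ∑ τ ∈ Finset.univ.erase θTX, L ℓ τ z := fun ℓ z =>
    Finset.sum_pos (fun τ _ => hLpos ℓ τ z) ⟨θp, hθpmem⟩
  have hbarpos : ∀ ℓ z, 0 < (∑ τ ∈ Finset.univ.erase θTX, L ℓ τ z) / ((H:ℝ)-1) :=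
    fun ℓ z => div_pos (hSpos ℓ z) hH1
  -- log-belief-ratio recursion
  have hlog : ∀ i ℓ (ω : Ω), Real.log (ψh ℓ (i+2) θTX ω) - Real.log (ψh ℓ (i+2) θp ω) =
      Y ℓ i ω + XX ℓ (i+1) ω := by
    intro i ℓ ω
    have hμ0 : 0 < μb ℓ (i+1) θTX ω := (hbasic (i+1) ℓ ω).1 θTX
    have hμp : 0 < μb ℓ (i+1) θp ω := (hbasic (i+1) ℓ ω).1 θp
    have hS : 0 < ∑ τ ∈ Finset.univ.erase θTX, L ℓ τ (ξ ℓ (i+2) ω) := hSpos ℓ _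
    have hDp : 0 < ∑ θ', μb ℓ (i+1) θ' ω * L ℓ θ' (ξ ℓ (i+2) ω) := hD (i+1) ℓ ω
    have hL0 : 0 < L ℓ θTX (ξ ℓ (i+2) ω) := hLpos ℓ θTX _
    have hDsplit : (∑ θ', μb ℓ (i+1) θ' ω * L ℓ θ' (ξ ℓ (i+2) ω)) =
        μb ℓ (i+1) θp ω * (∑ τ ∈ Finset.univ.erase θTX, L ℓ τ (ξ ℓ (i+2) ω)) +
        μb ℓ (i+1) θTX ω * L ℓ θTX (ξ ℓ (i+2) ω) := by
      rw [← Finset.sum_erase_add _ _ (Finset.mem_univ θTX)]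
      congr 1
      rw [Finset.mul_sum]
      apply Finset.sum_congr rfl
      intro τ hτ
      rw [hmueq i ℓ ω τ (Finset.mem_erase.mp hτ).1]
    have hψ0 : ψ ℓ (i+2) θTX ω = μb ℓ (i+1) θTX ω * L ℓ θTX (ξ ℓ (i+2) ω) /
        (∑ θ', μb ℓ (i+1) θ' ω * L ℓ θ' (ξ ℓ (i+2) ω)) := hψ ℓ (i+1) θTX ω
    have h1m : 1 - ψ ℓ (i+2) θTX ω =
        μb ℓ (i+1) θp ω * (∑ τ ∈ Finset.univ.erase θTX, L ℓ τ (ξ ℓ (i+2) ω)) /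
        (∑ θ', μb ℓ (i+1) θ' ω * L ℓ θ' (ξ ℓ (i+2) ω)) := by
      rw [hψ0, eq_div_iff (ne_of_gt hDp), sub_mul, one_mul,
        div_mul_cancel₀ _ (ne_of_gt hDp)]
      linarith [hDsplit]
    have hψhp : ψh ℓ (i+2) θp ω = μb ℓ (i+1) θp ω *
        (∑ τ ∈ Finset.univ.erase θTX, L ℓ τ (ξ ℓ (i+2) ω)) /
        (∑ θ', μb ℓ (i+1) θ' ω * L ℓ θ' (ξ ℓ (i+2) ω)) / ((H:ℝ)-1) := by
      rw [hψh_ntx ℓ (i+1) θp ω hθp, h1m]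
    have hA : 0 < μb ℓ (i+1) θTX ω * L ℓ θTX (ξ ℓ (i+2) ω) /
        (∑ θ', μb ℓ (i+1) θ' ω * L ℓ θ' (ξ ℓ (i+2) ω)) :=
      div_pos (mul_pos hμ0 hL0) hDp
    have hB : 0 < μb ℓ (i+1) θp ω *
        (∑ τ ∈ Finset.univ.erase θTX, L ℓ τ (ξ ℓ (i+2) ω)) /
        (∑ θ', μb ℓ (i+1) θ' ω * L ℓ θ' (ξ ℓ (i+2) ω)) / ((H:ℝ)-1) :=
      div_pos (div_pos (mul_pos hμp hS) hDp) hH1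
    have hgoal2 : Y ℓ i ω + XX ℓ (i+1) ω =
        Real.log (μb ℓ (i+1) θTX ω / μb ℓ (i+1) θp ω) +
        Real.log (L ℓ θTX (ξ ℓ (i+2) ω) /
          ((∑ τ ∈ Finset.univ.erase θTX, L ℓ τ (ξ ℓ (i+2) ω)) / ((H:ℝ)-1))) := rfl
    rw [hψh_tx ℓ (i+1) ω, hψ0, hψhp,
      ← Real.log_div (ne_of_gt hA) (ne_of_gt hB), hgoal2,
      ← Real.log_mul (ne_of_gt (div_pos hμ0 hμp))
        (ne_of_gt (div_pos hL0 (div_pos hS hH1)))]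
    congr 1
    exact aux_field _ _ _ _ _ _ (ne_of_gt hDp) (ne_of_gt hμp) (ne_of_gt hS) (ne_of_gt hH1)
  have hrecY : ∀ k i (ω : Ω), Y k (i+1) ω = ∑ ℓ, a ℓ k * (Y ℓ i ω + XX ℓ (i+1) ω) := by
    intro k i ω
    have hZ : 0 < ∑ θ', Real.exp (∑ ℓ, a ℓ k * Real.log (ψh ℓ (i+2) θ' ω)) :=
      Finset.sum_pos (fun θ' _ => Real.exp_pos _) Finset.univ_nonempty
    have e : Y k (i+1) ω = Real.log (μb k (i+2) θTX ω / μb k (i+2) θp ω) := rfl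
    have hx := Real.exp_pos (∑ ℓ, a ℓ k * Real.log (ψh ℓ (i+2) θTX ω))
    have hy := Real.exp_pos (∑ ℓ, a ℓ k * Real.log (ψh ℓ (i+2) θp ω))
    have e2 : Real.exp (∑ ℓ, a ℓ k * Real.log (ψh ℓ (i+2) θTX ω)) /
        (∑ θ', Real.exp (∑ ℓ, a ℓ k * Real.log (ψh ℓ (i+2) θ' ω))) /
        (Real.exp (∑ ℓ, a ℓ k * Real.log (ψh ℓ (i+2) θp ω)) /
        (∑ θ', Real.exp (∑ ℓ, a ℓ k * Real.log (ψh ℓ (i+2) θ' ω)))) =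
        Real.exp (∑ ℓ, a ℓ k * Real.log (ψh ℓ (i+2) θTX ω)) /
        Real.exp (∑ ℓ, a ℓ k * Real.log (ψh ℓ (i+2) θp ω)) := by
      rw [div_div_div_cancel_right₀]
      exact ne_of_gt hZ
    rw [e, hcomb k (i+1) θTX ω, hcomb k (i+1) θp ω, e2, ← Real.exp_sub, Real.log_exp,
      ← Finset.sum_sub_distrib]
    apply Finset.sum_congr rfl
    intro ℓ _
    rw [← mul_sub, hlog i ℓ ω]
  have hformula : ∀ k i (ω : Ω), μb k (i+1) θTX ω =
      1 / (1 + ((H:ℝ)-1) * Real.exp (-(Y k i ω))) := by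
    intro k i ω
    have hμ0 : 0 < μb k (i+1) θTX ω := (hbasic (i+1) k ω).1 θTX
    have hμp : 0 < μb k (i+1) θp ω := (hbasic (i+1) k ω).1 θp
    have hsum1 : μb k (i+1) θTX ω + ((H:ℝ)-1) * μb k (i+1) θp ω = 1 := by
      have h := (hbasic (i+1) k ω).2
      rw [← Finset.sum_erase_add _ _ (Finset.mem_univ θTX)] at h
      have e : ∑ τ ∈ Finset.univ.erase θTX, μb k (i+1) τ ω =
          ((H:ℝ)-1) * μb k (i+1) θp ω := by
        rw [Finset.sum_congr rfl (fun τ hτ => hmueq i k ω τ (Finset.mem_erase.mp hτ).1),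
          Finset.sum_const, hcard, nsmul_eq_mul, hcardR]
      linarith
    have hexpY : Real.exp (-(Y k i ω)) = μb k (i+1) θp ω / μb k (i+1) θTX ω := by
      have e : Y k i ω = Real.log (μb k (i+1) θTX ω / μb k (i+1) θp ω) := rfl
      rw [e, Real.exp_neg, Real.exp_log (div_pos hμ0 hμp), inv_div]
    rw [hexpY, eq_div_iff]
    · exact aux_field2 _ _ _ (ne_of_gt hμ0) hsum1
    · have h1 : 0 < ((H:ℝ)-1) * (μb k (i+1) θp ω / μb k (i+1) θTX ω) :=
        mul_pos hH1 (div_pos hμp hμ0)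
      linarith
  have hconv : ∀ (k : Fin K) (ω : Ω), Tendsto (fun i => Y k i ω) atTop atTop →
      Tendsto (fun i => μb k i θTX ω) atTop (𝓝 1) := by
    intro k ω hY'
    have he : Tendsto (fun i => Real.exp (-(Y k i ω))) atTop (𝓝 0) :=
      Real.tendsto_exp_atBot.comp (tendsto_neg_atTop_atBot.comp hY')
    have hden : Tendsto (fun i => 1 + ((H:ℝ)-1) * Real.exp (-(Y k i ω))) atTop (𝓝 1) := by
      have := (he.const_mul ((H:ℝ)-1)).const_add 1
      simpa using this
    have hdiv : Tendsto (fun i => 1 / (1 + ((H:ℝ)-1) * Real.exp (-(Y k i ω))))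
        atTop (𝓝 1) := by
      have := hden.inv₀ (by norm_num)
      simpa [one_div] using this
    have h1 : Tendsto (fun i => μb k (i+1) θTX ω) atTop (𝓝 1) :=
      hdiv.congr (fun i => (hformula k i ω).symm)
    exact (tendsto_add_atTop_iff_nat 1).mp h1
  -- measurability
  have hfunmeas : ∀ ℓ, Measurable (hfun ℓ) := by
    intro ℓ
    apply Real.measurable_log.comp
    exact (hLmeas ℓ θTX).div
      ((Finset.measurable_sum _ (fun τ _ => hLmeas ℓ τ)).div_const _)
  have hnegmeas : ∀ ℓ, Measurable (negfun ℓ) := fun ℓ =>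
    ((hfunmeas ℓ).neg).max measurable_const
  -- integrability on signal space
  have hLint : ∀ ℓ τ, Integrable (L ℓ τ) (ν ℓ) := fun ℓ τ =>
    aux_integrable_of_integral_eq_one (hLdens ℓ τ)
  have habs : ∀ ℓ z, |hfun ℓ z| ≤ Real.log ((H:ℝ)-1) +
      ∑ τ ∈ Finset.univ.erase θTX, |Real.log (L ℓ θTX z / L ℓ τ z)| := by
    intro ℓ z
    have hp : 0 < L ℓ θTX z := hLpos ℓ θTX z
    have hS : 0 < ∑ τ ∈ Finset.univ.erase θTX, L ℓ τ z := hSpos ℓ z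
    have hfuneq : hfun ℓ z = Real.log (L ℓ θTX z) -
        Real.log (∑ τ ∈ Finset.univ.erase θTX, L ℓ τ z) + Real.log ((H:ℝ)-1) := by
      show Real.log (L ℓ θTX z / ((∑ τ ∈ Finset.univ.erase θTX, L ℓ τ z) / ((H:ℝ)-1))) = _
      rw [Real.log_div (ne_of_gt hp) (ne_of_gt (div_pos hS hH1)),
        Real.log_div (ne_of_gt hS) (ne_of_gt hH1)]
      ring
    obtain ⟨τm, hτm_mem, hτm⟩ := Finset.exists_max_image
      (Finset.univ.erase θTX) (fun τ => L ℓ τ z) ⟨θp, hθpmem⟩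
    have hup : Real.log (∑ τ ∈ Finset.univ.erase θTX, L ℓ τ z) ≤
        Real.log ((H:ℝ)-1) + Real.log (L ℓ τm z) := by
      have hc : (∑ τ ∈ Finset.univ.erase θTX, L ℓ τ z) ≤ ((H:ℝ)-1) * L ℓ τm z := by
        calc (∑ τ ∈ Finset.univ.erase θTX, L ℓ τ z)
            ≤ ∑ _τ ∈ Finset.univ.erase θTX, L ℓ τm z :=
              Finset.sum_le_sum (fun τ hτ => hτm τ hτ)
          _ = ((H:ℝ)-1) * L ℓ τm z := by
              rw [Finset.sum_const, hcard, nsmul_eq_mul, hcardR]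
      calc Real.log (∑ τ ∈ Finset.univ.erase θTX, L ℓ τ z)
          ≤ Real.log (((H:ℝ)-1) * L ℓ τm z) := Real.log_le_log hS hc
        _ = _ := Real.log_mul (ne_of_gt hH1) (ne_of_gt (hLpos ℓ τm z))
    have hlow : Real.log (L ℓ θp z) ≤ Real.log (∑ τ ∈ Finset.univ.erase θTX, L ℓ τ z) :=
      Real.log_le_log (hLpos ℓ θp z)
        (Finset.single_le_sum (fun τ _ => (hLpos ℓ τ z).le) hθpmem)
    have hterm : ∀ τ, Real.log (L ℓ θTX z / L ℓ τ z) =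
        Real.log (L ℓ θTX z) - Real.log (L ℓ τ z) :=
      fun τ => Real.log_div (ne_of_gt hp) (ne_of_gt (hLpos ℓ τ z))
    have hsum_nonneg : ∀ τ ∈ Finset.univ.erase θTX,
        0 ≤ |Real.log (L ℓ θTX z / L ℓ τ z)| := fun τ _ => abs_nonneg _
    have hm_le : |Real.log (L ℓ θTX z / L ℓ τm z)| ≤
        ∑ τ ∈ Finset.univ.erase θTX, |Real.log (L ℓ θTX z / L ℓ τ z)| :=
      Finset.single_le_sum hsum_nonneg hτm_mem
    have hp_le : |Real.log (L ℓ θTX z / L ℓ θp z)| ≤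
        ∑ τ ∈ Finset.univ.erase θTX, |Real.log (L ℓ θTX z / L ℓ τ z)| :=
      Finset.single_le_sum hsum_nonneg hθpmem
    rw [hfuneq, abs_le]
    constructor
    · have h1 : -|Real.log (L ℓ θTX z / L ℓ τm z)| ≤
          Real.log (L ℓ θTX z) - Real.log (L ℓ τm z) := by
        rw [← hterm τm]; exact neg_abs_le _
      linarith [hup, h1, hm_le, hlogH1]
    · have h2 : Real.log (L ℓ θTX z) - Real.log (L ℓ θp z) ≤
          |Real.log (L ℓ θTX z / L ℓ θp z)| := by
        rw [← hterm θp]; exact le_abs_self _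
      linarith [hlow, h2, hp_le]
  have habsKL : ∀ ℓ τ, Integrable
      (fun z => L ℓ θTX z * |Real.log (L ℓ θTX z / L ℓ τ z)|) (ν ℓ) := by
    intro ℓ τ
    apply Integrable.mono' ((hKL ℓ θTX τ).add ((hLint ℓ τ).const_mul 2))
    · exact ((hLmeas ℓ θTX).mul
        ((Real.measurable_log.comp ((hLmeas ℓ θTX).div (hLmeas ℓ τ))).abs)).aestronglyMeasurable
    · apply Filter.Eventually.of_forall
      intro z
      simp only [Pi.add_apply]
      have hp := hLpos ℓ θTX z
      have hq := hLpos ℓ τ z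
      have hnn : 0 ≤ L ℓ θTX z * |Real.log (L ℓ θTX z / L ℓ τ z)| :=
        mul_nonneg hp.le (abs_nonneg _)
      rw [Real.norm_eq_abs, abs_of_nonneg hnn]
      rcases le_or_gt 0 (Real.log (L ℓ θTX z / L ℓ τ z)) with h | h
      · rw [abs_of_nonneg h]
        nlinarith
      · rw [abs_of_neg h]
        have hflip : Real.log (L ℓ τ z / L ℓ θTX z) =
            -Real.log (L ℓ θTX z / L ℓ τ z) := by
          rw [Real.log_div (ne_of_gt hq) (ne_of_gt hp),
            Real.log_div (ne_of_gt hp) (ne_of_gt hq)]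
          ring
        have hb : Real.log (L ℓ τ z / L ℓ θTX z) ≤ L ℓ τ z / L ℓ θTX z - 1 :=
          Real.log_le_sub_one_of_pos (div_pos hq hp)
        have hb2 : L ℓ θTX z * Real.log (L ℓ τ z / L ℓ θTX z) ≤ L ℓ τ z := by
          have e : L ℓ θTX z * (L ℓ τ z / L ℓ θTX z - 1) = L ℓ τ z - L ℓ θTX z := by
            field_simp
          nlinarith [mul_le_mul_of_nonneg_left hb hp.le]
        rw [hflip] at hb2
        nlinarith
  have hLh : ∀ ℓ, Integrable (fun z => L ℓ θTX z * hfun ℓ z) (ν ℓ) := by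
    intro ℓ
    apply Integrable.mono' (g := fun z => L ℓ θTX z * Real.log ((H:ℝ)-1) +
      ∑ τ ∈ Finset.univ.erase θTX, L ℓ θTX z * |Real.log (L ℓ θTX z / L ℓ τ z)|)
      (((hLint ℓ θTX).mul_const _).add
        (integrable_finset_sum _ (fun τ _ => habsKL ℓ τ)))
    · exact ((hLmeas ℓ θTX).mul (hfunmeas ℓ)).aestronglyMeasurable
    · apply Filter.Eventually.of_forall
      intro z
      have hp := hLpos ℓ θTX z
      rw [Real.norm_eq_abs, abs_mul, abs_of_pos hp]
      calc L ℓ θTX z * |hfun ℓ z| ≤ L ℓ θTX z * (Real.log ((H:ℝ)-1) +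
            ∑ τ ∈ Finset.univ.erase θTX, |Real.log (L ℓ θTX z / L ℓ τ z)|) :=
            mul_le_mul_of_nonneg_left (habs ℓ z) hp.le
        _ = _ := by rw [mul_add, Finset.mul_sum]
  have hwd : ∀ ℓ, (fun x => ENNReal.ofReal (L ℓ θTX x)) =
      (fun x => ((Real.toNNReal (L ℓ θTX x) : NNReal) : ENNReal)) := fun ℓ => rfl
  have hsmul : ∀ ℓ, (fun z => Real.toNNReal (L ℓ θTX z) • hfun ℓ z) =
      (fun z => L ℓ θTX z * hfun ℓ z) := by
    intro ℓ
    funext z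
    rw [NNReal.smul_def, smul_eq_mul, Real.coe_toNNReal _ (hLpos ℓ θTX z).le]
  have hXint : ∀ ℓ, Integrable (XX ℓ 0) P := by
    intro ℓ
    have h1 : Integrable (hfun ℓ) (Measure.map (ξ ℓ 1) P) := by
      rw [hξdist ℓ 1 le_rfl, hwd ℓ,
        integrable_withDensity_iff_integrable_smul₀
          ((hLmeas ℓ θTX).real_toNNReal.aemeasurable), hsmul ℓ]
      exact hLh ℓ
    exact (integrable_map_measure (hfunmeas ℓ).aestronglyMeasurable
      (hξmeas ℓ 1).aemeasurable).mp h1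
  have hBint : ∀ ℓ, Integrable (BB ℓ 0) P := by
    intro ℓ
    have := (hXint ℓ).neg.pos_part
    exact this.congr (Filter.Eventually.of_forall fun ω => rfl)
  have hmean : ∀ ℓ, ∫ ω, XX ℓ 0 ω ∂P = ∫ z, L ℓ θTX z * hfun ℓ z ∂(ν ℓ) := by
    intro ℓ
    have h1 : ∫ ω, XX ℓ 0 ω ∂P = ∫ z, hfun ℓ z ∂(Measure.map (ξ ℓ 1) P) :=
      (integral_map (hξmeas ℓ 1).aemeasurable (hfunmeas ℓ).aestronglyMeasurable).symm
    rw [h1, hξdist ℓ 1 le_rfl, hwd ℓ,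
      integral_withDensity_eq_integral_smul ((hLmeas ℓ θTX).real_toNNReal) (hfun ℓ)]
    apply integral_congr_ae
    apply Filter.Eventually.of_forall
    intro z
    exact congrFun (hsmul ℓ) z
  have hEnn : ∀ ℓ, 0 ≤ ∫ z, L ℓ θTX z * hfun ℓ z ∂(ν ℓ) := by
    intro ℓ
    have hbar_int : Integrable
        (fun z => (∑ τ ∈ Finset.univ.erase θTX, L ℓ τ z) / ((H:ℝ)-1)) (ν ℓ) :=
      (integrable_finset_sum _ (fun τ _ => hLint ℓ τ)).div_const _
    have hbar_one : ∫ z, (∑ τ ∈ Finset.univ.erase θTX, L ℓ τ z) / ((H:ℝ)-1) ∂(ν ℓ) = 1 := by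
      rw [integral_div, integral_finset_sum _ (fun τ _ => hLint ℓ τ),
        Finset.sum_congr rfl (fun τ _ => hLdens ℓ τ), Finset.sum_const, hcard,
        nsmul_eq_mul, mul_one, hcardR, div_self (ne_of_gt hH1)]
    have hpt : ∀ z, -(L ℓ θTX z * hfun ℓ z) ≤
        (∑ τ ∈ Finset.univ.erase θTX, L ℓ τ z) / ((H:ℝ)-1) - L ℓ θTX z := by
      intro z
      have hp := hLpos ℓ θTX z
      have hb := hbarpos ℓ z
      have h1 : -(hfun ℓ z) = Real.log
          (((∑ τ ∈ Finset.univ.erase θTX, L ℓ τ z) / ((H:ℝ)-1)) / L ℓ θTX z) := by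
        have e : hfun ℓ z = Real.log (L ℓ θTX z /
            ((∑ τ ∈ Finset.univ.erase θTX, L ℓ τ z) / ((H:ℝ)-1))) := rfl
        rw [e, Real.log_div (ne_of_gt hp) (ne_of_gt hb),
          Real.log_div (ne_of_gt hb) (ne_of_gt hp)]
        ring
      have h2 : Real.log (((∑ τ ∈ Finset.univ.erase θTX, L ℓ τ z) / ((H:ℝ)-1)) / L ℓ θTX z)
          ≤ ((∑ τ ∈ Finset.univ.erase θTX, L ℓ τ z) / ((H:ℝ)-1)) / L ℓ θTX z - 1 :=
        Real.log_le_sub_one_of_pos (div_pos hb hp)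
      have h3 : L ℓ θTX z * ((((∑ τ ∈ Finset.univ.erase θTX, L ℓ τ z) / ((H:ℝ)-1)) /
          L ℓ θTX z) - 1) = (∑ τ ∈ Finset.univ.erase θTX, L ℓ τ z) / ((H:ℝ)-1) -
          L ℓ θTX z := by
        field_simp
      nlinarith [mul_le_mul_of_nonneg_left h2 hp.le,
        congrArg (fun t => L ℓ θTX z * t) h1]
    have hint := integral_mono (hLh ℓ).neg (hbar_int.sub (hLint ℓ θTX)) hpt
    rw [integral_neg', integral_sub' hbar_int (hLint ℓ θTX), hbar_one, hLdens ℓ θTX] at hint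
    linarith
  -- independence and identical distribution
  have hindepX : ∀ ℓ : Fin K, Pairwise (Function.onFun (fun f g => IndepFun f g P) (XX ℓ)) := by
    intro ℓ
    have hcomp := hξindep.comp (fun _ (p : ∀ k, X k) => hfun ℓ (p ℓ))
      (fun _ => (hfunmeas ℓ).comp (measurable_pi_apply ℓ))
    intro i j hij
    exact hcomp.indepFun hij
  have hindepB : ∀ ℓ : Fin K, Pairwise (Function.onFun (fun f g => IndepFun f g P) (BB ℓ)) := by
    intro ℓ
    have hcomp := hξindep.comp (fun _ (p : ∀ k, X k) => negfun ℓ (p ℓ))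
      (fun _ => (hnegmeas ℓ).comp (measurable_pi_apply ℓ))
    intro i j hij
    exact hcomp.indepFun hij
  have hidentX : ∀ ℓ (j : ℕ), IdentDistrib (XX ℓ j) (XX ℓ 0) P P := by
    intro ℓ j
    have hbase : IdentDistrib (ξ ℓ (j+1)) (ξ ℓ 1) P P :=
      ⟨(hξmeas ℓ (j+1)).aemeasurable, (hξmeas ℓ 1).aemeasurable, by
        rw [hξdist ℓ (j+1) (by omega), hξdist ℓ 1 le_rfl]⟩
    exact hbase.comp (hfunmeas ℓ)
  have hidentB : ∀ ℓ (j : ℕ), IdentDistrib (BB ℓ j) (BB ℓ 0) P P := by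
    intro ℓ j
    have hbase : IdentDistrib (ξ ℓ (j+1)) (ξ ℓ 1) P P :=
      ⟨(hξmeas ℓ (j+1)).aemeasurable, (hξmeas ℓ 1).aemeasurable, by
        rw [hξdist ℓ (j+1) (by omega), hξdist ℓ 1 le_rfl]⟩
    exact hbase.comp (hnegmeas ℓ)
  -- strong laws
  have hslnX : ∀ ℓ, ∀ᵐ ω ∂P, Tendsto (fun q : ℕ =>
      (q:ℝ)⁻¹ * ∑ j ∈ Finset.range q, XX ℓ j ω) atTop (𝓝 (∫ ω, XX ℓ 0 ω ∂P)) := by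
    intro ℓ
    filter_upwards [strong_law_ae (XX ℓ) (hXint ℓ) (hindepX ℓ) (hidentX ℓ)] with ω h
    exact h.congr (fun q => smul_eq_mul _ _)
  have hslnB : ∀ ℓ, ∀ᵐ ω ∂P, Tendsto (fun q : ℕ =>
      (q:ℝ)⁻¹ * ∑ j ∈ Finset.range q, BB ℓ j ω) atTop (𝓝 (∫ ω, BB ℓ 0 ω ∂P)) := by
    intro ℓ
    filter_upwards [strong_law_ae (BB ℓ) (hBint ℓ) (hindepB ℓ) (hidentB ℓ)] with ω h
    exact h.congr (fun q => smul_eq_mul _ _)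
  -- the positive drift
  obtain ⟨kstar, -, hks⟩ := hclear
  have hksE : 0 < ∫ ω, XX kstar 0 ω ∂P := hks
  set α : ℝ := ∑ ℓ, v ℓ * (∫ ω, XX ℓ 0 ω ∂P) with hαdef
  have hα : 0 < α := by
    apply Finset.sum_pos'
    · intro ℓ _
      apply mul_nonneg (hv_pos ℓ).le
      rw [hmean ℓ]
      exact hEnn ℓ
    · exact ⟨kstar, Finset.mem_univ _, mul_pos (hv_pos kstar) hksE⟩
  -- primitivity
  obtain ⟨n, hn1, hpos⟩ := aux_prim hK ha_stoch ha_prim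
  -- main a.s. statement
  have hmain : ∀ᵐ ω ∂P, ∀ k, Tendsto (fun i => Y k i ω) atTop atTop := by
    have hX' := ae_all_iff.mpr hslnX
    have hB' := ae_all_iff.mpr hslnB
    filter_upwards [hX', hB'] with ω hXω hBω
    have hsrec : ∀ i, (∑ ℓ, v ℓ * Y ℓ (i+1) ω) =
        (∑ ℓ, v ℓ * Y ℓ i ω) + ∑ ℓ, v ℓ * XX ℓ (i+1) ω := by
      intro i
      have e1 : ∀ k, v k * Y k (i+1) ω =
          ∑ ℓ, a ℓ k * v k * (Y ℓ i ω + XX ℓ (i+1) ω) := by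
        intro k
        rw [hrecY k i ω, Finset.mul_sum]
        exact Finset.sum_congr rfl (fun ℓ _ => by ring)
      calc (∑ k, v k * Y k (i+1) ω)
          = ∑ k, ∑ ℓ, a ℓ k * v k * (Y ℓ i ω + XX ℓ (i+1) ω) :=
            Finset.sum_congr rfl (fun k _ => e1 k)
        _ = ∑ ℓ, ∑ k, a ℓ k * v k * (Y ℓ i ω + XX ℓ (i+1) ω) := Finset.sum_comm
        _ = ∑ ℓ, v ℓ * (Y ℓ i ω + XX ℓ (i+1) ω) := by
            apply Finset.sum_congr rfl
            intro ℓ _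
            rw [← Finset.sum_mul, hv_eig ℓ]
        _ = (∑ ℓ, v ℓ * Y ℓ i ω) + ∑ ℓ, v ℓ * XX ℓ (i+1) ω := by
            rw [← Finset.sum_add_distrib]
            exact Finset.sum_congr rfl (fun ℓ _ => by ring)
    have hsclosed : ∀ i, (∑ ℓ, v ℓ * Y ℓ i ω) =
        ((∑ ℓ, v ℓ * Y ℓ 0 ω) - (∑ ℓ, v ℓ * XX ℓ 0 ω)) +
        ∑ j ∈ Finset.range (i+1), ∑ ℓ, v ℓ * XX ℓ j ω := by
      intro i
      induction i with
      | zero => rw [Finset.sum_range_one]; ring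
      | succ i ih => rw [Finset.sum_range_succ, ← add_assoc, ← ih, hsrec i]
    have havgW : Tendsto (fun q : ℕ => (q:ℝ)⁻¹ *
        ∑ j ∈ Finset.range q, ∑ ℓ, v ℓ * XX ℓ j ω) atTop (𝓝 α) := by
      have e : ∀ q : ℕ, (q:ℝ)⁻¹ * ∑ j ∈ Finset.range q, ∑ ℓ, v ℓ * XX ℓ j ω =
          ∑ ℓ, v ℓ * ((q:ℝ)⁻¹ * ∑ j ∈ Finset.range q, XX ℓ j ω) := by
        intro q
        rw [Finset.sum_comm, Finset.mul_sum]
        apply Finset.sum_congr rfl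
        intro ℓ _
        rw [Finset.mul_sum, Finset.mul_sum, Finset.mul_sum]
        apply Finset.sum_congr rfl
        intro j _
        ring
      have h := tendsto_finset_sum (Finset.univ (α := Fin K))
        (fun ℓ (_ : ℓ ∈ Finset.univ) => (hXω ℓ).const_mul (v ℓ))
      exact (h.congr (fun q => (e q).symm))
    have hsdiv : Tendsto (fun i : ℕ => (∑ ℓ, v ℓ * Y ℓ i ω) / i) atTop (𝓝 α) := by
      have := aux_avg_shift (C := (∑ ℓ, v ℓ * Y ℓ 0 ω) - (∑ ℓ, v ℓ * XX ℓ 0 ω)) havgW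
      exact this.congr (fun i => by rw [← hsclosed i])
    have hgnn : ∀ i : ℕ, 0 ≤ ∑ ℓ, BB ℓ (i+1) ω :=
      fun i => Finset.sum_nonneg fun ℓ _ => le_max_right _ _
    have hgdiv : Tendsto (fun i : ℕ => (∑ ℓ, BB ℓ (i+1) ω) / i) atTop (𝓝 0) := by
      have hb' : ∀ ℓ : Fin K, Tendsto (fun j : ℕ => BB ℓ (j+1) ω / j) atTop (𝓝 0) :=
        fun ℓ => aux_shift_div (aux_cesaro (hBω ℓ))
      have h := tendsto_finset_sum Finset.univ (fun ℓ (_ : ℓ ∈ Finset.univ) => hb' ℓ)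
      rw [Finset.sum_const, smul_zero] at h
      refine h.congr (fun j => ?_)
      rw [Finset.sum_div]
    have hxg : ∀ ℓ i, -(∑ ℓ', BB ℓ' (i+1) ω) ≤ XX ℓ (i+1) ω := by
      intro ℓ i
      have h1 : -(XX ℓ (i+1) ω) ≤ BB ℓ (i+1) ω := le_max_left _ _
      have h2 : BB ℓ (i+1) ω ≤ ∑ ℓ', BB ℓ' (i+1) ω :=
        Finset.single_le_sum (f := fun ℓ' => BB ℓ' (i+1) ω)
          (fun m _ => le_max_right _ _) (Finset.mem_univ ℓ)
      linarith
    exact aux_det hK hn1 ha_nonneg ha_stoch hpos hv_pos hv_sum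
      (fun k i => Y k i ω) (fun ℓ i => XX ℓ (i+1) ω) (fun i => ∑ ℓ, BB ℓ (i+1) ω)
      (fun k i => hrecY k i ω) hxg hgnn hsdiv hα hgdiv
  intro k
  filter_upwards [hmain] with ω hω
  exact hconv k ω (hω k)
end

section
/- Theorem 3, part 1 (Truth learning without self-awareness when the transmitted hypothesis is sufficiently distinguishable). Suppose the agents run the partial-information algorithm without self-awareness with transmitted hypothesis θ_TX, and assume Assumptions 1 and 2. If d_ave(θ_TX) > d_ave(θ̄_TX), then for every agent k, μ_{k,i}(θ_TX) → 0 almost surely, and consequently μ_{k,i}(θ) → 1/(H−1) almost surely for every θ ≠ θ_TX. -/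
open MeasureTheory ProbabilityTheory Filter Topology

private lemma tl_atBot_of_div (f : ℕ → ℝ) (l : ℝ) (hl : l < 0)
    (h : Tendsto (fun t : ℕ => f t / t) atTop (𝓝 l)) : Tendsto f atTop atBot := by
  have h2 : ∀ᶠ t : ℕ in atTop, f t / t ≤ l / 2 := h.eventually_le_const (by linarith)
  have h3 : ∀ᶠ t : ℕ in atTop, f t ≤ (l / 2) * t := by
    filter_upwards [h2, eventually_ge_atTop 1] with t ht ht1
    have htpos : (0:ℝ) < t := by exact_mod_cast ht1
    calc f t = (f t / t) * t := by field_simp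
    _ ≤ (l / 2) * t := by nlinarith
  exact tendsto_atBot_mono' atTop h3
    (Tendsto.const_mul_atTop_of_neg (by linarith) tendsto_natCast_atTop_atTop)

private lemma tl_lin_decay (ε α : ℝ) (hε0 : 0 < ε) (hε1 : ε ≤ 1) (hα : 0 < α)
    (u b : ℕ → ℝ) (hu : ∀ t, u (t+1) ≤ (1-ε) * u t + b t)
    (t0 : ℕ) (hb : ∀ t, t0 ≤ t → b t ≤ -α * t) :
    ∃ C : ℝ, ∀ t, t0 ≤ t → u t ≤ α * (C - t) / ε := by
  refine ⟨max (1/ε) (t0 + ε * u t0 / α), ?_⟩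
  intro t ht
  induction t, ht using Nat.le_induction with
  | base =>
    rw [le_div_iff₀ hε0]
    have h1 : (t0:ℝ) + ε * u t0 / α ≤ max (1/ε) (t0 + ε * u t0 / α) := le_max_right _ _
    have h2 : ε * u t0 / α * α = ε * u t0 := div_mul_cancel₀ _ (ne_of_gt hα)
    nlinarith
  | succ t ht ih =>
    set C := max (1/ε) ((t0:ℝ) + ε * u t0 / α) with hCdef
    have hC : 1/ε ≤ C := le_max_left _ _
    have h1 : u (t+1) ≤ (1-ε) * u t + b t := hu t
    have h2 : b t ≤ -α * t := hb t ht
    have h3 : (1-ε) * u t ≤ (1-ε) * (α * (C - t) / ε) :=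
      mul_le_mul_of_nonneg_left ih (by linarith)
    have h4 : 1 ≤ ε * C := by rw [div_le_iff₀ hε0] at hC; linarith
    have hcast : ((t+1 : ℕ):ℝ) = (t:ℝ) + 1 := by push_cast; ring
    rw [hcast, le_div_iff₀ hε0]
    have hQ : α * (C - t) / ε * ε = α * (C - t) := div_mul_cancel₀ _ (ne_of_gt hε0)
    have h5 : u (t+1) * ε ≤ ((1-ε) * (α * (C - t) / ε) + -α * t) * ε :=
      mul_le_mul_of_nonneg_right (by linarith) (le_of_lt hε0)
    have h6 : α * 1 ≤ α * (ε * C) := mul_le_mul_of_nonneg_left h4 (le_of_lt hα)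
    nlinarith [hQ, h5, h6, mul_pos hα hε0]

/-- composition limit along arithmetic progressions: if g i / i → c then
    g (1+t*n) / t → c * n -/
private lemma tl_prog_lim (g : ℕ → ℝ) (c : ℝ) (n : ℕ) (hn : 1 ≤ n)
    (h : Tendsto (fun i : ℕ => g i / i) atTop (𝓝 c)) :
    Tendsto (fun t : ℕ => g (1 + t * n) / t) atTop (𝓝 (c * n)) := by
  have hprog : Tendsto (fun t : ℕ => 1 + t * n) atTop atTop := by
    apply tendsto_atTop_mono (fun t => ?_) tendsto_id
    calc (t:ℕ) = t * 1 := (mul_one t).symm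
    _ ≤ t * n := Nat.mul_le_mul_left t hn
    _ ≤ 1 + t * n := Nat.le_add_left _ _
  have h1 : Tendsto (fun t : ℕ => g (1 + t * n) / ((1 + t * n : ℕ):ℝ)) atTop (𝓝 c) :=
    h.comp hprog
  have h2 : Tendsto (fun t : ℕ => ((1 + t * n : ℕ):ℝ) / t) atTop (𝓝 n) := by
    have : ∀ᶠ t : ℕ in atTop, ((1 + t * n : ℕ):ℝ) / t = 1 / t + n := by
      filter_upwards [eventually_ge_atTop 1] with t ht
      have : (t:ℝ) ≠ 0 := by positivity
      push_cast
      field_simp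
    rw [tendsto_congr' this]
    have := (tendsto_one_div_atTop_nhds_zero_nat).add (tendsto_const_nhds (x := (n:ℝ)))
    simpa using this
  have h3 := h1.mul h2
  apply h3.congr'
  filter_upwards [eventually_ge_atTop 1] with t ht
  have ht0 : ((1 + t * n : ℕ):ℝ) ≠ 0 := by positivity
  field_simp

private lemma tl_detA (n : ℕ) (hn : 1 ≤ n) (ε : ℝ) (hε0 : 0 < ε) (hε1 : ε ≤ 1)
    (M w T : ℕ → ℝ) (hT : Monotone T) (c C : ℝ) (hc : c < 0)
    (h3 : Tendsto (fun i : ℕ => w i / i) atTop (𝓝 c))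
    (h4 : Tendsto (fun i : ℕ => T i / i) atTop (𝓝 C))
    (h1 : ∀ i, 1 ≤ i → M (i+1) ≤ M i + (T (i+1) - T i))
    (h2 : ∀ i, 1 ≤ i → M (i+n) ≤ (1-ε) * M i + ε * w i + (T (i+n) - T i)) :
    Tendsto M atTop atBot := by
  -- chain within blocks
  have hchain : ∀ i, 1 ≤ i → ∀ m, M (i+m) ≤ M i + (T (i+m) - T i) := by
    intro i hi m
    induction m with
    | zero => simp
    | succ m ih =>
      have := h1 (i+m) (le_trans hi (Nat.le_add_right _ _))
      have e : i + (m+1) = (i+m)+1 := by omega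
      rw [e]; linarith
  set u : ℕ → ℝ := fun t => M (1 + t * n) with hu_def
  set b : ℕ → ℝ := fun t => ε * w (1 + t * n) + (T (1 + t * n + n) - T (1 + t * n)) with hb_def
  have hu : ∀ t, u (t+1) ≤ (1-ε) * u t + b t := by
    intro t
    have e : 1 + (t+1) * n = (1 + t * n) + n := by ring
    have := h2 (1 + t * n) (Nat.le_add_right _ _)
    simp only [hu_def, hb_def, e]
    linarith
  -- limit of b t / t
  have hblim : Tendsto (fun t : ℕ => b t / t) atTop (𝓝 (ε * (c * n))) := by
    have l1 : Tendsto (fun t : ℕ => ε * w (1 + t * n) / t) atTop (𝓝 (ε * (c * n))) := by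
      have := (tl_prog_lim w c n hn h3).const_mul ε
      apply this.congr
      intro t; ring
    have l2 : Tendsto (fun t : ℕ => (T (1 + t * n + n) - T (1 + t * n)) / t) atTop
        (𝓝 (C * n - C * n)) := by
      have e2 : ∀ t : ℕ, 1 + t * n + n = 1 + (t+1) * n := by intro t; ring
      have lA : Tendsto (fun t : ℕ => T (1 + (t+1) * n) / t) atTop (𝓝 (C * n)) := by
        have base := tl_prog_lim T C n hn h4
        -- shift index by one
        have shift : Tendsto (fun t : ℕ => T (1 + (t+1) * n) / ((t+1:ℕ):ℝ)) atTop (𝓝 (C * n)) :=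
          base.comp (tendsto_add_atTop_nat 1)
        have ratio : Tendsto (fun t : ℕ => (((t:ℕ)+1:ℕ):ℝ) / t) atTop (𝓝 1) := by
          have : ∀ᶠ t : ℕ in atTop, (((t:ℕ)+1:ℕ):ℝ) / t = 1 + 1/t := by
            filter_upwards [eventually_ge_atTop 1] with t ht
            have : (t:ℝ) ≠ 0 := by positivity
            push_cast; field_simp
          rw [tendsto_congr' this]
          have := (tendsto_const_nhds (x := (1:ℝ))).add tendsto_one_div_atTop_nhds_zero_nat
          simpa using this
        have := shift.mul ratio
        rw [mul_one] at this
        apply this.congr'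
        filter_upwards [eventually_ge_atTop 1] with t ht
        have ht0 : (((t:ℕ)+1:ℕ):ℝ) ≠ 0 := by positivity
        field_simp
      have lB := tl_prog_lim T C n hn h4
      have := lA.sub lB
      apply this.congr
      intro t
      simp only [e2]
      ring
    have := l1.add l2
    simp only [sub_self, add_zero] at this
    apply this.congr
    intro t; ring
  -- b t ≤ -α t eventually
  have hαpos : 0 < -(ε * (c * n)) / 2 := by
    have : ε * (c * n) < 0 := by
      apply mul_neg_of_pos_of_neg hε0
      apply mul_neg_of_neg_of_pos hc
      exact_mod_cast Nat.lt_of_lt_of_le Nat.zero_lt_one hn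
    linarith
  set α := -(ε * (c * n)) / 2 with hα_def
  have hbev : ∀ᶠ t : ℕ in atTop, b t ≤ -α * t := by
    have : ε * (c * n) < -α := by simp only [hα_def]; linarith
    filter_upwards [hblim.eventually_le_const this, eventually_ge_atTop 1] with t h ht
    have htpos : (0:ℝ) < t := by exact_mod_cast ht
    calc b t = (b t / t) * t := by field_simp
    _ ≤ (-α) * t := mul_le_mul_of_nonneg_right h (le_of_lt htpos)
  obtain ⟨t0, hbt0⟩ := eventually_atTop.1 hbev
  obtain ⟨C', hC'⟩ := tl_lin_decay ε α hε0 hε1 hαpos u b hu t0 hbt0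
  -- D t := T(1+tn+n) - T(1+tn), φ t := α (C'-t)/ε + D t → -∞
  set φ : ℕ → ℝ := fun t => α * (C' - t) / ε + (T (1 + t * n + n) - T (1 + t * n)) with hφ_def
  have hφ : Tendsto φ atTop atBot := by
    have hαε : 0 < α / ε := div_pos hαpos hε0
    apply tl_atBot_of_div φ (-α/ε + 0) (by rw [add_zero, neg_div]; linarith)
    have p1 : Tendsto (fun t : ℕ => α * (C' - t) / ε / t) atTop (𝓝 (-α/ε)) := by
      have : ∀ᶠ t : ℕ in atTop, α * (C' - t) / ε / t = (α/ε) * (C'/t) + (-α/ε) := by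
        filter_upwards [eventually_ge_atTop 1] with t ht
        have : (t:ℝ) ≠ 0 := by positivity
        field_simp
        ring
      rw [tendsto_congr' this]
      have l0 : Tendsto (fun t : ℕ => (α/ε) * (C'/t)) atTop (𝓝 0) := by
        have : Tendsto (fun t : ℕ => C'/t) atTop (𝓝 0) := by
          have := tendsto_one_div_atTop_nhds_zero_nat.const_mul C'
          simpa [div_eq_mul_inv, one_div] using this
        have := this.const_mul (α/ε)
        simpa using this
      have := l0.add (tendsto_const_nhds (x := -α/ε))
      simpa using this
    have p2 : Tendsto (fun t : ℕ => (T (1 + t * n + n) - T (1 + t * n)) / t) atTop (𝓝 0) := by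
      -- same as l2 above
      have e2 : ∀ t : ℕ, 1 + t * n + n = 1 + (t+1) * n := by intro t; ring
      have lA : Tendsto (fun t : ℕ => T (1 + (t+1) * n) / t) atTop (𝓝 (C * n)) := by
        have base := tl_prog_lim T C n hn h4
        have shift : Tendsto (fun t : ℕ => T (1 + (t+1) * n) / ((t+1:ℕ):ℝ)) atTop (𝓝 (C * n)) :=
          base.comp (tendsto_add_atTop_nat 1)
        have ratio : Tendsto (fun t : ℕ => (((t:ℕ)+1:ℕ):ℝ) / t) atTop (𝓝 1) := by
          have : ∀ᶠ t : ℕ in atTop, (((t:ℕ)+1:ℕ):ℝ) / t = 1 + 1/t := by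
            filter_upwards [eventually_ge_atTop 1] with t ht
            have : (t:ℝ) ≠ 0 := by positivity
            push_cast; field_simp
          rw [tendsto_congr' this]
          have := (tendsto_const_nhds (x := (1:ℝ))).add tendsto_one_div_atTop_nhds_zero_nat
          simpa using this
        have := shift.mul ratio
        rw [mul_one] at this
        apply this.congr'
        filter_upwards [eventually_ge_atTop 1] with t ht
        have ht0 : (((t:ℕ)+1:ℕ):ℝ) ≠ 0 := by positivity
        field_simp
      have lB := tl_prog_lim T C n hn h4
      have := lA.sub lB
      simp only [sub_self] at this
      apply this.congr
      intro t
      simp only [e2]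
      ring
    have := p1.add p2
    apply this.congr
    intro t
    simp only [hφ_def]
    ring
  -- conclude
  rw [tendsto_atBot]
  intro L
  have := (tendsto_atBot.1 hφ) L
  obtain ⟨t1, ht1⟩ := eventually_atTop.1 this
  rw [eventually_atTop]
  refine ⟨1 + (max t0 t1) * n, fun i hi => ?_⟩
  have hi1 : 1 ≤ i := le_trans (by omega) hi
  obtain ⟨t, r, hrlt, hieq, htt⟩ : ∃ t r, r < n ∧ i = 1 + t * n + r ∧ max t0 t1 ≤ t := by
    refine ⟨(i-1)/n, (i-1)%n, Nat.mod_lt _ (by omega), ?_, ?_⟩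
    · have hdm := Nat.div_add_mod (i-1) n
      have hdm2 : (i-1)/n * n = n * ((i-1)/n) := Nat.mul_comm _ _
      omega
    · have h1n : (max t0 t1) * n ≤ i - 1 := by omega
      exact (Nat.le_div_iff_mul_le (by omega)).2 h1n
  have step1 : M i ≤ M (1 + t * n) + (T i - T (1 + t * n)) := by
    conv_lhs => rw [hieq]
    have := hchain (1 + t * n) (Nat.le_add_right _ _) r
    rw [hieq]
    linarith
  have step2 : T i ≤ T (1 + t * n + n) := by
    apply hT; omega
  have step3 : u t ≤ α * (C' - t) / ε := hC' t (le_trans (le_max_left _ _) htt)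
  have : M i ≤ φ t := by
    simp only [hφ_def]
    have : M (1 + t * n) = u t := rfl
    linarith
  exact le_trans this (ht1 t (le_trans (le_max_right _ _) htt))


private lemma tl_detMain {K : ℕ} (hK : 0 < K) (a : Fin K → Fin K → ℝ)
    (ha_nonneg : ∀ ℓ k, 0 ≤ a ℓ k) (ha_stoch : ∀ k, ∑ ℓ, a ℓ k = 1)
    (n : ℕ) (hn : 1 ≤ n) (hpos : ∀ ℓ k, 0 < ((Matrix.of a) ^ n) ℓ k)
    (v : Fin K → ℝ) (hv_pos : ∀ ℓ, 0 < v ℓ) (hv_sum : ∑ ℓ, v ℓ = 1)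
    (hv_eig : ∀ ℓ, ∑ k, a ℓ k * v k = v ℓ)
    (y Xn : Fin K → ℕ → ℝ)
    (hrec : ∀ k i, 1 ≤ i → y k (i+1) = ∑ ℓ, a ℓ k * (y ℓ i + Xn ℓ i))
    (e E : Fin K → ℝ)
    (hS : ∀ ℓ, Tendsto (fun i : ℕ => (∑ j ∈ Finset.range i, Xn ℓ j)/i) atTop (𝓝 (e ℓ)))
    (hSa : ∀ ℓ, Tendsto (fun i : ℕ => (∑ j ∈ Finset.range i, |Xn ℓ j|)/i) atTop (𝓝 (E ℓ)))
    (hneg : ∑ ℓ, v ℓ * e ℓ < 0) :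
    ∀ k, Tendsto (fun i => y k i) atTop atBot := by
  haveI : NeZero K := ⟨by omega⟩
  have hne : (Finset.univ : Finset (Fin K)).Nonempty := Finset.univ_nonempty
  set A := Matrix.of a with hA_def
  have hApow_nonneg : ∀ m (ℓ k : Fin K), 0 ≤ (A ^ m) ℓ k := by
    intro m
    induction m with
    | zero => intro ℓ k; simp [Matrix.one_apply]; split <;> norm_num
    | succ m ih =>
      intro ℓ k
      rw [pow_succ, Matrix.mul_apply]
      exact Finset.sum_nonneg fun j _ => mul_nonneg (ih ℓ j) (ha_nonneg j k)
  have hApow_sum : ∀ m (k : Fin K), ∑ ℓ, (A ^ m) ℓ k = 1 := by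
    intro m
    induction m with
    | zero => intro k; simp [Matrix.one_apply]
    | succ m ih =>
      intro k
      have : ∀ ℓ, (A ^ (m+1)) ℓ k = ∑ j, (A ^ m) ℓ j * a j k := by
        intro ℓ; rw [pow_succ, Matrix.mul_apply]; rfl
      simp only [this]
      rw [Finset.sum_comm]
      have : ∀ j, ∑ ℓ, (A ^ m) ℓ j * a j k = a j k := by
        intro j; rw [← Finset.sum_mul, ih j, one_mul]
      simp only [this]
      exact ha_stoch k
  -- noise sums
  set Zb : ℕ → ℝ := fun j => ∑ ℓ, |Xn ℓ j| with hZb_def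
  have hZb_nonneg : ∀ j, 0 ≤ Zb j := fun j => Finset.sum_nonneg fun ℓ _ => abs_nonneg _
  set T : ℕ → ℝ := fun i => ∑ j ∈ Finset.range i, Zb j with hT_def
  have hT_mono : Monotone T := by
    intro i j hij
    exact Finset.sum_le_sum_of_subset_of_nonneg (Finset.range_subset_range.2 hij)
      (fun x _ _ => hZb_nonneg x)
  have hXle : ∀ ℓ j, Xn ℓ j ≤ Zb j := by
    intro ℓ j
    calc Xn ℓ j ≤ |Xn ℓ j| := le_abs_self _
    _ ≤ Zb j := Finset.single_le_sum (fun m _ => abs_nonneg (Xn m j)) (Finset.mem_univ ℓ)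
  set M : ℕ → ℝ := fun i => Finset.univ.sup' hne (fun k => y k i) with hM_def
  have hyleM : ∀ k i, y k i ≤ M i := fun k i => Finset.le_sup' (fun k => y k i) (Finset.mem_univ k)
  -- iteration bound
  have hiter : ∀ i, 1 ≤ i → ∀ m (k : Fin K),
      y k (i+m) ≤ (∑ ℓ, (A ^ m) ℓ k * y ℓ i) + (T (i+m) - T i) := by
    intro i hi m
    induction m with
    | zero =>
      intro k
      simp only [Nat.add_zero, sub_self, add_zero]
      have : ∑ ℓ, (A ^ 0) ℓ k * y ℓ i = y k i := by
        simp [Matrix.one_apply]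
      rw [this]
    | succ m ih =>
      intro k
      have e1 : i + (m+1) = (i+m) + 1 := by omega
      rw [e1, hrec k (i+m) (by omega)]
      have hb : ∀ ℓ, y ℓ (i+m) + Xn ℓ (i+m) ≤
          ((∑ m', (A ^ m) m' ℓ * y m' i) + (T (i+m) - T i)) + Zb (i+m) :=
        fun ℓ => add_le_add (ih ℓ) (hXle ℓ (i+m))
      have step : ∑ ℓ, a ℓ k * (y ℓ (i+m) + Xn ℓ (i+m)) ≤
          ∑ ℓ, a ℓ k * (((∑ m', (A ^ m) m' ℓ * y m' i) + (T (i+m) - T i)) + Zb (i+m)) :=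
        Finset.sum_le_sum fun ℓ _ => mul_le_mul_of_nonneg_left (hb ℓ) (ha_nonneg ℓ k)
      refine le_trans step (le_of_eq ?_)
      have expand : ∑ ℓ, a ℓ k * (((∑ m', (A ^ m) m' ℓ * y m' i) + (T (i+m) - T i)) + Zb (i+m))
          = (∑ ℓ, a ℓ k * (∑ m', (A ^ m) m' ℓ * y m' i))
            + (∑ ℓ, a ℓ k) * ((T (i+m) - T i) + Zb (i+m)) := by
        rw [Finset.sum_mul]
        rw [← Finset.sum_add_distrib]
        congr 1
        ext ℓ
        ring
      rw [expand, ha_stoch k, one_mul]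
      have swap : ∑ ℓ, a ℓ k * (∑ m', (A ^ m) m' ℓ * y m' i)
          = ∑ m', (A ^ (m+1)) m' k * y m' i := by
        have : ∀ ℓ, a ℓ k * (∑ m', (A ^ m) m' ℓ * y m' i)
            = ∑ m', (A ^ m) m' ℓ * a ℓ k * y m' i := by
          intro ℓ
          rw [Finset.mul_sum]
          congr 1; ext m'; ring
        simp only [this]
        rw [Finset.sum_comm]
        congr 1
        ext m'
        rw [pow_succ, Matrix.mul_apply, Finset.sum_mul]
        congr 1
      rw [swap]
      have hTs : T (i+m+1) = T (i+m) + Zb (i+m) := Finset.sum_range_succ _ _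
      rw [hTs]
      ring
  -- epsilon
  have hprodne : (Finset.univ : Finset (Fin K × Fin K)).Nonempty := Finset.univ_nonempty
  set ε : ℝ := Finset.univ.inf' hprodne (fun p : Fin K × Fin K => (A ^ n) p.1 p.2) with hε_def
  have hε0 : 0 < ε := by
    rw [hε_def, Finset.lt_inf'_iff]
    exact fun p _ => hpos p.1 p.2
  have hεle : ∀ ℓ k, ε ≤ (A ^ n) ℓ k := fun ℓ k =>
    Finset.inf'_le _ (Finset.mem_univ (ℓ, k))
  have hε1 : ε ≤ 1 := by
    obtain ⟨k⟩ := (inferInstance : Nonempty (Fin K))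
    calc ε ≤ (A ^ n) k k := hεle k k
    _ ≤ ∑ ℓ, (A ^ n) ℓ k :=
      Finset.single_le_sum (fun ℓ _ => hApow_nonneg n ℓ k) (Finset.mem_univ k)
    _ = 1 := hApow_sum n k
  have hvle1 : ∀ ℓ, v ℓ ≤ 1 := by
    intro ℓ
    calc v ℓ ≤ ∑ m, v m :=
      Finset.single_le_sum (fun m _ => le_of_lt (hv_pos m)) (Finset.mem_univ ℓ)
    _ = 1 := hv_sum
  set w : ℕ → ℝ := fun i => ∑ k, v k * y k i with hw_def
  -- h2 of detA
  have h2 : ∀ i, 1 ≤ i → M (i+n) ≤ (1-ε) * M i + ε * w i + (T (i+n) - T i) := by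
    intro i hi
    apply Finset.sup'_le
    intro k _
    have step1 := hiter i hi n k
    have step2 : ∑ ℓ, (A ^ n) ℓ k * y ℓ i ≤ (1-ε) * M i + ε * w i := by
      have split : ∑ ℓ, (A ^ n) ℓ k * y ℓ i
          = (∑ ℓ, ((A ^ n) ℓ k - ε * v ℓ) * y ℓ i) + ε * w i := by
        rw [hw_def]
        simp only [Finset.mul_sum]
        rw [← Finset.sum_add_distrib]
        congr 1; ext ℓ; ring
      rw [split]
      have bound : ∑ ℓ, ((A ^ n) ℓ k - ε * v ℓ) * y ℓ i ≤ (1-ε) * M i := by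
        have coeff_nonneg : ∀ ℓ, 0 ≤ (A ^ n) ℓ k - ε * v ℓ := by
          intro ℓ
          have : ε * v ℓ ≤ ε * 1 := mul_le_mul_of_nonneg_left (hvle1 ℓ) (le_of_lt hε0)
          have h2 := hεle ℓ k
          linarith
        have sum_coeff : ∑ ℓ, ((A ^ n) ℓ k - ε * v ℓ) = 1 - ε := by
          rw [Finset.sum_sub_distrib, hApow_sum n k, ← Finset.mul_sum, hv_sum, mul_one]
        calc ∑ ℓ, ((A ^ n) ℓ k - ε * v ℓ) * y ℓ i
            ≤ ∑ ℓ, ((A ^ n) ℓ k - ε * v ℓ) * M i :=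
          Finset.sum_le_sum fun ℓ _ =>
            mul_le_mul_of_nonneg_left (hyleM ℓ i) (coeff_nonneg ℓ)
        _ = (1-ε) * M i := by rw [← Finset.sum_mul, sum_coeff]
      linarith
    linarith
  -- h1 of detA
  have h1 : ∀ i, 1 ≤ i → M (i+1) ≤ M i + (T (i+1) - T i) := by
    intro i hi
    apply Finset.sup'_le
    intro k _
    have step1 := hiter i hi 1 k
    have : ∑ ℓ, (A ^ 1) ℓ k * y ℓ i ≤ M i := by
      have sum1 : ∑ ℓ, (A ^ 1) ℓ k = 1 := hApow_sum 1 k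
      calc ∑ ℓ, (A ^ 1) ℓ k * y ℓ i ≤ ∑ ℓ, (A ^ 1) ℓ k * M i :=
        Finset.sum_le_sum fun ℓ _ =>
          mul_le_mul_of_nonneg_left (hyleM ℓ i) (hApow_nonneg 1 ℓ k)
      _ = M i := by rw [← Finset.sum_mul, sum1, one_mul]
    linarith
  -- w recursion and limit
  have hwrec : ∀ i, 1 ≤ i → w (i+1) = w i + ∑ ℓ, v ℓ * Xn ℓ i := by
    intro i hi
    rw [hw_def]
    simp only
    have : ∀ k, v k * y k (i+1) = v k * ∑ ℓ, a ℓ k * (y ℓ i + Xn ℓ i) := by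
      intro k; rw [hrec k i hi]
    simp only [this]
    have swap : ∑ k, v k * ∑ ℓ, a ℓ k * (y ℓ i + Xn ℓ i)
        = ∑ ℓ, (∑ k, a ℓ k * v k) * (y ℓ i + Xn ℓ i) := by
      simp only [Finset.mul_sum, Finset.sum_mul]
      rw [Finset.sum_comm]
      congr 1; ext ℓ; congr 1; ext k; ring
    rw [swap]
    simp only [hv_eig]
    rw [← Finset.sum_add_distrib]
    congr 1; ext ℓ; ring
  have hwform : ∀ i, 1 ≤ i → w i = (w 1 - ∑ ℓ, v ℓ * Xn ℓ 0)
      + ∑ j ∈ Finset.range i, (∑ ℓ, v ℓ * Xn ℓ j) := by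
    intro i hi
    induction i, hi using Nat.le_induction with
    | base => simp [Finset.sum_range_one]
    | succ i hi ih =>
      rw [hwrec i hi, ih, Finset.sum_range_succ]
      ring
  have hSWlim : Tendsto (fun i : ℕ => (∑ j ∈ Finset.range i, (∑ ℓ, v ℓ * Xn ℓ j)) / i)
      atTop (𝓝 (∑ ℓ, v ℓ * e ℓ)) := by
    have eq1 : ∀ i : ℕ, (∑ j ∈ Finset.range i, (∑ ℓ, v ℓ * Xn ℓ j)) / i
        = ∑ ℓ, v ℓ * ((∑ j ∈ Finset.range i, Xn ℓ j) / i) := by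
      intro i
      rw [Finset.sum_comm, Finset.sum_div]
      congr 1; ext ℓ
      rw [← Finset.mul_sum, mul_div_assoc]
    simp only [eq1]
    exact tendsto_finset_sum _ fun ℓ _ => (hS ℓ).const_mul (v ℓ)
  have h3 : Tendsto (fun i : ℕ => w i / i) atTop (𝓝 (∑ ℓ, v ℓ * e ℓ)) := by
    have lim0 : Tendsto (fun i : ℕ => (w 1 - ∑ ℓ, v ℓ * Xn ℓ 0) / i) atTop (𝓝 0) := by
      have := tendsto_one_div_atTop_nhds_zero_nat.const_mul (w 1 - ∑ ℓ, v ℓ * Xn ℓ 0)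
      simp only [mul_one_div] at this
      simpa using this
    have := lim0.add hSWlim
    rw [zero_add] at this
    apply this.congr'
    filter_upwards [eventually_ge_atTop 1] with i hi
    rw [hwform i hi]
    rw [add_div]
  have h4 : Tendsto (fun i : ℕ => T i / i) atTop (𝓝 (∑ ℓ, E ℓ)) := by
    have eq1 : ∀ i : ℕ, T i / i = ∑ ℓ, (∑ j ∈ Finset.range i, |Xn ℓ j|) / i := by
      intro i
      rw [hT_def]
      simp only
      rw [Finset.sum_comm, Finset.sum_div]
    simp only [eq1]
    exact tendsto_finset_sum _ fun ℓ _ => hSa ℓ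
  have hMbot := tl_detA n hn ε hε0 hε1 M w T hT_mono _ _ hneg h3 h4 h1 h2
  intro k
  exact tendsto_atBot_mono (fun i => hyleM k i) hMbot

private lemma tl_log_bound {H : ℕ} (hH : 2 ≤ H) (b : Fin H → ℝ) (hb : ∀ τ, 0 < b τ)
    (θ0 θTX : Fin H) :
    |Real.log (b θ0) - Real.log ((∑ τ ∈ Finset.univ.erase θTX, b τ) / ((H:ℝ) - 1))|
      ≤ Real.log ((H:ℝ) - 1)
        + ∑ τ ∈ Finset.univ.erase θTX, |Real.log (b θ0) - Real.log (b τ)| := by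
  set E := Finset.univ.erase θTX with hE_def
  have hcard : E.card = H - 1 := by
    rw [hE_def, Finset.card_erase_of_mem (Finset.mem_univ _), Finset.card_univ, Fintype.card_fin]
  have hEne : E.Nonempty := by
    rw [← Finset.card_pos, hcard]; omega
  have hH1 : (1:ℝ) ≤ (H:ℝ) - 1 := by
    have : (2:ℝ) ≤ (H:ℝ) := by exact_mod_cast hH
    linarith
  have hlogH : 0 ≤ Real.log ((H:ℝ) - 1) := Real.log_nonneg hH1
  have hS : 0 < ∑ τ ∈ E, b τ := Finset.sum_pos (fun τ _ => hb τ) hEne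
  have hq : Real.log ((∑ τ ∈ E, b τ) / ((H:ℝ) - 1))
      = Real.log (∑ τ ∈ E, b τ) - Real.log ((H:ℝ) - 1) :=
    Real.log_div (ne_of_gt hS) (by linarith)
  have habs_sum : ∀ τ ∈ E, |Real.log (b θ0) - Real.log (b τ)|
      ≤ ∑ τ' ∈ E, |Real.log (b θ0) - Real.log (b τ')| := fun τ hτ =>
    Finset.single_le_sum (f := fun τ' => |Real.log (b θ0) - Real.log (b τ')|)
      (fun τ' _ => abs_nonneg _) hτ
  rw [abs_le]
  constructor
  · -- lower: -(RHS) ≤ log b0 - q, i.e., q - log b0 ≤ RHS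
    obtain ⟨τ1, hτ1E, hτ1max⟩ := Finset.exists_max_image E b hEne
    have hSle : ∑ τ ∈ E, b τ ≤ ((H:ℝ) - 1) * b τ1 := by
      calc ∑ τ ∈ E, b τ ≤ ∑ _τ ∈ E, b τ1 := Finset.sum_le_sum fun τ hτ => hτ1max τ hτ
      _ = E.card * b τ1 := by rw [Finset.sum_const, nsmul_eq_mul]
      _ = ((H:ℝ) - 1) * b τ1 := by
        congr 1
        rw [hcard]
        push_cast [Nat.cast_sub (by omega : 1 ≤ H)]
        ring
    have hdivle : (∑ τ ∈ E, b τ) / ((H:ℝ) - 1) ≤ b τ1 := by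
      rw [div_le_iff₀ (by linarith)]
      linarith
    have hlogle : Real.log ((∑ τ ∈ E, b τ) / ((H:ℝ) - 1)) ≤ Real.log (b τ1) :=
      Real.log_le_log (by positivity) hdivle
    have h1 : Real.log (b τ1) - Real.log (b θ0) ≤ |Real.log (b θ0) - Real.log (b τ1)| := by
      rw [abs_sub_comm]; exact le_abs_self _
    have := habs_sum τ1 hτ1E
    linarith
  · -- upper
    obtain ⟨τs, hτE⟩ := hEne
    have hble : b τs ≤ ∑ τ ∈ E, b τ :=
      Finset.single_le_sum (fun τ _ => le_of_lt (hb τ)) hτE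
    have hlogge : Real.log (b τs) ≤ Real.log (∑ τ ∈ E, b τ) :=
      Real.log_le_log (hb τs) hble
    have h1 : Real.log (b θ0) - Real.log (b τs) ≤ |Real.log (b θ0) - Real.log (b τs)| :=
      le_abs_self _
    have := habs_sum τs hτE
    rw [hq]
    linarith

private lemma tl_int_comp {Ωt : Type} [MeasurableSpace Ωt] (P : Measure Ωt)
    {Xt : Type} [MeasurableSpace Xt] (ν : Measure Xt) (ρ : Xt → ℝ)
    (hρ : Measurable ρ) (hρnn : ∀ x, 0 ≤ ρ x) (ξ : Ωt → Xt) (hξ : Measurable ξ)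
    (hmap : Measure.map ξ P = ν.withDensity (fun x => ENNReal.ofReal (ρ x)))
    (g : Xt → ℝ) (hg : Measurable g) :
    Integrable (fun ω => g (ξ ω)) P ↔ Integrable (fun x => ρ x * g x) ν := by
  have step1 : Integrable (g ∘ ξ) P ↔ Integrable g (Measure.map ξ P) :=
    (integrable_map_measure hg.aestronglyMeasurable hξ.aemeasurable).symm
  have e0 : (fun ω => g (ξ ω)) = g ∘ ξ := rfl
  rw [e0, step1, hmap]
  have e1 : (fun x => ENNReal.ofReal (ρ x)) = (fun x => (((ρ x).toNNReal : NNReal) : ENNReal)) :=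
    rfl
  rw [e1, integrable_withDensity_iff_integrable_coe_smul hρ.real_toNNReal]
  apply integrable_congr
  apply Eventually.of_forall
  intro x
  simp [NNReal.smul_def, Real.coe_toNNReal _ (hρnn x)]
theorem truth_learning_without_self_awareness_of_distinguishable_tx
    {Ω : Type} [mΩ : MeasurableSpace Ω] (P : Measure Ω) [IsProbabilityMeasure P]
    (K H : ℕ) (hK : 0 < K) (hH : 2 ≤ H)
    (X : Fin K → Type) [∀ k, MeasurableSpace (X k)]
    (ν : ∀ k, Measure (X k))
    (L : ∀ k : Fin K, Fin H → X k → ℝ)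
    (θ0 : Fin H)
    (hLpos : ∀ k θ x, 0 < L k θ x)
    (hLmeas : ∀ k θ, Measurable (L k θ))
    (hLdens : ∀ k θ, ∫ x, L k θ x ∂(ν k) = 1)
    (ξ : ∀ k : Fin K, ℕ → Ω → X k)
    (hξmeas : ∀ k i, Measurable (ξ k i))
    (hξdist : ∀ k (i : ℕ), 1 ≤ i →
      Measure.map (ξ k i) P = (ν k).withDensity (fun x => ENNReal.ofReal (L k θ0 x)))
    (hξindep : iIndepFun
      (fun (i : ℕ) (ω : Ω) (k : Fin K) => ξ k (i + 1) ω) P)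
    (hKL : ∀ k θ θ',
      Integrable (fun x => L k θ x * Real.log (L k θ x / L k θ' x)) (ν k))
    (a : Fin K → Fin K → ℝ)
    (ha_nonneg : ∀ ℓ k, 0 ≤ a ℓ k)
    (ha_stoch : ∀ k, ∑ ℓ, a ℓ k = 1)
    (ha_prim : ∃ n : ℕ, ∀ ℓ k, 0 < ((Matrix.of a) ^ n) ℓ k)
    (v : Fin K → ℝ)
    (hv_pos : ∀ ℓ, 0 < v ℓ)
    (hv_sum : ∑ ℓ, v ℓ = 1)
    (hv_eig : ∀ ℓ, ∑ k, a ℓ k * v k = v ℓ)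
    (θTX : Fin H)
    (μb ψ ψh : Fin K → ℕ → Fin H → Ω → ℝ)
    (μinit : Fin K → Fin H → ℝ)
    (hμinit_pos : ∀ k θ, 0 < μinit k θ)
    (hμinit_sum : ∀ k, ∑ θ, μinit k θ = 1)
    (hμb0 : ∀ k θ ω, μb k 0 θ ω = μinit k θ)
    (hψ : ∀ k (i : ℕ) θ ω, ψ k (i + 1) θ ω =
      μb k i θ ω * L k θ (ξ k (i + 1) ω) /
        ∑ θ', μb k i θ' ω * L k θ' (ξ k (i + 1) ω))
    (hψh_tx : ∀ k (i : ℕ) ω, ψh k (i + 1) θTX ω = ψ k (i + 1) θTX ω)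
    (hψh_ntx : ∀ k (i : ℕ) θ ω, θ ≠ θTX →
      ψh k (i + 1) θ ω = (1 - ψ k (i + 1) θTX ω) / ((H : ℝ) - 1))
    (hcomb : ∀ k (i : ℕ) θ ω, μb k (i + 1) θ ω =
      Real.exp (∑ ℓ, a ℓ k * Real.log (ψh ℓ (i + 1) θ ω)) /
        ∑ θ', Real.exp (∑ ℓ, a ℓ k * Real.log (ψh ℓ (i + 1) θ' ω)))
    (hgap : (∑ m, v m * (∫ ω, Real.log (L m θ0 (ξ m 1 ω) / ((∑ τ ∈ Finset.univ.erase θTX, L m τ (ξ m 1 ω)) / ((H : ℝ) - 1))) ∂P)) < (∑ m, v m * (∫ ω, Real.log (L m θ0 (ξ m 1 ω) / L m θTX (ξ m 1 ω)) ∂P))) :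
    ∀ k : Fin K,
      (∀ᵐ ω ∂P, Tendsto (fun (i : ℕ) => μb k i θTX ω) atTop (𝓝 0)) ∧
      (∀ θ : Fin H, θ ≠ θTX →
        ∀ᵐ ω ∂P, Tendsto (fun (i : ℕ) => μb k i θ ω) atTop (𝓝 (1 / ((H : ℝ) - 1)))) := by
  haveI : NeZero K := ⟨by omega⟩
  haveI : NeZero H := ⟨by omega⟩
  have hH1R : (0:ℝ) < (H:ℝ) - 1 := by
    have : (2:ℝ) ≤ (H:ℝ) := by exact_mod_cast hH
    linarith
  obtain ⟨θs, hθs⟩ : ∃ θs : Fin H, θs ≠ θTX := by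
    have : 1 < Fintype.card (Fin H) := by simp; omega
    exact Fintype.exists_ne_of_one_lt_card this θTX
  -- positivity and normalization of beliefs
  have hμpos : ∀ k i θ ω, 0 < μb k i θ ω := by
    intro k i θ ω
    cases i with
    | zero => rw [hμb0]; exact hμinit_pos k θ
    | succ i =>
      rw [hcomb]
      exact div_pos (Real.exp_pos _)
        (Finset.sum_pos (fun θ' _ => Real.exp_pos _) Finset.univ_nonempty)
  have hμsum : ∀ k i ω, ∑ θ, μb k (i+1) θ ω = 1 := by
    intro k i ω
    have hS : 0 < ∑ θ', Real.exp (∑ ℓ, a ℓ k * Real.log (ψh ℓ (i + 1) θ' ω)) :=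
      Finset.sum_pos (fun θ' _ => Real.exp_pos _) Finset.univ_nonempty
    simp only [hcomb]
    rw [← Finset.sum_div]
    exact div_self (ne_of_gt hS)
  have hSpos : ∀ k i ω, 0 < ∑ θ', μb k i θ' ω * L k θ' (ξ k (i+1) ω) := fun k i ω =>
    Finset.sum_pos (fun θ' _ => mul_pos (hμpos k i θ' ω) (hLpos k θ' _)) Finset.univ_nonempty
  have hψpos : ∀ k i ω, 0 < ψ k (i+1) θTX ω := by
    intro k i ω
    rw [hψ]
    exact div_pos (mul_pos (hμpos k i θTX ω) (hLpos k θTX _)) (hSpos k i ω)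
  have hψlt1 : ∀ k i ω, ψ k (i+1) θTX ω < 1 := by
    intro k i ω
    rw [hψ, div_lt_one (hSpos k i ω)]
    have hsplit : μb k i θTX ω * L k θTX (ξ k (i+1) ω)
        + ∑ θ' ∈ Finset.univ.erase θTX, μb k i θ' ω * L k θ' (ξ k (i+1) ω)
        = ∑ θ', μb k i θ' ω * L k θ' (ξ k (i+1) ω) :=
      Finset.add_sum_erase _ (fun θ' => μb k i θ' ω * L k θ' (ξ k (i+1) ω))
        (Finset.mem_univ θTX)
    have hpos2 : 0 < ∑ θ' ∈ Finset.univ.erase θTX, μb k i θ' ω * L k θ' (ξ k (i+1) ω) :=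
      Finset.sum_pos (fun θ' _ => mul_pos (hμpos k i θ' ω) (hLpos k θ' _))
        ⟨θs, Finset.mem_erase.2 ⟨hθs, Finset.mem_univ θs⟩⟩
    linarith
  have hψhpos : ∀ ℓ i θ ω, 0 < ψh ℓ (i+1) θ ω := by
    intro ℓ i θ ω
    by_cases hc : θ = θTX
    · rw [hc, hψh_tx]; exact hψpos ℓ i ω
    · rw [hψh_ntx ℓ i θ ω hc]
      apply div_pos _ hH1R
      linarith [hψlt1 ℓ i ω]
  have hntx : ∀ k i θ ω, θ ≠ θTX → μb k (i+1) θ ω = μb k (i+1) θs ω := by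
    intro k i θ ω hθ
    rw [hcomb, hcomb]
    congr 2
    apply Finset.sum_congr rfl
    intro ℓ _
    rw [hψh_ntx ℓ i θ ω hθ, hψh_ntx ℓ i θs ω hθs]
  -- the fictitious log-likelihood ratio
  set F : (ℓ : Fin K) → X ℓ → ℝ := fun ℓ x => Real.log (L ℓ θTX x)
    - Real.log ((∑ τ ∈ Finset.univ.erase θTX, L ℓ τ x) / ((H:ℝ) - 1)) with hF_def
  set Z : Fin K → ℕ → Ω → ℝ := fun ℓ j ω => F ℓ (ξ ℓ (j+1) ω) with hZ_def
  set y : Ω → Fin K → ℕ → ℝ :=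
    fun ω k i => Real.log (μb k i θTX ω) - Real.log (μb k i θs ω) with hy_def
  have hsumLpos : ∀ ℓ (x : X ℓ), 0 < ∑ τ ∈ Finset.univ.erase θTX, L ℓ τ x := fun ℓ x =>
    Finset.sum_pos (fun τ _ => hLpos ℓ τ x)
      ⟨θs, Finset.mem_erase.2 ⟨hθs, Finset.mem_univ θs⟩⟩
  -- core recursion
  have hrec : ∀ ω (k : Fin K) i, 1 ≤ i → y ω k (i+1) = ∑ ℓ, a ℓ k * (y ω ℓ i + Z ℓ i ω) := by
    intro ω k i hi
    obtain ⟨j, rfl⟩ : ∃ j, i = j + 1 := ⟨i - 1, by omega⟩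
    have hS : 0 < ∑ θ', Real.exp (∑ ℓ, a ℓ k * Real.log (ψh ℓ ((j+1)+1) θ' ω)) :=
      Finset.sum_pos (fun θ' _ => Real.exp_pos _) Finset.univ_nonempty
    have hlog : ∀ θ, Real.log (μb k ((j+1)+1) θ ω)
        = (∑ ℓ, a ℓ k * Real.log (ψh ℓ ((j+1)+1) θ ω))
          - Real.log (∑ θ', Real.exp (∑ ℓ, a ℓ k * Real.log (ψh ℓ ((j+1)+1) θ' ω))) := by
      intro θ
      rw [hcomb, Real.log_div (ne_of_gt (Real.exp_pos _)) (ne_of_gt hS), Real.log_exp]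
    have hterm : ∀ ℓ, Real.log (ψh ℓ ((j+1)+1) θTX ω) - Real.log (ψh ℓ ((j+1)+1) θs ω)
        = y ω ℓ (j+1) + Z ℓ (j+1) ω := by
      intro ℓ
      rw [hψh_tx, hψh_ntx ℓ (j+1) θs ω hθs, hψ]
      set S' := ∑ θ', μb ℓ (j+1) θ' ω * L ℓ θ' (ξ ℓ ((j+1)+1) ω) with hS'_def
      have hS'pos : 0 < S' := hSpos ℓ (j+1) ω
      set SL := ∑ τ ∈ Finset.univ.erase θTX, L ℓ τ (ξ ℓ ((j+1)+1) ω) with hSL_def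
      have hSLpos : 0 < SL := hsumLpos ℓ _
      have h1ψ : 1 - μb ℓ (j+1) θTX ω * L ℓ θTX (ξ ℓ ((j+1)+1) ω) / S'
          = μb ℓ (j+1) θs ω * SL / S' := by
        rw [eq_div_iff (ne_of_gt hS'pos), sub_mul, one_mul,
          div_mul_cancel₀ _ (ne_of_gt hS'pos)]
        have hsplit : μb ℓ (j+1) θTX ω * L ℓ θTX (ξ ℓ ((j+1)+1) ω)
            + ∑ θ' ∈ Finset.univ.erase θTX, μb ℓ (j+1) θ' ω * L ℓ θ' (ξ ℓ ((j+1)+1) ω)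
            = S' :=
          Finset.add_sum_erase _ (fun θ' => μb ℓ (j+1) θ' ω * L ℓ θ' (ξ ℓ ((j+1)+1) ω))
            (Finset.mem_univ θTX)
        have hcongr : ∑ θ' ∈ Finset.univ.erase θTX, μb ℓ (j+1) θ' ω * L ℓ θ' (ξ ℓ ((j+1)+1) ω)
            = μb ℓ (j+1) θs ω * SL := by
          rw [hSL_def, Finset.mul_sum]
          apply Finset.sum_congr rfl
          intro τ hτ
          rw [hntx ℓ j τ ω (Finset.mem_erase.1 hτ).1]
        linarith
      rw [h1ψ]
      have l1 : Real.log (μb ℓ (j+1) θTX ω * L ℓ θTX (ξ ℓ ((j+1)+1) ω) / S')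
          = Real.log (μb ℓ (j+1) θTX ω) + Real.log (L ℓ θTX (ξ ℓ ((j+1)+1) ω))
            - Real.log S' := by
        rw [Real.log_div (ne_of_gt (mul_pos (hμpos ℓ (j+1) θTX ω) (hLpos ℓ θTX _)))
            (ne_of_gt hS'pos),
          Real.log_mul (ne_of_gt (hμpos ℓ (j+1) θTX ω)) (ne_of_gt (hLpos ℓ θTX _))]
      have l2 : Real.log (μb ℓ (j+1) θs ω * SL / S' / ((H:ℝ) - 1))
          = Real.log (μb ℓ (j+1) θs ω) + Real.log SL - Real.log S'
            - Real.log ((H:ℝ) - 1) := by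
        rw [Real.log_div
            (ne_of_gt (div_pos (mul_pos (hμpos ℓ (j+1) θs ω) hSLpos) hS'pos))
            (ne_of_gt hH1R),
          Real.log_div (ne_of_gt (mul_pos (hμpos ℓ (j+1) θs ω) hSLpos)) (ne_of_gt hS'pos),
          Real.log_mul (ne_of_gt (hμpos ℓ (j+1) θs ω)) (ne_of_gt hSLpos)]
      rw [l1, l2]
      have l3 : Z ℓ (j+1) ω = Real.log (L ℓ θTX (ξ ℓ ((j+1)+1) ω))
          - (Real.log SL - Real.log ((H:ℝ) - 1)) := by
        rw [hZ_def]
        simp only [hF_def]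
        rw [Real.log_div (ne_of_gt hSLpos) (ne_of_gt hH1R)]
      rw [l3, hy_def]
      ring
    show Real.log (μb k ((j+1)+1) θTX ω) - Real.log (μb k ((j+1)+1) θs ω) = _
    rw [hlog θTX, hlog θs]
    have : (∑ ℓ, a ℓ k * Real.log (ψh ℓ ((j+1)+1) θTX ω))
        - (∑ ℓ, a ℓ k * Real.log (ψh ℓ ((j+1)+1) θs ω))
        = ∑ ℓ, a ℓ k * (y ω ℓ (j+1) + Z ℓ (j+1) ω) := by
      rw [← Finset.sum_sub_distrib]
      apply Finset.sum_congr rfl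
      intro ℓ _
      rw [← mul_sub, hterm ℓ]
    linarith
  -- measurability of F
  have hFmeas : ∀ ℓ, Measurable (F ℓ) := by
    intro ℓ
    rw [hF_def]
    apply Measurable.sub
    · exact (hLmeas ℓ θTX).log
    · exact ((Finset.measurable_sum _ (fun τ _ => hLmeas ℓ τ)).div_const _).log
  -- integrability over ν
  have hLint : ∀ ℓ θ, Integrable (L ℓ θ) (ν ℓ) := by
    intro ℓ θ
    by_contra hcon
    have := hLdens ℓ θ
    rw [integral_undef hcon] at this
    norm_num at this
  have hKL' : ∀ ℓ (τ : Fin H),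
      Integrable (fun x => L ℓ θ0 x * (Real.log (L ℓ θ0 x) - Real.log (L ℓ τ x))) (ν ℓ) := by
    intro ℓ τ
    have e : ∀ x, L ℓ θ0 x * Real.log (L ℓ θ0 x / L ℓ τ x)
        = L ℓ θ0 x * (Real.log (L ℓ θ0 x) - Real.log (L ℓ τ x)) := fun x => by
      rw [Real.log_div (ne_of_gt (hLpos ℓ θ0 x)) (ne_of_gt (hLpos ℓ τ x))]
    exact (integrable_congr (Eventually.of_forall e)).1 (hKL ℓ θ0 τ)
  have hIb : ∀ ℓ, Integrable (fun x => L ℓ θ0 x * (Real.log (L ℓ θ0 x)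
      - Real.log ((∑ τ ∈ Finset.univ.erase θTX, L ℓ τ x) / ((H:ℝ) - 1)))) (ν ℓ) := by
    intro ℓ
    have hgint : Integrable (fun x => Real.log ((H:ℝ) - 1) * L ℓ θ0 x
        + ∑ τ ∈ Finset.univ.erase θTX,
          |L ℓ θ0 x * (Real.log (L ℓ θ0 x) - Real.log (L ℓ τ x))|) (ν ℓ) := by
      apply Integrable.add ((hLint ℓ θ0).const_mul _)
      apply integrable_finset_sum
      intro τ _
      exact (hKL' ℓ τ).abs
    apply Integrable.mono hgint
    · apply Measurable.aestronglyMeasurable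
      apply (hLmeas ℓ θ0).mul
      apply Measurable.sub (hLmeas ℓ θ0).log
      exact ((Finset.measurable_sum _ (fun τ _ => hLmeas ℓ τ)).div_const _).log
    · apply Eventually.of_forall
      intro x
      have hbnd := tl_log_bound hH (fun τ => L ℓ τ x) (fun τ => hLpos ℓ τ x) θ0 θTX
      have hL0 : 0 < L ℓ θ0 x := hLpos ℓ θ0 x
      have hgnn : 0 ≤ Real.log ((H:ℝ) - 1) * L ℓ θ0 x
          + ∑ τ ∈ Finset.univ.erase θTX,
            |L ℓ θ0 x * (Real.log (L ℓ θ0 x) - Real.log (L ℓ τ x))| := by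
        apply add_nonneg
        · apply mul_nonneg _ (le_of_lt hL0)
          apply Real.log_nonneg
          have : (2:ℝ) ≤ (H:ℝ) := by exact_mod_cast hH
          linarith
        · exact Finset.sum_nonneg fun τ _ => abs_nonneg _
      rw [Real.norm_eq_abs, Real.norm_eq_abs, abs_of_nonneg hgnn, abs_mul,
        abs_of_pos hL0]
      have habs : ∀ τ, |L ℓ θ0 x * (Real.log (L ℓ θ0 x) - Real.log (L ℓ τ x))|
          = L ℓ θ0 x * |Real.log (L ℓ θ0 x) - Real.log (L ℓ τ x)| := fun τ => by
        rw [abs_mul, abs_of_pos hL0]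
      calc L ℓ θ0 x * |Real.log (L ℓ θ0 x)
            - Real.log ((∑ τ ∈ Finset.univ.erase θTX, L ℓ τ x) / ((H:ℝ) - 1))|
          ≤ L ℓ θ0 x * (Real.log ((H:ℝ) - 1)
            + ∑ τ ∈ Finset.univ.erase θTX, |Real.log (L ℓ θ0 x) - Real.log (L ℓ τ x)|) :=
        mul_le_mul_of_nonneg_left hbnd (le_of_lt hL0)
      _ = Real.log ((H:ℝ) - 1) * L ℓ θ0 x + ∑ τ ∈ Finset.univ.erase θTX,
            |L ℓ θ0 x * (Real.log (L ℓ θ0 x) - Real.log (L ℓ τ x))| := by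
        simp only [habs]
        rw [mul_add, Finset.mul_sum]
        ring
  have hIf : ∀ ℓ, Integrable (fun x => L ℓ θ0 x * F ℓ x) (ν ℓ) := by
    intro ℓ
    have := (hIb ℓ).sub (hKL' ℓ θTX)
    apply (integrable_congr (Eventually.of_forall fun x => ?_)).1 this
    simp only [Pi.sub_apply, hF_def]
    ring
  -- transfer to P
  have hmk : ∀ ℓ (g : X ℓ → ℝ), Measurable g → (Integrable (fun x => L ℓ θ0 x * g x) (ν ℓ)
      → ∀ i : ℕ, 1 ≤ i → Integrable (fun ω => g (ξ ℓ i ω)) P) := by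
    intro ℓ g hg hgint i hi
    exact (tl_int_comp P (ν ℓ) (L ℓ θ0) (hLmeas ℓ θ0) (fun x => le_of_lt (hLpos ℓ θ0 x))
      (ξ ℓ i) (hξmeas ℓ i) (hξdist ℓ i hi) g hg).2 hgint
  have hZint : ∀ ℓ, Integrable (fun ω => F ℓ (ξ ℓ 1 ω)) P := fun ℓ =>
    hmk ℓ (F ℓ) (hFmeas ℓ) (hIf ℓ) 1 le_rfl
  -- hgap integrands
  set Gb : (ℓ : Fin K) → X ℓ → ℝ := fun ℓ x => Real.log (L ℓ θ0 x
    / ((∑ τ ∈ Finset.univ.erase θTX, L ℓ τ x) / ((H:ℝ) - 1))) with hGb_def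
  set G0 : (ℓ : Fin K) → X ℓ → ℝ := fun ℓ x =>
    Real.log (L ℓ θ0 x / L ℓ θTX x) with hG0_def
  have hGbmeas : ∀ ℓ, Measurable (Gb ℓ) := by
    intro ℓ
    rw [hGb_def]
    exact ((hLmeas ℓ θ0).div
      ((Finset.measurable_sum _ (fun τ _ => hLmeas ℓ τ)).div_const _)).log
  have hG0meas : ∀ ℓ, Measurable (G0 ℓ) := by
    intro ℓ
    rw [hG0_def]
    exact ((hLmeas ℓ θ0).div (hLmeas ℓ θTX)).log
  have hGbeq : ∀ ℓ x, Gb ℓ x = Real.log (L ℓ θ0 x)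
      - Real.log ((∑ τ ∈ Finset.univ.erase θTX, L ℓ τ x) / ((H:ℝ) - 1)) := by
    intro ℓ x
    rw [hGb_def]
    exact Real.log_div (ne_of_gt (hLpos ℓ θ0 x))
      (ne_of_gt (div_pos (hsumLpos ℓ x) hH1R))
  have hG0eq : ∀ ℓ x, G0 ℓ x = Real.log (L ℓ θ0 x) - Real.log (L ℓ θTX x) := by
    intro ℓ x
    rw [hG0_def]
    exact Real.log_div (ne_of_gt (hLpos ℓ θ0 x)) (ne_of_gt (hLpos ℓ θTX x))
  have hGbint : ∀ ℓ, Integrable (fun ω => Gb ℓ (ξ ℓ 1 ω)) P := by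
    intro ℓ
    apply hmk ℓ (Gb ℓ) (hGbmeas ℓ) _ 1 le_rfl
    apply (integrable_congr (Eventually.of_forall fun x => ?_)).1 (hIb ℓ)
    rw [hGbeq ℓ x]
  have hG0int : ∀ ℓ, Integrable (fun ω => G0 ℓ (ξ ℓ 1 ω)) P := by
    intro ℓ
    apply hmk ℓ (G0 ℓ) (hG0meas ℓ) _ 1 le_rfl
    apply (integrable_congr (Eventually.of_forall fun x => ?_)).1 (hKL' ℓ θTX)
    rw [hG0eq ℓ x]
  -- the mean of F ∘ ξ and negativity of weighted average
  have hEeq : ∀ ℓ, ∫ ω, F ℓ (ξ ℓ 1 ω) ∂P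
      = (∫ ω, Gb ℓ (ξ ℓ 1 ω) ∂P) - (∫ ω, G0 ℓ (ξ ℓ 1 ω) ∂P) := by
    intro ℓ
    rw [← integral_sub (hGbint ℓ) (hG0int ℓ)]
    congr 1
    ext ω
    rw [hF_def, hGbeq ℓ _, hG0eq ℓ _]
    ring
  have hneg : ∑ ℓ, v ℓ * (∫ ω, F ℓ (ξ ℓ 1 ω) ∂P) < 0 := by
    have : ∑ ℓ, v ℓ * (∫ ω, F ℓ (ξ ℓ 1 ω) ∂P)
        = (∑ ℓ, v ℓ * (∫ ω, Gb ℓ (ξ ℓ 1 ω) ∂P))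
          - (∑ ℓ, v ℓ * (∫ ω, G0 ℓ (ξ ℓ 1 ω) ∂P)) := by
      rw [← Finset.sum_sub_distrib]
      apply Finset.sum_congr rfl
      intro ℓ _
      rw [hEeq ℓ]
      ring
    rw [this, sub_neg]
    exact hgap
  -- strong law of large numbers for Z and |Z|
  have hident : ∀ ℓ (j : ℕ), IdentDistrib (ξ ℓ (j+1)) (ξ ℓ 1) P P := by
    intro ℓ j
    exact ⟨(hξmeas ℓ (j+1)).aemeasurable, (hξmeas ℓ 1).aemeasurable,
      by rw [hξdist ℓ (j+1) (by omega), hξdist ℓ 1 le_rfl]⟩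
  have hSLLN : ∀ ℓ : Fin K, ∀ᵐ ω ∂P, Tendsto
      (fun i : ℕ => (∑ j ∈ Finset.range i, Z ℓ j ω) / i) atTop
      (𝓝 (∫ ω, F ℓ (ξ ℓ 1 ω) ∂P)) := by
    intro ℓ
    have hcomp := hξindep.comp (fun _ (x : ∀ k, X k) => F ℓ (x ℓ))
      (fun _ => (hFmeas ℓ).comp (measurable_pi_apply ℓ))
    have hind : Pairwise (Function.onFun (IndepFun · · P) (fun j ω => F ℓ (ξ ℓ (j+1) ω))) :=
      fun i j hij => hcomp.indepFun hij
    have hid : ∀ j : ℕ, IdentDistrib (fun ω => F ℓ (ξ ℓ (j+1) ω))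
        (fun ω => F ℓ (ξ ℓ (0+1) ω)) P P := by
      intro j
      have h1 := (hident ℓ j).comp (hFmeas ℓ)
      exact h1
    have := strong_law_ae_real (fun j ω => F ℓ (ξ ℓ (j+1) ω)) (hZint ℓ) hind hid
    exact this
  have hSLLNa : ∀ ℓ : Fin K, ∀ᵐ ω ∂P, Tendsto
      (fun i : ℕ => (∑ j ∈ Finset.range i, |Z ℓ j ω|) / i) atTop
      (𝓝 (∫ ω, |F ℓ (ξ ℓ 1 ω)| ∂P)) := by
    intro ℓ
    have hcomp := hξindep.comp (fun _ (x : ∀ k, X k) => |F ℓ (x ℓ)|)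
      (fun _ => ((hFmeas ℓ).comp (measurable_pi_apply ℓ)).abs)
    have hind : Pairwise (Function.onFun (IndepFun · · P) (fun j ω => |F ℓ (ξ ℓ (j+1) ω)|)) :=
      fun i j hij => hcomp.indepFun hij
    have hid : ∀ j : ℕ, IdentDistrib (fun ω => |F ℓ (ξ ℓ (j+1) ω)|)
        (fun ω => |F ℓ (ξ ℓ (0+1) ω)|) P P := by
      intro j
      exact (hident ℓ j).comp (hFmeas ℓ).abs
    have := strong_law_ae_real (fun j ω => |F ℓ (ξ ℓ (j+1) ω)|) (hZint ℓ).abs hind hid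
    exact this
  -- primitive exponent with n ≥ 1
  obtain ⟨n0, hpos0⟩ := ha_prim
  have hposn : ∀ ℓ k, 0 < ((Matrix.of a) ^ (n0+1)) ℓ k := by
    intro ℓ k
    rw [pow_succ, Matrix.mul_apply]
    have hex : ∃ j : Fin K, 0 < a j k := by
      by_contra hcon
      push_neg at hcon
      have hz : ∑ j, a j k = 0 :=
        Finset.sum_eq_zero (fun j _ => le_antisymm (hcon j) (ha_nonneg j k))
      rw [ha_stoch k] at hz
      norm_num at hz
    obtain ⟨j0, hj0⟩ := hex
    apply Finset.sum_pos'
    · intro j _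
      exact mul_nonneg (le_of_lt (hpos0 ℓ j)) (ha_nonneg j k)
    · exact ⟨j0, Finset.mem_univ j0, mul_pos (hpos0 ℓ j0) hj0⟩
  -- a.e. divergence of log-ratios
  have key : ∀ᵐ ω ∂P, ∀ k : Fin K, Tendsto (fun i => y ω k i) atTop atBot := by
    have hall : ∀ᵐ ω ∂P, (∀ ℓ : Fin K, Tendsto
        (fun i : ℕ => (∑ j ∈ Finset.range i, Z ℓ j ω) / i) atTop
        (𝓝 (∫ ω, F ℓ (ξ ℓ 1 ω) ∂P))) ∧ (∀ ℓ : Fin K, Tendsto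
        (fun i : ℕ => (∑ j ∈ Finset.range i, |Z ℓ j ω|) / i) atTop
        (𝓝 (∫ ω, |F ℓ (ξ ℓ 1 ω)| ∂P))) :=
      ((ae_all_iff.2 hSLLN).and (ae_all_iff.2 hSLLNa))
    filter_upwards [hall] with ω hω
    exact tl_detMain hK a ha_nonneg ha_stoch (n0+1) (by omega) hposn v hv_pos hv_sum
      hv_eig (fun k i => y ω k i) (fun ℓ j => Z ℓ j ω)
      (fun k i hi => hrec ω k i hi) _ _ (fun ℓ => hω.1 ℓ) (fun ℓ => hω.2 ℓ) hneg
  -- convergence of the TX belief for a fixed ω with diverging ratios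
  have conv0 : ∀ (k : Fin K) ω, Tendsto (fun i => y ω k i) atTop atBot →
      Tendsto (fun i => μb k i θTX ω) atTop (𝓝 0) := by
    intro k ω hyk
    have hub : ∀ᶠ i : ℕ in atTop, μb k i θTX ω ≤ Real.exp (y ω k i) := by
      filter_upwards [eventually_ge_atTop 1] with i hi
      obtain ⟨j, rfl⟩ : ∃ j, i = j + 1 := ⟨i - 1, by omega⟩
      have hθsle1 : μb k (j+1) θs ω ≤ 1 := by
        have hsum := hμsum k j ω
        have := Finset.single_le_sum
          (f := fun θ => μb k (j+1) θ ω)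
          (fun θ _ => le_of_lt (hμpos k (j+1) θ ω)) (Finset.mem_univ θs)
        linarith
      have : Real.exp (y ω k (j+1)) = μb k (j+1) θTX ω / μb k (j+1) θs ω := by
        rw [hy_def]
        rw [Real.exp_sub, Real.exp_log (hμpos k (j+1) θTX ω),
          Real.exp_log (hμpos k (j+1) θs ω)]
      rw [this, le_div_iff₀ (hμpos k (j+1) θs ω)]
      nlinarith [hμpos k (j+1) θTX ω]
    have hlb : ∀ᶠ i : ℕ in atTop, (0:ℝ) ≤ μb k i θTX ω :=
      Eventually.of_forall fun i => le_of_lt (hμpos k i θTX ω)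
    have hexp : Tendsto (fun i => Real.exp (y ω k i)) atTop (𝓝 0) :=
      Real.tendsto_exp_atBot.comp hyk
    exact tendsto_of_tendsto_of_tendsto_of_le_of_le' tendsto_const_nhds hexp hlb hub
  intro k
  constructor
  · filter_upwards [key] with ω hω
    exact conv0 k ω (hω k)
  · intro θ hθ
    filter_upwards [key] with ω hω
    have h0 : Tendsto (fun i => μb k i θTX ω) atTop (𝓝 0) := conv0 k ω (hω k)
    have heq : ∀ᶠ i : ℕ in atTop,
        μb k i θ ω = (1 - μb k i θTX ω) / ((H:ℝ) - 1) := by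
      filter_upwards [eventually_ge_atTop 1] with i hi
      obtain ⟨j, rfl⟩ : ∃ j, i = j + 1 := ⟨i - 1, by omega⟩
      have hsum := hμsum k j ω
      have hsplit : μb k (j+1) θTX ω + ∑ τ ∈ Finset.univ.erase θTX, μb k (j+1) τ ω
          = ∑ τ, μb k (j+1) τ ω :=
        Finset.add_sum_erase _ (fun τ => μb k (j+1) τ ω) (Finset.mem_univ θTX)
      have hconst : ∑ τ ∈ Finset.univ.erase θTX, μb k (j+1) τ ω
          = ((H:ℝ) - 1) * μb k (j+1) θ ω := by
        have : ∀ τ ∈ Finset.univ.erase θTX, μb k (j+1) τ ω = μb k (j+1) θ ω := by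
          intro τ hτ
          rw [hntx k j τ ω (Finset.mem_erase.1 hτ).1, ← hntx k j θ ω hθ]
        rw [Finset.sum_congr rfl this, Finset.sum_const,
          Finset.card_erase_of_mem (Finset.mem_univ θTX), Finset.card_univ,
          Fintype.card_fin, nsmul_eq_mul]
        congr 1
        push_cast [Nat.cast_sub (by omega : 1 ≤ H)]
        ring
      rw [eq_div_iff (ne_of_gt hH1R)]
      rw [hconst] at hsplit
      rw [hsum] at hsplit
      linarith
    have hlim : Tendsto (fun i => (1 - μb k i θTX ω) / ((H:ℝ) - 1)) atTop
        (𝓝 ((1 - 0) / ((H:ℝ) - 1))) :=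
      (tendsto_const_nhds.sub h0).div_const _
    rw [sub_zero] at hlim
    exact hlim.congr' (heq.mono fun i hi => hi.symm)
end

section
/- Theorem 3, part 2 (Mislearning without self-awareness when the transmitted hypothesis is close to the truth). Suppose the agents run the partial-information algorithm without self-awareness with transmitted hypothesis θ_TX, and assume Assumptions 1 and 2. If d_ave(θ_TX) < d_ave(θ̄_TX), then for every agent k, μ_{k,i}(θ_TX) → 1 almost surely. -/
open MeasureTheory ProbabilityTheory Filter Topology

namespace MislearnAux


variable {ι : Type*} [Fintype ι] [Nonempty ι]

noncomputable def osc (x : ι → ℝ) : ℝ :=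
  (Finset.univ.sup' Finset.univ_nonempty x) - (Finset.univ.inf' Finset.univ_nonempty x)

lemma inf_le_apply (x : ι → ℝ) (i : ι) :
    Finset.univ.inf' Finset.univ_nonempty x ≤ x i :=
  Finset.inf'_le x (Finset.mem_univ i)

lemma apply_le_sup (x : ι → ℝ) (i : ι) :
    x i ≤ Finset.univ.sup' Finset.univ_nonempty x :=
  Finset.le_sup' x (Finset.mem_univ i)

lemma osc_zero : osc (fun _ : ι => (0:ℝ)) = 0 := by
  unfold osc
  rw [Finset.sup'_const, Finset.inf'_const]
  ring

lemma osc_nonneg (x : ι → ℝ) : 0 ≤ osc x := by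
  obtain ⟨i⟩ := (inferInstance : Nonempty ι)
  have := inf_le_apply x i
  have := apply_le_sup x i
  unfold osc; linarith

lemma sub_osc_le (x : ι → ℝ) (i j : ι) : x i - x j ≤ osc x := by
  have := inf_le_apply x j
  have := apply_le_sup x i
  unfold osc; linarith

lemma apply_le_of_osc (x : ι → ℝ) (i : ι) :
    x i ≤ Finset.univ.inf' Finset.univ_nonempty x + osc x := by
  have := apply_le_sup x i
  unfold osc; linarith

lemma osc_le_two_sum_abs (x : ι → ℝ) : osc x ≤ 2 * ∑ i, |x i| := by
  obtain ⟨i, _, hi⟩ := Finset.exists_mem_eq_sup' (Finset.univ_nonempty (α := ι)) x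
  obtain ⟨j, _, hj⟩ := Finset.exists_mem_eq_inf' (Finset.univ_nonempty (α := ι)) x
  have h1 : x i ≤ ∑ m, |x m| := by
    calc x i ≤ |x i| := le_abs_self _
    _ ≤ ∑ m, |x m| := Finset.single_le_sum (fun m _ => abs_nonneg (x m)) (Finset.mem_univ i)
  have h2 : -(∑ m, |x m|) ≤ x j := by
    have : |x j| ≤ ∑ m, |x m| := Finset.single_le_sum (fun m _ => abs_nonneg (x m)) (Finset.mem_univ j)
    have := neg_abs_le (x j)
    linarith
  unfold osc; rw [hi, hj]; linarith

lemma osc_add_le (x y : ι → ℝ) : osc (x + y) ≤ osc x + osc y := by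
  obtain ⟨i, _, hi⟩ := Finset.exists_mem_eq_sup' (Finset.univ_nonempty (α := ι)) (x + y)
  obtain ⟨j, _, hj⟩ := Finset.exists_mem_eq_inf' (Finset.univ_nonempty (α := ι)) (x + y)
  have h1 := sub_osc_le x i j
  have h2 := sub_osc_le y i j
  unfold osc at *
  rw [hi, hj]
  simp only [Pi.add_apply]
  linarith

section Matrix

variable (B : Matrix ι ι ℝ) (hB0 : ∀ i j, 0 ≤ B i j) (hB1 : ∀ i, ∑ j, B i j = 1)

include hB0 hB1 in
lemma mulVec_le_sup (x : ι → ℝ) (i : ι) :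
    (B.mulVec x) i ≤ Finset.univ.sup' Finset.univ_nonempty x := by
  have : (B.mulVec x) i = ∑ j, B i j * x j := rfl
  rw [this]
  calc ∑ j, B i j * x j ≤ ∑ j, B i j * (Finset.univ.sup' Finset.univ_nonempty x) := by
        apply Finset.sum_le_sum
        intro j _
        exact mul_le_mul_of_nonneg_left (apply_le_sup x j) (hB0 i j)
    _ = Finset.univ.sup' Finset.univ_nonempty x := by rw [← Finset.sum_mul, hB1 i, one_mul]

include hB0 hB1 in
lemma inf_le_mulVec (x : ι → ℝ) (i : ι) :
    Finset.univ.inf' Finset.univ_nonempty x ≤ (B.mulVec x) i := by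
  have : (B.mulVec x) i = ∑ j, B i j * x j := rfl
  rw [this]
  calc Finset.univ.inf' Finset.univ_nonempty x
      = ∑ j, B i j * (Finset.univ.inf' Finset.univ_nonempty x) := by
        rw [← Finset.sum_mul, hB1 i, one_mul]
    _ ≤ ∑ j, B i j * x j := by
        apply Finset.sum_le_sum
        intro j _
        exact mul_le_mul_of_nonneg_left (inf_le_apply x j) (hB0 i j)

include hB0 hB1 in
lemma osc_mulVec_le (x : ι → ℝ) : osc (B.mulVec x) ≤ osc x := by
  obtain ⟨i, _, hi⟩ := Finset.exists_mem_eq_sup' (Finset.univ_nonempty (α := ι)) (B.mulVec x)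
  obtain ⟨j, _, hj⟩ := Finset.exists_mem_eq_inf' (Finset.univ_nonempty (α := ι)) (B.mulVec x)
  have h1 := mulVec_le_sup B hB0 hB1 x i
  have h2 := inf_le_mulVec B hB0 hB1 x j
  unfold osc at *
  rw [hi, hj]
  linarith

include hB0 hB1 in
lemma osc_mulVec_contract {ε : ℝ} (hε : 0 < ε) (hεB : ∀ i j, ε ≤ B i j) (x : ι → ℝ) :
    osc (B.mulVec x) ≤ (1 - ε) * osc x := by
  classical
  obtain ⟨j0, _, hj0⟩ := Finset.exists_mem_eq_inf' (Finset.univ_nonempty (α := ι)) x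
  obtain ⟨j1, _, hj1⟩ := Finset.exists_mem_eq_sup' (Finset.univ_nonempty (α := ι)) x
  have hosc := osc_nonneg x
  -- upper bound
  have hup : ∀ i, (B.mulVec x) i ≤ x j0 + (1 - ε) * osc x := by
    intro i
    have hrw : (B.mulVec x) i = x j0 + ∑ j, B i j * (x j - x j0) := by
      have : ∑ j, B i j * (x j - x j0) = (∑ j, B i j * x j) - (∑ j, B i j) * x j0 := by
        rw [Finset.sum_mul, ← Finset.sum_sub_distrib]
        congr 1; ext j; ring
      rw [this, hB1 i]
      have : (B.mulVec x) i = ∑ j, B i j * x j := rfl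
      rw [this]; ring
    rw [hrw]
    have hsum : ∑ j, B i j * (x j - x j0) ≤ (1 - B i j0) * osc x := by
      rw [← Finset.sum_erase_add _ _ (Finset.mem_univ j0)]
      have hz : B i j0 * (x j0 - x j0) = 0 := by ring
      rw [hz, add_zero]
      calc ∑ j ∈ Finset.univ.erase j0, B i j * (x j - x j0)
          ≤ ∑ j ∈ Finset.univ.erase j0, B i j * osc x := by
            apply Finset.sum_le_sum
            intro j _
            exact mul_le_mul_of_nonneg_left (sub_osc_le x j j0) (hB0 i j)
        _ = (1 - B i j0) * osc x := by
            rw [← Finset.sum_mul]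
            congr 1
            have := Finset.sum_erase_add Finset.univ (B i) (Finset.mem_univ j0)
            linarith [hB1 i]
    have : (1 - B i j0) * osc x ≤ (1 - ε) * osc x :=
      mul_le_mul_of_nonneg_right (by linarith [hεB i j0]) hosc
    linarith
  -- lower bound
  have hlo : ∀ i, x j1 - (1 - ε) * osc x ≤ (B.mulVec x) i := by
    intro i
    have hrw : (B.mulVec x) i = x j1 + ∑ j, B i j * (x j - x j1) := by
      have : ∑ j, B i j * (x j - x j1) = (∑ j, B i j * x j) - (∑ j, B i j) * x j1 := by
        rw [Finset.sum_mul, ← Finset.sum_sub_distrib]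
        congr 1; ext j; ring
      rw [this, hB1 i]
      have : (B.mulVec x) i = ∑ j, B i j * x j := rfl
      rw [this]; ring
    rw [hrw]
    have hsum : -((1 - B i j1) * osc x) ≤ ∑ j, B i j * (x j - x j1) := by
      rw [← Finset.sum_erase_add _ _ (Finset.mem_univ j1)]
      have hz : B i j1 * (x j1 - x j1) = 0 := by ring
      rw [hz, add_zero]
      have : ∑ j ∈ Finset.univ.erase j1, B i j * (-osc x)
          ≤ ∑ j ∈ Finset.univ.erase j1, B i j * (x j - x j1) := by
        apply Finset.sum_le_sum
        intro j _
        apply mul_le_mul_of_nonneg_left _ (hB0 i j)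
        have := sub_osc_le x j1 j
        linarith
      have heq : ∑ j ∈ Finset.univ.erase j1, B i j * (-osc x) = -((1 - B i j1) * osc x) := by
        rw [← Finset.sum_mul]
        have := Finset.sum_erase_add Finset.univ (B i) (Finset.mem_univ j1)
        have h2 : ∑ j ∈ Finset.univ.erase j1, B i j = 1 - B i j1 := by linarith [hB1 i]
        rw [h2]; ring
      linarith
    have : (1 - B i j1) * osc x ≤ (1 - ε) * osc x :=
      mul_le_mul_of_nonneg_right (by linarith [hεB i j1]) hosc
    linarith
  obtain ⟨i, _, hi⟩ := Finset.exists_mem_eq_sup' (Finset.univ_nonempty (α := ι)) (B.mulVec x)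
  obtain ⟨j, _, hj⟩ := Finset.exists_mem_eq_inf' (Finset.univ_nonempty (α := ι)) (B.mulVec x)
  have h1 := hup i
  have h2 := hlo j
  have h3 : x j1 - x j0 = osc x := by unfold osc; rw [hj1, hj0]
  unfold osc at *
  rw [hi, hj]
  nlinarith

end Matrix



lemma seq_osc_tendsto (u b : ℕ → ℝ) (c : ℝ) (hc0 : 0 ≤ c) (hc1 : c < 1) (n : ℕ) (hn : 1 ≤ n)
    (hu : ∀ i, 0 ≤ u i) (hb : ∀ j, 0 ≤ b j)
    (hrec : ∀ i, 1 ≤ i → u (i + n) ≤ c * u i + ∑ t ∈ Finset.Icc 1 n, b (i + t))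
    (hbj : Tendsto (fun j => b j / j) atTop (𝓝 0)) :
    Tendsto (fun i => u i / i) atTop (𝓝 0) := by
  rw [Metric.tendsto_atTop]
  intro ε hε
  have hnpos : (0:ℝ) < n := by exact_mod_cast hn
  have h1c : (0:ℝ) < 1 - c := by linarith
  set ε' : ℝ := ε * (1 - c) / (4 * n) with hε'def
  have hε' : 0 < ε' := by positivity
  obtain ⟨N₀, hN₀⟩ := (Metric.tendsto_atTop.1 hbj) ε' hε'
  set J := max N₀ 1 with hJdef
  have hJ1 : 1 ≤ J := le_max_right _ _
  have hbound : ∀ j, J ≤ j → b j ≤ ε' * j := by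
    intro j hj
    have hj1 : 1 ≤ j := le_trans hJ1 hj
    have hjpos : (0:ℝ) < j := by exact_mod_cast hj1
    have := hN₀ j (le_trans (le_max_left _ _) hj)
    rw [Real.dist_eq, sub_zero, abs_of_nonneg (div_nonneg (hb j) hjpos.le)] at this
    calc b j = b j / j * j := by field_simp
      _ ≤ ε' * j := mul_le_mul_of_nonneg_right this.le hjpos.le
  have hwne : (Finset.Ico J (J + n)).Nonempty := by
    rw [Finset.nonempty_Ico]; omega
  set D := (Finset.Ico J (J + n)).sup' hwne u with hDdef
  have hD0 : 0 ≤ D := by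
    obtain ⟨r, hr⟩ := hwne
    exact le_trans (hu r) (Finset.le_sup' u hr)
  have hgeo : ∀ m : ℕ, (∑ s ∈ Finset.range m, c ^ s) ≤ 1 / (1 - c) := by
    intro m
    rw [le_div_iff₀ h1c]
    have h := geom_sum_mul c m
    have : 0 ≤ c ^ m := pow_nonneg hc0 m
    nlinarith
  have hgeo0 : ∀ m : ℕ, 0 ≤ ∑ s ∈ Finset.range m, c ^ s :=
    fun m => Finset.sum_nonneg fun s _ => pow_nonneg hc0 s
  have key : ∀ r, J ≤ r → r < J + n → ∀ m : ℕ,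
      u (r + m * n) ≤ c ^ m * D
        + (∑ s ∈ Finset.range m, c ^ s) * (ε' * n * ((r + m * n : ℕ) : ℝ)) := by
    intro r hr1 hr2 m
    induction m with
    | zero =>
      simp only [zero_mul, add_zero, pow_zero, one_mul, Finset.range_zero, Finset.sum_empty]
      have : u r ≤ D := Finset.le_sup' u (Finset.mem_Ico.2 ⟨hr1, hr2⟩)
      linarith
    | succ m ih =>
      have hidx : r + (m + 1) * n = (r + m * n) + n := by ring
      have hge1 : 1 ≤ r + m * n := by omega
      have hstep : u (r + (m + 1) * n) ≤
          c * u (r + m * n) + ∑ t ∈ Finset.Icc 1 n, b (r + m * n + t) := by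
        rw [hidx]; exact hrec (r + m * n) hge1
      set G := ∑ s ∈ Finset.range m, c ^ s with hG
      set A : ℝ := ((r + m * n : ℕ) : ℝ) with hA
      set A' : ℝ := ((r + (m + 1) * n : ℕ) : ℝ) with hA'
      have hAA' : A ≤ A' := by
        rw [hA, hA']; exact_mod_cast (by omega : r + m * n ≤ r + (m+1) * n)
      have hA0 : 0 ≤ A := Nat.cast_nonneg _
      have hbsum : ∑ t ∈ Finset.Icc 1 n, b (r + m * n + t) ≤ (n : ℝ) * (ε' * A') := by
        calc ∑ t ∈ Finset.Icc 1 n, b (r + m * n + t)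
            ≤ ∑ _t ∈ Finset.Icc 1 n, ε' * A' := by
              apply Finset.sum_le_sum
              intro t ht
              obtain ⟨ht1, ht2⟩ := Finset.mem_Icc.1 ht
              have h1 : J ≤ r + m * n + t := by omega
              have h2 := hbound _ h1
              have h3 : ((r + m * n + t : ℕ) : ℝ) ≤ A' := by
                rw [hA']; exact_mod_cast (by omega : r + m * n + t ≤ r + (m+1) * n)
              calc b (r + m * n + t) ≤ ε' * ((r + m * n + t : ℕ) : ℝ) := h2
                _ ≤ ε' * A' := mul_le_mul_of_nonneg_left h3 hε'.le
          _ = (n : ℝ) * (ε' * A') := by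
              rw [Finset.sum_const, Nat.card_Icc]
              simp [nsmul_eq_mul]
      have hGsucc : (∑ s ∈ Finset.range (m+1), c ^ s) = 1 + c * G := by
        rw [geom_sum_succ, hG]; ring
      have h6 : c * G * (ε' * (n:ℝ) * A) ≤ c * G * (ε' * (n:ℝ) * A') := by
        apply mul_le_mul_of_nonneg_left _ (mul_nonneg hc0 (hgeo0 m))
        exact mul_le_mul_of_nonneg_left hAA' (by positivity)
      calc u (r + (m + 1) * n) ≤ c * u (r + m * n) + ∑ t ∈ Finset.Icc 1 n, b (r + m * n + t) :=
            hstep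
        _ ≤ c * (c ^ m * D + G * (ε' * n * A)) + (n : ℝ) * (ε' * A') :=
            add_le_add (mul_le_mul_of_nonneg_left ih hc0) hbsum
        _ = c ^ (m+1) * D + c * G * (ε' * n * A) + ε' * n * A' := by ring
        _ ≤ c ^ (m+1) * D + c * G * (ε' * n * A') + ε' * n * A' := by linarith
        _ = c ^ (m+1) * D + (1 + c * G) * (ε' * n * A') := by ring
        _ = c ^ (m+1) * D + (∑ s ∈ Finset.range (m+1), c ^ s) * (ε' * n * A') := by
            rw [hGsucc]
  have main : ∀ i, J ≤ i → u i ≤ D + (ε' * n / (1 - c)) * i := by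
    intro i hi
    have hqs := Nat.mod_add_div' (i - J) n
    have hrm : (J + (i - J) % n) + ((i - J) / n) * n = i := by omega
    have hr2 : J + (i - J) % n < J + n := by
      have := Nat.mod_lt (i - J) (by omega : 0 < n)
      omega
    have hkey := key (J + (i - J) % n) (by omega) hr2 ((i - J) / n)
    rw [hrm] at hkey
    set m := (i - J) / n
    have h1 : c ^ m * D ≤ D := by
      have : c ^ m ≤ 1 := pow_le_one₀ hc0 hc1.le
      nlinarith
    have h2 : (∑ s ∈ Finset.range m, c ^ s) * (ε' * n * (i:ℝ)) ≤ (1 / (1 - c)) * (ε' * n * i) := by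
      apply mul_le_mul_of_nonneg_right (hgeo m)
      positivity
    have h3 : (1 / (1 - c)) * (ε' * n * i) = (ε' * n / (1 - c)) * i := by ring
    linarith
  have hεhalf : ε' * n / (1 - c) = ε / 4 := by
    rw [hε'def]; field_simp
  obtain ⟨N₁, hN₁⟩ := exists_nat_gt (4 * D / ε)
  refine ⟨max J (N₁ + 1), fun i hi => ?_⟩
  have hiJ : J ≤ i := le_trans (le_max_left _ _) hi
  have hiN : N₁ + 1 ≤ i := le_trans (le_max_right _ _) hi
  have hipos : (0:ℝ) < i := by
    have : 1 ≤ i := by omega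
    exact_mod_cast this
  rw [Real.dist_eq, sub_zero, abs_of_nonneg (div_nonneg (hu i) hipos.le)]
  rw [div_lt_iff₀ hipos]
  have h1 := main i hiJ
  rw [hεhalf] at h1
  have h2 : 4 * D / ε < i := by
    calc 4 * D / ε < N₁ := hN₁
      _ ≤ i := by exact_mod_cast (by omega : N₁ ≤ i)
  have h3 : 4 * D < ε * i := by
    rw [div_lt_iff₀ hε] at h2
    linarith [mul_comm ε (i:ℝ)]
  linarith




lemma div_succ_tendsto (T : ℕ → ℝ) (μ : ℝ) (hT0 : T 0 = 0)
    (h : Tendsto (fun m => T m / m) atTop (𝓝 μ)) :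
    Tendsto (fun m => T m / ((m : ℝ) + 1)) atTop (𝓝 μ) := by
  have hq : Tendsto (fun m : ℕ => (m : ℝ) / ((m : ℝ) + 1)) atTop (𝓝 1) :=
    tendsto_natCast_div_add_atTop (1 : ℝ)
  have h2 := h.mul hq
  rw [mul_one] at h2
  apply h2.congr
  intro m
  rcases Nat.eq_zero_or_pos m with hm | hm
  · subst hm; simp [hT0]
  · have : (m : ℝ) ≠ 0 := by positivity
    field_simp

lemma term_div_succ_tendsto (Z : ℕ → ℝ) (μ : ℝ)
    (h : Tendsto (fun m => (∑ t ∈ Finset.range m, Z t) / m) atTop (𝓝 μ)) :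
    Tendsto (fun m => Z m / ((m : ℝ) + 1)) atTop (𝓝 0) := by
  set A : ℕ → ℝ := fun m => (∑ t ∈ Finset.range m, Z t) / m with hA
  have h1 : Tendsto (fun m => A (m + 1)) atTop (𝓝 μ) := h.comp (tendsto_add_atTop_nat 1)
  have hq : Tendsto (fun m : ℕ => (m : ℝ) / ((m : ℝ) + 1)) atTop (𝓝 1) :=
    tendsto_natCast_div_add_atTop (1 : ℝ)
  have h2 := h.mul hq
  rw [mul_one] at h2
  have h3 := h1.sub h2
  rw [sub_self] at h3
  apply h3.congr
  intro m
  have hsucc : A (m + 1) = (∑ t ∈ Finset.range m, Z t + Z m) / ((m : ℝ) + 1) := by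
    rw [hA]
    simp only [Finset.sum_range_succ]
    push_cast
    ring
  rcases Nat.eq_zero_or_pos m with hm | hm
  · subst hm; simp [hA]
  · have hm0 : (m : ℝ) ≠ 0 := by positivity
    rw [hsucc, hA]
    field_simp
    ring

end MislearnAux
set_option maxHeartbeats 2000000 in
open MislearnAux in
theorem mislearning_without_self_awareness_of_close_tx
    {Ω : Type} [mΩ : MeasurableSpace Ω] (P : Measure Ω) [IsProbabilityMeasure P]
    (K H : ℕ) (hK : 0 < K) (hH : 2 ≤ H)
    (X : Fin K → Type) [∀ k, MeasurableSpace (X k)]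
    (ν : ∀ k, Measure (X k))
    (L : ∀ k : Fin K, Fin H → X k → ℝ)
    (θ0 : Fin H)
    (hLpos : ∀ k θ x, 0 < L k θ x)
    (hLmeas : ∀ k θ, Measurable (L k θ))
    (hLdens : ∀ k θ, ∫ x, L k θ x ∂(ν k) = 1)
    (ξ : ∀ k : Fin K, ℕ → Ω → X k)
    (hξmeas : ∀ k i, Measurable (ξ k i))
    (hξdist : ∀ k (i : ℕ), 1 ≤ i →
      Measure.map (ξ k i) P = (ν k).withDensity (fun x => ENNReal.ofReal (L k θ0 x)))
    (hξindep : iIndepFun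
      (fun (i : ℕ) (ω : Ω) (k : Fin K) => ξ k (i + 1) ω) P)
    (hKL : ∀ k θ θ',
      Integrable (fun x => L k θ x * Real.log (L k θ x / L k θ' x)) (ν k))
    (a : Fin K → Fin K → ℝ)
    (ha_nonneg : ∀ ℓ k, 0 ≤ a ℓ k)
    (ha_stoch : ∀ k, ∑ ℓ, a ℓ k = 1)
    (ha_prim : ∃ n : ℕ, ∀ ℓ k, 0 < ((Matrix.of a) ^ n) ℓ k)
    (v : Fin K → ℝ)
    (hv_pos : ∀ ℓ, 0 < v ℓ)
    (hv_sum : ∑ ℓ, v ℓ = 1)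
    (hv_eig : ∀ ℓ, ∑ k, a ℓ k * v k = v ℓ)
    (θTX : Fin H)
    (μb ψ ψh : Fin K → ℕ → Fin H → Ω → ℝ)
    (μinit : Fin K → Fin H → ℝ)
    (hμinit_pos : ∀ k θ, 0 < μinit k θ)
    (hμinit_sum : ∀ k, ∑ θ, μinit k θ = 1)
    (hμb0 : ∀ k θ ω, μb k 0 θ ω = μinit k θ)
    (hψ : ∀ k (i : ℕ) θ ω, ψ k (i + 1) θ ω =
      μb k i θ ω * L k θ (ξ k (i + 1) ω) /
        ∑ θ', μb k i θ' ω * L k θ' (ξ k (i + 1) ω))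
    (hψh_tx : ∀ k (i : ℕ) ω, ψh k (i + 1) θTX ω = ψ k (i + 1) θTX ω)
    (hψh_ntx : ∀ k (i : ℕ) θ ω, θ ≠ θTX →
      ψh k (i + 1) θ ω = (1 - ψ k (i + 1) θTX ω) / ((H : ℝ) - 1))
    (hcomb : ∀ k (i : ℕ) θ ω, μb k (i + 1) θ ω =
      Real.exp (∑ ℓ, a ℓ k * Real.log (ψh ℓ (i + 1) θ ω)) /
        ∑ θ', Real.exp (∑ ℓ, a ℓ k * Real.log (ψh ℓ (i + 1) θ' ω)))
    (hgap : (∑ m, v m * (∫ ω, Real.log (L m θ0 (ξ m 1 ω) / L m θTX (ξ m 1 ω)) ∂P)) < (∑ m, v m * (∫ ω, Real.log (L m θ0 (ξ m 1 ω) / ((∑ τ ∈ Finset.univ.erase θTX, L m τ (ξ m 1 ω)) / ((H : ℝ) - 1))) ∂P))) :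
    ∀ k : Fin K, ∀ᵐ ω ∂P,
      Tendsto (fun (i : ℕ) => μb k i θTX ω) atTop (𝓝 1) := by
  intro k
  classical
  haveI : Nonempty (Fin K) := ⟨⟨0, hK⟩⟩
  haveI : Nonempty (Fin H) := ⟨⟨0, by omega⟩⟩
  have hH1 : (0:ℝ) < (H:ℝ) - 1 := by
    have h2 : (2:ℝ) ≤ (H:ℝ) := by exact_mod_cast hH
    linarith
  obtain ⟨θ1, hθ1⟩ := Fintype.exists_ne_of_one_lt_card
    (by simpa [Fintype.card_fin] using (by omega : 1 < H)) θTX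
  have herase_ne : (Finset.univ.erase θTX).Nonempty :=
    ⟨θ1, Finset.mem_erase.2 ⟨hθ1, Finset.mem_univ _⟩⟩
  have hcard_erase : ((Finset.univ.erase θTX).card : ℝ) = (H:ℝ) - 1 := by
    rw [Finset.card_erase_of_mem (Finset.mem_univ _)]
    simp only [Finset.card_univ, Fintype.card_fin]
    rw [Nat.cast_sub (by omega : 1 ≤ H)]
    norm_num
  set Lbar : (ℓ : Fin K) → X ℓ → ℝ :=
    fun ℓ s => (∑ τ ∈ Finset.univ.erase θTX, L ℓ τ s) / ((H:ℝ) - 1) with hLbar_def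
  have hLbar_pos : ∀ ℓ s, 0 < Lbar ℓ s := by
    intro ℓ s
    exact div_pos (Finset.sum_pos (fun τ _ => hLpos ℓ τ s) herase_ne) hH1
  have hLbar_meas : ∀ ℓ, Measurable (Lbar ℓ) := by
    intro ℓ
    exact (Finset.measurable_sum _ (fun τ _ => hLmeas ℓ τ)).div_const _
  have hpos : ∀ (i : ℕ) (k' : Fin K) (θ : Fin H) (ω : Ω), 0 < μb k' i θ ω := by
    intro i
    induction i with
    | zero => intro k' θ ω; rw [hμb0]; exact hμinit_pos k' θ
    | succ i ih =>
      intro k' θ ω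
      rw [hcomb]
      exact div_pos (Real.exp_pos _)
        (Finset.sum_pos (fun θ' _ => Real.exp_pos _) Finset.univ_nonempty)
  have hsum : ∀ (i : ℕ) (k' : Fin K) (ω : Ω), ∑ θ, μb k' i θ ω = 1 := by
    intro i k' ω
    cases i with
    | zero => simp only [hμb0]; exact hμinit_sum k'
    | succ i =>
      have hZne : (∑ θ', Real.exp (∑ ℓ, a ℓ k' * Real.log (ψh ℓ (i+1) θ' ω))) ≠ 0 :=
        ne_of_gt (Finset.sum_pos (fun θ' _ => Real.exp_pos _) Finset.univ_nonempty)
      simp only [hcomb]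
      rw [← Finset.sum_div, div_self hZne]
  have hflat : ∀ (i : ℕ), 1 ≤ i → ∀ (k' : Fin K) (θ : Fin H) (ω : Ω), θ ≠ θTX →
      μb k' i θ ω = μb k' i θ1 ω := by
    intro i hi k' θ ω hθ
    obtain ⟨j, rfl⟩ : ∃ j, i = j + 1 := ⟨i - 1, by omega⟩
    rw [hcomb, hcomb]
    have heq : (∑ ℓ, a ℓ k' * Real.log (ψh ℓ (j+1) θ ω))
        = ∑ ℓ, a ℓ k' * Real.log (ψh ℓ (j+1) θ1 ω) :=
      Finset.sum_congr rfl (fun ℓ _ => by rw [hψh_ntx ℓ j θ ω hθ, hψh_ntx ℓ j θ1 ω hθ1])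
    rw [heq]
  set xv : ℕ → Ω → Fin K → ℝ :=
    fun i ω ℓ => Real.log (μb ℓ i θTX ω / μb ℓ i θ1 ω) with hxv_def
  set yv : ℕ → Ω → Fin K → ℝ :=
    fun j ω ℓ => Real.log (L ℓ θTX (ξ ℓ j ω) / Lbar ℓ (ξ ℓ j ω)) with hyv_def
  have hψ_pos : ∀ (ℓ : Fin K) (i : ℕ) (θ : Fin H) (ω : Ω), 0 < ψ ℓ (i+1) θ ω := by
    intro ℓ i θ ω
    rw [hψ]
    exact div_pos (mul_pos (hpos i ℓ θ ω) (hLpos ℓ θ _))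
      (Finset.sum_pos (fun θ' _ => mul_pos (hpos i ℓ θ' ω) (hLpos ℓ θ' _))
        Finset.univ_nonempty)
  have hψ_lt1 : ∀ (ℓ : Fin K) (i : ℕ) (ω : Ω), ψ ℓ (i+1) θTX ω < 1 := by
    intro ℓ i ω
    rw [hψ]
    rw [div_lt_one (Finset.sum_pos
      (fun θ' _ => mul_pos (hpos i ℓ θ' ω) (hLpos ℓ θ' _)) Finset.univ_nonempty)]
    have hsplit := Finset.sum_erase_add Finset.univ
      (fun θ' => μb ℓ i θ' ω * L ℓ θ' (ξ ℓ (i+1) ω)) (Finset.mem_univ θTX)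
    have hpos' : 0 < ∑ θ' ∈ Finset.univ.erase θTX, μb ℓ i θ' ω * L ℓ θ' (ξ ℓ (i+1) ω) :=
      Finset.sum_pos (fun θ' _ => mul_pos (hpos i ℓ θ' ω) (hLpos ℓ θ' _)) herase_ne
    have hsplit' : (∑ θ' ∈ Finset.univ.erase θTX, μb ℓ i θ' ω * L ℓ θ' (ξ ℓ (i+1) ω))
        + μb ℓ i θTX ω * L ℓ θTX (ξ ℓ (i+1) ω)
        = ∑ θ', μb ℓ i θ' ω * L ℓ θ' (ξ ℓ (i+1) ω) := hsplit
    linarith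
  have hψh_pos : ∀ (ℓ : Fin K) (i : ℕ) (θ : Fin H) (ω : Ω), 0 < ψh ℓ (i+1) θ ω := by
    intro ℓ i θ ω
    by_cases hθ : θ = θTX
    · rw [hθ, hψh_tx]; exact hψ_pos ℓ i θTX ω
    · rw [hψh_ntx ℓ i θ ω hθ]
      exact div_pos (by linarith [hψ_lt1 ℓ i ω]) hH1
  have hratio : ∀ (ℓ : Fin K) (j : ℕ), 1 ≤ j → ∀ (ω : Ω),
      Real.log (ψh ℓ (j+1) θTX ω / ψh ℓ (j+1) θ1 ω) = xv j ω ℓ + yv (j+1) ω ℓ := by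
    intro ℓ j hj ω
    obtain ⟨D, hD_def⟩ : ∃ D, D = ∑ θ', μb ℓ j θ' ω * L ℓ θ' (ξ ℓ (j+1) ω) := ⟨_, rfl⟩
    have hD_pos : 0 < D := by
      rw [hD_def]
      exact Finset.sum_pos (fun θ' _ => mul_pos (hpos j ℓ θ' ω) (hLpos ℓ θ' _))
        Finset.univ_nonempty
    have hsplit := Finset.sum_erase_add Finset.univ
      (fun θ' => μb ℓ j θ' ω * L ℓ θ' (ξ ℓ (j+1) ω)) (Finset.mem_univ θTX)
    have herase_sum : ∑ θ' ∈ Finset.univ.erase θTX, μb ℓ j θ' ω * L ℓ θ' (ξ ℓ (j+1) ω)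
        = μb ℓ j θ1 ω * ∑ τ ∈ Finset.univ.erase θTX, L ℓ τ (ξ ℓ (j+1) ω) := by
      rw [Finset.mul_sum]
      exact Finset.sum_congr rfl (fun τ hτ => by
        rw [hflat j hj ℓ τ ω (Finset.mem_erase.1 hτ).1])
    have hDeq : D = μb ℓ j θ1 ω * (∑ τ ∈ Finset.univ.erase θTX, L ℓ τ (ξ ℓ (j+1) ω))
        + μb ℓ j θTX ω * L ℓ θTX (ξ ℓ (j+1) ω) := by
      rw [hD_def, ← hsplit, herase_sum]
    have h1 : ψh ℓ (j+1) θTX ω = μb ℓ j θTX ω * L ℓ θTX (ξ ℓ (j+1) ω) / D := by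
      rw [hψh_tx, hψ, ← hD_def]
    have h2 : ψh ℓ (j+1) θ1 ω = μb ℓ j θ1 ω * Lbar ℓ (ξ ℓ (j+1) ω) / D := by
      rw [hψh_ntx ℓ j θ1 ω hθ1, hψ, ← hD_def]
      have hLb : Lbar ℓ (ξ ℓ (j+1) ω)
          = (∑ τ ∈ Finset.univ.erase θTX, L ℓ τ (ξ ℓ (j+1) ω)) / ((H:ℝ) - 1) := by
        rw [hLbar_def]
      rw [hLb]
      generalize hE : ∑ τ ∈ Finset.univ.erase θTX, L ℓ τ (ξ ℓ (j+1) ω) = E at hDeq ⊢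
      field_simp
      linear_combination hDeq
    have hμ1 := hpos j ℓ θ1 ω
    have hμTX := hpos j ℓ θTX ω
    have hLb_pos := hLbar_pos ℓ (ξ ℓ (j+1) ω)
    have hLTX_pos := hLpos ℓ θTX (ξ ℓ (j+1) ω)
    have hval : ψh ℓ (j+1) θTX ω / ψh ℓ (j+1) θ1 ω
        = (μb ℓ j θTX ω / μb ℓ j θ1 ω)
          * (L ℓ θTX (ξ ℓ (j+1) ω) / Lbar ℓ (ξ ℓ (j+1) ω)) := by
      rw [h1, h2]
      field_simp
    rw [hval, Real.log_mul (div_pos hμTX hμ1).ne' (div_pos hLTX_pos hLb_pos).ne']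
  have hxrec : ∀ (j : ℕ), 1 ≤ j → ∀ (k' : Fin K) (ω : Ω),
      xv (j+1) ω k' = ∑ ℓ, a ℓ k' * (xv j ω ℓ + yv (j+1) ω ℓ) := by
    intro j hj k' ω
    have hZpos : 0 < ∑ θ', Real.exp (∑ ℓ, a ℓ k' * Real.log (ψh ℓ (j+1) θ' ω)) :=
      Finset.sum_pos (fun θ' _ => Real.exp_pos _) Finset.univ_nonempty
    have hq : μb k' (j+1) θTX ω / μb k' (j+1) θ1 ω
        = Real.exp ((∑ ℓ, a ℓ k' * Real.log (ψh ℓ (j+1) θTX ω))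
            - (∑ ℓ, a ℓ k' * Real.log (ψh ℓ (j+1) θ1 ω))) := by
      rw [hcomb, hcomb, div_div_div_comm, div_self hZpos.ne', div_one, Real.exp_sub]
    have hgoal : xv (j+1) ω k' = Real.log (μb k' (j+1) θTX ω / μb k' (j+1) θ1 ω) := by
      simp only [hxv_def]
    rw [hgoal, hq, Real.log_exp, ← Finset.sum_sub_distrib]
    apply Finset.sum_congr rfl
    intro ℓ _
    rw [← mul_sub]
    congr 1
    rw [← Real.log_div (hψh_pos ℓ j θTX ω).ne' (hψh_pos ℓ j θ1 ω).ne']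
    exact hratio ℓ j hj ω
  have hμb_formula : ∀ (i : ℕ), 1 ≤ i → ∀ (ω : Ω),
      μb k i θTX ω = 1 / (1 + ((H:ℝ) - 1) * Real.exp (-(xv i ω k))) := by
    intro i hi ω
    have hμTX := hpos i k θTX ω
    have hμ1 := hpos i k θ1 ω
    have hsplit := Finset.sum_erase_add Finset.univ (fun θ => μb k i θ ω) (Finset.mem_univ θTX)
    have herase_eq : ∑ θ ∈ Finset.univ.erase θTX, μb k i θ ω = ((H:ℝ) - 1) * μb k i θ1 ω := by
      rw [Finset.sum_congr rfl (fun θ hθ => hflat i hi k θ ω (Finset.mem_erase.1 hθ).1)]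
      rw [Finset.sum_const, nsmul_eq_mul, hcard_erase]
    rw [hsum i k ω] at hsplit
    have hkey : μb k i θTX ω + ((H:ℝ)-1) * μb k i θ1 ω = 1 := by
      rw [← herase_eq]; linarith
    have hexp : Real.exp (-(xv i ω k)) = μb k i θ1 ω / μb k i θTX ω := by
      simp only [hxv_def]
      rw [Real.exp_neg, Real.exp_log (div_pos hμTX hμ1), inv_div]
    rw [hexp]
    have hden : 1 + ((H:ℝ)-1) * (μb k i θ1 ω / μb k i θTX ω) = 1 / μb k i θTX ω := by
      field_simp
      linarith
    rw [hden, one_div_one_div]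
  -- matrix facts
  have hApow_nonneg : ∀ (m : ℕ) (ℓ k' : Fin K), 0 ≤ ((Matrix.of a) ^ m) ℓ k' := by
    intro m
    induction m with
    | zero =>
      intro ℓ k'
      rw [pow_zero]
      by_cases h : ℓ = k' <;> simp [Matrix.one_apply, h]
    | succ m ih =>
      intro ℓ k'
      rw [pow_succ, Matrix.mul_apply]
      exact Finset.sum_nonneg fun j _ => mul_nonneg (ih ℓ j) (ha_nonneg j k')
  have hApow_colsum : ∀ (m : ℕ) (k' : Fin K), ∑ ℓ, ((Matrix.of a) ^ m) ℓ k' = 1 := by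
    intro m
    induction m with
    | zero =>
      intro k'
      simp [Matrix.one_apply]
    | succ m ih =>
      intro k'
      simp only [pow_succ, Matrix.mul_apply]
      rw [Finset.sum_comm]
      have hinner : ∀ j, ∑ ℓ, ((Matrix.of a) ^ m) ℓ j * (Matrix.of a) j k' = a j k' := by
        intro j
        rw [← Finset.sum_mul, ih j, one_mul, Matrix.of_apply]
      rw [Finset.sum_congr rfl fun j _ => hinner j]
      exact ha_stoch k'
  obtain ⟨n, hn1, hnpos⟩ : ∃ n : ℕ, 1 ≤ n ∧ ∀ ℓ k', 0 < ((Matrix.of a) ^ n) ℓ k' := by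
    obtain ⟨n₀, hn₀⟩ := ha_prim
    refine ⟨n₀ + 1, by omega, ?_⟩
    intro ℓ k'
    rw [pow_succ, Matrix.mul_apply]
    obtain ⟨j, hj⟩ : ∃ j, 0 < a j k' := by
      by_contra hcon
      push_neg at hcon
      have h0 : ∑ ℓ', a ℓ' k' = 0 :=
        le_antisymm (Finset.sum_nonpos fun j _ => hcon j)
          (Finset.sum_nonneg fun j _ => ha_nonneg j k')
      rw [ha_stoch k'] at h0
      norm_num at h0
    apply Finset.sum_pos'
      (fun j' _ => mul_nonneg (hApow_nonneg n₀ ℓ j') (ha_nonneg j' k'))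
    exact ⟨j, Finset.mem_univ j, mul_pos (hn₀ ℓ j) hj⟩
  set ε : ℝ := Finset.univ.inf' Finset.univ_nonempty
    (fun p : Fin K × Fin K => ((Matrix.of a) ^ n) p.1 p.2) with hε_def
  have hε_pos : 0 < ε := by
    rw [hε_def, Finset.lt_inf'_iff]
    intro p _
    exact hnpos p.1 p.2
  have hε_le : ∀ ℓ k', ε ≤ ((Matrix.of a) ^ n) ℓ k' := by
    intro ℓ k'
    exact Finset.inf'_le _ (Finset.mem_univ (ℓ, k'))
  have hε_le1 : ε ≤ 1 := by
    obtain ⟨ℓ₀⟩ := (inferInstance : Nonempty (Fin K))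
    calc ε ≤ ((Matrix.of a) ^ n) ℓ₀ ℓ₀ := hε_le ℓ₀ ℓ₀
      _ ≤ ∑ ℓ, ((Matrix.of a) ^ n) ℓ ℓ₀ :=
          Finset.single_le_sum (fun ℓ _ => hApow_nonneg n ℓ ℓ₀) (Finset.mem_univ ℓ₀)
      _ = 1 := hApow_colsum n ℓ₀
  set M : Matrix (Fin K) (Fin K) ℝ := (Matrix.of a).transpose with hM_def
  have hvec_rec : ∀ (j : ℕ), 1 ≤ j → ∀ ω,
      xv (j+1) ω = M.mulVec (xv j ω + yv (j+1) ω) := by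
    intro j hj ω
    funext k'
    rw [hxrec j hj k' ω]
    simp only [hM_def, Matrix.mulVec, dotProduct, Matrix.transpose_apply,
      Matrix.of_apply, Pi.add_apply]
  have hM_rowsum : ∀ k', ∑ ℓ, M k' ℓ = 1 := by
    intro k'
    simp only [hM_def, Matrix.transpose_apply, Matrix.of_apply]
    exact ha_stoch k'
  have hM_nonneg : ∀ k' ℓ, 0 ≤ M k' ℓ := by
    intro k' ℓ
    simp only [hM_def, Matrix.transpose_apply, Matrix.of_apply]
    exact ha_nonneg ℓ k'
  have hMn : M ^ n = ((Matrix.of a) ^ n).transpose := by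
    rw [hM_def, ← Matrix.transpose_pow]
  have hMn_rowsum : ∀ k', ∑ ℓ, (M ^ n) k' ℓ = 1 := by
    intro k'
    rw [hMn]
    simp only [Matrix.transpose_apply]
    exact hApow_colsum n k'
  have hMn_nonneg : ∀ k' ℓ, 0 ≤ (M ^ n) k' ℓ := by
    intro k' ℓ
    rw [hMn]
    exact hApow_nonneg n ℓ k'
  have hMn_eps : ∀ k' ℓ, ε ≤ (M ^ n) k' ℓ := by
    intro k' ℓ
    rw [hMn]
    exact hε_le ℓ k'
  have hosc_drift : ∀ ω (i : ℕ), 1 ≤ i → ∀ (m : ℕ),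
      osc (xv (i+m) ω - (M ^ m).mulVec (xv i ω)) ≤
        ∑ t ∈ Finset.Icc 1 m, osc (yv (i+t) ω) := by
    intro ω i hi m
    induction m with
    | zero =>
      rw [add_zero, pow_zero, Matrix.one_mulVec, sub_self]
      rw [show Finset.Icc 1 0 = (∅ : Finset ℕ) from rfl, Finset.sum_empty]
      exact le_of_eq (osc_zero)
    | succ m ih =>
      have h1 : xv (i + (m+1)) ω = M.mulVec (xv (i+m) ω + yv (i+m+1) ω) := by
        rw [show i + (m+1) = (i+m) + 1 from rfl]
        exact hvec_rec (i+m) (by omega) ω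
      have h2 : (M ^ (m+1)).mulVec (xv i ω) = M.mulVec ((M ^ m).mulVec (xv i ω)) := by
        rw [pow_succ', ← Matrix.mulVec_mulVec]

      have h3 : xv (i+(m+1)) ω - (M ^ (m+1)).mulVec (xv i ω)
          = M.mulVec ((xv (i+m) ω - (M ^ m).mulVec (xv i ω)) + yv (i+m+1) ω) := by
        rw [h1, h2]
        simp only [Matrix.mulVec_add, Matrix.mulVec_sub]
        abel
      rw [h3]
      calc osc (M.mulVec ((xv (i+m) ω - (M ^ m).mulVec (xv i ω)) + yv (i+m+1) ω))
          ≤ osc ((xv (i+m) ω - (M ^ m).mulVec (xv i ω)) + yv (i+m+1) ω) :=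
            osc_mulVec_le M hM_nonneg hM_rowsum _
        _ ≤ osc (xv (i+m) ω - (M ^ m).mulVec (xv i ω)) + osc (yv (i+m+1) ω) :=
            osc_add_le _ _
        _ ≤ (∑ t ∈ Finset.Icc 1 m, osc (yv (i+t) ω)) + osc (yv (i+m+1) ω) := by
            linarith [ih]
        _ = ∑ t ∈ Finset.Icc 1 (m+1), osc (yv (i+t) ω) := by
            rw [Finset.sum_Icc_succ_top (by omega : 1 ≤ m+1)]
            rfl
  have hosc_contract : ∀ ω (i : ℕ), 1 ≤ i →
      osc (xv (i+n) ω) ≤ (1 - ε) * osc (xv i ω) + ∑ t ∈ Finset.Icc 1 n, osc (yv (i+t) ω) := by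
    intro ω i hi
    have hdec : xv (i+n) ω
        = (M ^ n).mulVec (xv i ω) + (xv (i+n) ω - (M ^ n).mulVec (xv i ω)) := by
      abel
    calc osc (xv (i+n) ω)
        = osc ((M ^ n).mulVec (xv i ω) + (xv (i+n) ω - (M ^ n).mulVec (xv i ω))) := by
          rw [← hdec]
      _ ≤ osc ((M ^ n).mulVec (xv i ω)) + osc (xv (i+n) ω - (M ^ n).mulVec (xv i ω)) :=
          osc_add_le _ _
      _ ≤ (1-ε) * osc (xv i ω) + ∑ t ∈ Finset.Icc 1 n, osc (yv (i+t) ω) :=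
          add_le_add
            (osc_mulVec_contract (M ^ n) hMn_nonneg hMn_rowsum hε_pos hMn_eps _)
            (hosc_drift ω i hi n)
  -- probabilistic part
  set g : (ℓ : Fin K) → X ℓ → ℝ :=
    fun ℓ s => Real.log (L ℓ θTX s / Lbar ℓ s) with hg_def
  have hg_meas : ∀ ℓ, Measurable (g ℓ) := by
    intro ℓ
    simp only [hg_def]
    exact ((hLmeas ℓ θTX).div (hLbar_meas ℓ)).log
  set Z : (ℓ : Fin K) → ℕ → Ω → ℝ := fun ℓ t ω => g ℓ (ξ ℓ (t+2) ω) with hZ_def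
  set μmean : Fin K → ℝ := fun ℓ => ∫ ω, g ℓ (ξ ℓ 1 ω) ∂P with hμmean_def
  have hLint : ∀ ℓ, Integrable (L ℓ θ0) (ν ℓ) := by
    intro ℓ
    by_contra hcon
    have h := hLdens ℓ θ0
    rw [integral_undef hcon] at h
    norm_num at h
  have hint_comp : ∀ (ℓ : Fin K) (j : ℕ), 1 ≤ j → ∀ q : X ℓ → ℝ, Measurable q →
      Integrable (fun s => q s * L ℓ θ0 s) (ν ℓ) →
      Integrable (fun ω => q (ξ ℓ j ω)) P := by
    intro ℓ j hj q hq hqi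
    have h1 : Integrable q (Measure.map (ξ ℓ j) P) := by
      rw [hξdist ℓ j hj]
      rw [integrable_withDensity_iff ((hLmeas ℓ θ0).ennreal_ofReal)
        (ae_of_all _ fun s => ENNReal.ofReal_lt_top)]
      apply hqi.congr
      apply ae_of_all
      intro s
      simp [ENNReal.toReal_ofReal (hLpos ℓ θ0 s).le]
    exact (integrable_map_measure hq.aestronglyMeasurable (hξmeas ℓ j).aemeasurable).1 h1
  have habs_bound : ∀ (ℓ : Fin K) (θn : Fin H) (s : X ℓ),
      |Real.log (L ℓ θn s / Lbar ℓ s)| ≤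
        2 * (∑ τ, |Real.log (L ℓ θ0 s / L ℓ τ s)|) + Real.log ((H:ℝ) - 1) := by
    intro ℓ θn s
    have hH2 : (1:ℝ) ≤ (H:ℝ) - 1 := by
      have : (2:ℝ) ≤ (H:ℝ) := by exact_mod_cast hH
      linarith
    have hlogH : 0 ≤ Real.log ((H:ℝ) - 1) := Real.log_nonneg hH2
    have hSig : ∀ θ : Fin H, |Real.log (L ℓ θ0 s) - Real.log (L ℓ θ s)|
        ≤ ∑ τ, |Real.log (L ℓ θ0 s / L ℓ τ s)| := by
      intro θ
      rw [← Real.log_div (hLpos ℓ θ0 s).ne' (hLpos ℓ θ s).ne']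
      exact Finset.single_le_sum
        (f := fun τ => |Real.log (L ℓ θ0 s / L ℓ τ s)|)
        (fun τ _ => abs_nonneg (Real.log (L ℓ θ0 s / L ℓ τ s))) (Finset.mem_univ θ)
    obtain ⟨τm, hτm_mem, hτm⟩ :=
      Finset.exists_mem_eq_sup' herase_ne (fun τ => L ℓ τ s)
    have hub : Lbar ℓ s ≤ L ℓ τm s := by
      have hcalc : ∑ τ ∈ Finset.univ.erase θTX, L ℓ τ s ≤ L ℓ τm s * ((H:ℝ) - 1) := by
        calc ∑ τ ∈ Finset.univ.erase θTX, L ℓ τ s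
            ≤ (Finset.univ.erase θTX).card •
                ((Finset.univ.erase θTX).sup' herase_ne (fun τ => L ℓ τ s)) :=
              Finset.sum_le_card_nsmul _ _ _
                (fun τ hτ => Finset.le_sup' (fun τ' => L ℓ τ' s) hτ)
          _ = L ℓ τm s * ((H:ℝ) - 1) := by
              rw [← hτm, nsmul_eq_mul, hcard_erase]; ring
      simp only [hLbar_def]
      rw [div_le_iff₀ hH1]
      exact hcalc
    have hlb : L ℓ τm s / ((H:ℝ)-1) ≤ Lbar ℓ s := by
      have hle : L ℓ τm s ≤ ∑ τ ∈ Finset.univ.erase θTX, L ℓ τ s :=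
        Finset.single_le_sum (fun τ _ => (hLpos ℓ τ s).le) hτm_mem
      simp only [hLbar_def]
      gcongr
    have hub_log : Real.log (Lbar ℓ s) ≤ Real.log (L ℓ τm s) :=
      Real.log_le_log (hLbar_pos ℓ s) hub
    have hlb_log : Real.log (L ℓ τm s) - Real.log ((H:ℝ)-1) ≤ Real.log (Lbar ℓ s) := by
      have h := Real.log_le_log (div_pos (hLpos ℓ τm s) hH1) hlb
      rwa [Real.log_div (hLpos ℓ τm s).ne' (by linarith : ((H:ℝ)-1) ≠ 0)] at h
    have e1 : Real.log (L ℓ θn s / Lbar ℓ s)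
        = Real.log (L ℓ θn s) - Real.log (Lbar ℓ s) :=
      Real.log_div (hLpos ℓ θn s).ne' (hLbar_pos ℓ s).ne'
    have h1 := abs_le.1 (hSig τm)
    have h2 := abs_le.1 (hSig θn)
    rw [e1, abs_le]
    constructor <;> linarith [h1.1, h1.2, h2.1, h2.2]
  have hq_int : ∀ (ℓ : Fin K) (θn : Fin H),
      Integrable (fun s => Real.log (L ℓ θn s / Lbar ℓ s) * L ℓ θ0 s) (ν ℓ) := by
    intro ℓ θn
    have hmeas : Measurable (fun s => Real.log (L ℓ θn s / Lbar ℓ s) * L ℓ θ0 s) :=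
      (((hLmeas ℓ θn).div (hLbar_meas ℓ)).log).mul (hLmeas ℓ θ0)
    refine Integrable.mono'
      (g := fun s => (2 * (∑ τ, |Real.log (L ℓ θ0 s / L ℓ τ s)|)
        + Real.log ((H:ℝ)-1)) * L ℓ θ0 s) ?_ hmeas.aestronglyMeasurable ?_
    · have h1 : Integrable (fun s => ∑ τ, |L ℓ θ0 s * Real.log (L ℓ θ0 s / L ℓ τ s)|) (ν ℓ) :=
        integrable_finset_sum _ (fun τ _ => (hKL ℓ θ0 τ).abs)
      apply Integrable.congr ((h1.const_mul 2).add ((hLint ℓ).const_mul (Real.log ((H:ℝ)-1))))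
      apply ae_of_all
      intro s
      have habs : ∀ τ : Fin H, |L ℓ θ0 s * Real.log (L ℓ θ0 s / L ℓ τ s)|
          = |Real.log (L ℓ θ0 s / L ℓ τ s)| * L ℓ θ0 s := fun τ => by
        rw [abs_mul, abs_of_pos (hLpos ℓ θ0 s), mul_comm]
      show 2 * (∑ τ, |L ℓ θ0 s * Real.log (L ℓ θ0 s / L ℓ τ s)|)
            + Real.log ((H:ℝ)-1) * L ℓ θ0 s
          = (2 * (∑ τ, |Real.log (L ℓ θ0 s / L ℓ τ s)|) + Real.log ((H:ℝ)-1)) * L ℓ θ0 s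
      rw [Finset.sum_congr rfl (fun τ _ => habs τ), ← Finset.sum_mul]
      ring
    · apply ae_of_all
      intro s
      rw [Real.norm_eq_abs, abs_mul, abs_of_pos (hLpos ℓ θ0 s)]
      exact mul_le_mul_of_nonneg_right (habs_bound ℓ θn s) (hLpos ℓ θ0 s).le
  have hmap : ∀ (ℓ : Fin K) (j : ℕ), 1 ≤ j →
      Measure.map (fun ω => g ℓ (ξ ℓ j ω)) P
        = Measure.map (g ℓ) ((ν ℓ).withDensity fun s => ENNReal.ofReal (L ℓ θ0 s)) := by
    intro ℓ j hj
    have : Measure.map (fun ω => g ℓ (ξ ℓ j ω)) P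
        = Measure.map (g ℓ) (Measure.map (ξ ℓ j) P) :=
      (Measure.map_map (hg_meas ℓ) (hξmeas ℓ j)).symm
    rw [this, hξdist ℓ j hj]
  have hZint : ∀ ℓ, Integrable (Z ℓ 0) P := by
    intro ℓ
    have h := hint_comp ℓ 2 (by omega) (g ℓ) (hg_meas ℓ) (by
      simp only [hg_def]
      exact hq_int ℓ θTX)
    simpa only [hZ_def] using h
  have hZident : ∀ (ℓ : Fin K) (t : ℕ), IdentDistrib (Z ℓ t) (Z ℓ 0) P P := by
    intro ℓ t
    refine ⟨((hg_meas ℓ).comp (hξmeas ℓ (t+2))).aemeasurable,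
      ((hg_meas ℓ).comp (hξmeas ℓ 2)).aemeasurable, ?_⟩
    simp only [hZ_def]
    rw [hmap ℓ (t+2) (by omega), hmap ℓ 2 (by omega)]
  have hZindep : ∀ ℓ, Pairwise (Function.onFun (IndepFun · · P) (Z ℓ)) := by
    intro ℓ s t hst
    simp only [Function.onFun]
    have hφ : Measurable (fun w : (∀ k' : Fin K, X k') => g ℓ (w ℓ)) :=
      (hg_meas ℓ).comp (measurable_pi_apply ℓ)
    have h := hξindep.indepFun (show s+1 ≠ t+1 by omega)
    exact h.comp hφ hφ
  have hZmean : ∀ ℓ, ∫ ω, Z ℓ 0 ω ∂P = μmean ℓ := by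
    intro ℓ
    have hid : IdentDistrib (Z ℓ 0) (fun ω => g ℓ (ξ ℓ 1 ω)) P P := by
      refine ⟨((hg_meas ℓ).comp (hξmeas ℓ 2)).aemeasurable,
        ((hg_meas ℓ).comp (hξmeas ℓ 1)).aemeasurable, ?_⟩
      simp only [hZ_def]
      rw [hmap ℓ 2 (by omega), hmap ℓ 1 (by omega)]
    rw [hμmean_def]
    exact hid.integral_eq
  set gavg : ℝ := ∑ ℓ, v ℓ * μmean ℓ with hgavg_def
  have hgavg_pos : 0 < gavg := by
    have hint1 : ∀ ℓ : Fin K, Integrable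
        (fun ω => Real.log (L ℓ θ0 (ξ ℓ 1 ω) / Lbar ℓ (ξ ℓ 1 ω))) P := by
      intro ℓ
      exact hint_comp ℓ 1 le_rfl _ ((hLmeas ℓ θ0).div (hLbar_meas ℓ)).log (hq_int ℓ θ0)
    have hint2 : ∀ ℓ : Fin K, Integrable
        (fun ω => Real.log (L ℓ θ0 (ξ ℓ 1 ω) / L ℓ θTX (ξ ℓ 1 ω))) P := by
      intro ℓ
      apply hint_comp ℓ 1 le_rfl _ ((hLmeas ℓ θ0).div (hLmeas ℓ θTX)).log
      apply (hKL ℓ θ0 θTX).congr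
      apply ae_of_all
      intro s
      simp only [Pi.div_apply]
      ring
    have hsplit : ∀ ℓ : Fin K, μmean ℓ
        = (∫ ω, Real.log (L ℓ θ0 (ξ ℓ 1 ω) / Lbar ℓ (ξ ℓ 1 ω)) ∂P)
          - (∫ ω, Real.log (L ℓ θ0 (ξ ℓ 1 ω) / L ℓ θTX (ξ ℓ 1 ω)) ∂P) := by
      intro ℓ
      rw [hμmean_def, ← integral_sub (hint1 ℓ) (hint2 ℓ)]
      apply integral_congr_ae
      apply ae_of_all
      intro ω
      simp only [hg_def]
      rw [Real.log_div (hLpos ℓ θTX _).ne' (hLbar_pos ℓ _).ne',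
        Real.log_div (hLpos ℓ θ0 _).ne' (hLbar_pos ℓ _).ne',
        Real.log_div (hLpos ℓ θ0 _).ne' (hLpos ℓ θTX _).ne']
      ring
    have hLbar_eq : ∀ (ℓ : Fin K) (ω : Ω), Lbar ℓ (ξ ℓ 1 ω)
        = (∑ τ ∈ Finset.univ.erase θTX, L ℓ τ (ξ ℓ 1 ω)) / ((H:ℝ) - 1) := by
      intro ℓ ω
      rw [hLbar_def]
    rw [hgavg_def]
    have hsum_split : ∑ ℓ, v ℓ * μmean ℓ
        = (∑ ℓ, v ℓ * (∫ ω, Real.log (L ℓ θ0 (ξ ℓ 1 ω) / Lbar ℓ (ξ ℓ 1 ω)) ∂P))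
          - (∑ ℓ, v ℓ * (∫ ω, Real.log (L ℓ θ0 (ξ ℓ 1 ω) / L ℓ θTX (ξ ℓ 1 ω)) ∂P)) := by
      rw [← Finset.sum_sub_distrib]
      exact Finset.sum_congr rfl (fun ℓ _ => by rw [hsplit ℓ, mul_sub])
    rw [hsum_split]
    have hgap' : (∑ ℓ, v ℓ * (∫ ω, Real.log (L ℓ θ0 (ξ ℓ 1 ω) / L ℓ θTX (ξ ℓ 1 ω)) ∂P))
        < ∑ ℓ, v ℓ * (∫ ω, Real.log (L ℓ θ0 (ξ ℓ 1 ω) / Lbar ℓ (ξ ℓ 1 ω)) ∂P) := by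
      have := hgap
      simp only [hLbar_eq]
      exact this
    linarith
  have hSLLN : ∀ᵐ ω ∂P, ∀ ℓ, Tendsto
      (fun m => (∑ t ∈ Finset.range m, Z ℓ t ω) / m) atTop (𝓝 (μmean ℓ)) := by
    rw [ae_all_iff]
    intro ℓ
    have h := strong_law_ae_real (Z ℓ) (hZint ℓ) (hZindep ℓ) (hZident ℓ)
    have h2 : P[Z ℓ 0] = μmean ℓ := hZmean ℓ
    rw [h2] at h
    exact h
  filter_upwards [hSLLN] with ω hω
  set S : ℕ → ℝ := fun i => ∑ ℓ, v ℓ * xv i ω ℓ with hS_def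
  have hswap : ∀ (w : Fin K → ℝ), ∑ k', v k' * ∑ ℓ, a ℓ k' * w ℓ = ∑ ℓ, v ℓ * w ℓ := by
    intro w
    simp only [Finset.mul_sum]
    rw [Finset.sum_comm]
    apply Finset.sum_congr rfl
    intro ℓ _
    have hterm : ∀ k' : Fin K, v k' * (a ℓ k' * w ℓ) = (a ℓ k' * v k') * w ℓ := fun k' => by
      ring
    rw [Finset.sum_congr rfl (fun k' _ => hterm k'), ← Finset.sum_mul, hv_eig ℓ]
  have hyZ : ∀ (ℓ : Fin K) (m : ℕ), yv (m+2) ω ℓ = Z ℓ m ω := by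
    intro ℓ m
    simp only [hyv_def, hZ_def, hg_def]
  have hStel : ∀ m : ℕ, S (m+1) = S 1 + ∑ ℓ, v ℓ * (∑ t ∈ Finset.range m, Z ℓ t ω) := by
    intro m
    induction m with
    | zero => simp
    | succ m ih =>
      have hs : S (m+2) = S (m+1) + ∑ ℓ, v ℓ * Z ℓ m ω := by
        have h1 : S (m+2) = ∑ k', v k' * xv (m+2) ω k' := by rw [hS_def]
        rw [h1,
          Finset.sum_congr rfl (fun k' _ => by rw [hxrec (m+1) (by omega) k' ω]),
          hswap]
        have hsplit2 : ∑ ℓ, v ℓ * (xv (m+1) ω ℓ + yv (m+2) ω ℓ)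
            = (∑ ℓ, v ℓ * xv (m+1) ω ℓ) + ∑ ℓ, v ℓ * Z ℓ m ω := by
          rw [← Finset.sum_add_distrib]
          exact Finset.sum_congr rfl (fun ℓ _ => by rw [hyZ ℓ m, mul_add])
        rw [hsplit2]
      rw [show m + 1 + 1 = m + 2 from rfl, hs, ih]
      have hstep : ∑ ℓ, v ℓ * (∑ t ∈ Finset.range (m+1), Z ℓ t ω)
          = (∑ ℓ, v ℓ * (∑ t ∈ Finset.range m, Z ℓ t ω)) + ∑ ℓ, v ℓ * Z ℓ m ω := by
        rw [← Finset.sum_add_distrib]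
        exact Finset.sum_congr rfl (fun ℓ _ => by rw [Finset.sum_range_succ, mul_add])
      rw [hstep]
      ring
  have hS_tendsto : Tendsto (fun i => S i / i) atTop (𝓝 gavg) := by
    apply (tendsto_add_atTop_iff_nat 1).1
    have hT : Tendsto (fun m : ℕ =>
        (∑ ℓ, v ℓ * (∑ t ∈ Finset.range m, Z ℓ t ω)) / ((m:ℝ)+1)) atTop (𝓝 gavg) := by
      apply div_succ_tendsto _ _ (by simp)
      have heq2 : ∀ m : ℕ, (∑ ℓ, v ℓ * (∑ t ∈ Finset.range m, Z ℓ t ω)) / (m:ℝ)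
          = ∑ ℓ, v ℓ * ((∑ t ∈ Finset.range m, Z ℓ t ω) / (m:ℝ)) := by
        intro m
        rw [Finset.sum_div]
        exact Finset.sum_congr rfl (fun ℓ _ => mul_div_assoc _ _ _)
      apply Tendsto.congr (fun m => (heq2 m).symm)
      rw [hgavg_def]
      exact tendsto_finset_sum _ (fun ℓ _ => (hω ℓ).const_mul (v ℓ))
    have h1 : Tendsto (fun m : ℕ => S 1 / ((m:ℝ)+1)) atTop (𝓝 0) := by
      have h0 := tendsto_one_div_add_atTop_nhds_zero_nat.const_mul (S 1)
      rw [mul_zero] at h0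
      exact h0.congr (fun m => mul_one_div (S 1) _)
    have heq : ∀ m : ℕ, S (m+1) / ((m+1 : ℕ) : ℝ)
        = S 1 / ((m:ℝ)+1)
          + (∑ ℓ, v ℓ * (∑ t ∈ Finset.range m, Z ℓ t ω)) / ((m:ℝ)+1) := by
      intro m
      rw [hStel m, (by push_cast; ring : ((m+1 : ℕ):ℝ) = (m:ℝ)+1), add_div]
    apply Tendsto.congr (fun m => (heq m).symm)
    simpa using h1.add hT
  set b : ℕ → ℝ := fun j => 2 * ∑ ℓ, |yv j ω ℓ| with hb_def
  have hb_nonneg : ∀ j, 0 ≤ b j := by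
    intro j
    rw [hb_def]
    positivity
  have hosc_yb : ∀ j, osc (yv j ω) ≤ b j := fun j => osc_le_two_sum_abs _
  have hb_tendsto : Tendsto (fun j => b j / j) atTop (𝓝 0) := by
    apply (tendsto_add_atTop_iff_nat 2).1
    have hzero : Tendsto (fun m : ℕ => 2 * ∑ ℓ, |Z ℓ m ω| / ((m:ℝ)+1)) atTop (𝓝 0) := by
      have hterm : ∀ ℓ : Fin K,
          Tendsto (fun m : ℕ => |Z ℓ m ω| / ((m:ℝ)+1)) atTop (𝓝 0) := by
        intro ℓ
        have h0 := term_div_succ_tendsto (fun t => Z ℓ t ω) (μmean ℓ) (hω ℓ)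
        have h1 := h0.abs
        rw [abs_zero] at h1
        apply h1.congr
        intro m
        rw [abs_div, abs_of_pos (by positivity : (0:ℝ) < (m:ℝ)+1)]
      have := (tendsto_finset_sum Finset.univ (fun ℓ _ => hterm ℓ)).const_mul (2:ℝ)
      simpa using this
    apply squeeze_zero (fun m => div_nonneg (hb_nonneg _) (Nat.cast_nonneg _)) _ hzero
    intro m
    have hb_eq : b (m+2) = 2 * ∑ ℓ, |Z ℓ m ω| := by
      rw [hb_def]
    calc b (m+2) / ((m+2 : ℕ):ℝ) ≤ b (m+2) / ((m:ℝ)+1) := by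
          apply div_le_div_of_nonneg_left (hb_nonneg _) (by positivity)
          push_cast
          linarith
      _ = 2 * ∑ ℓ, |Z ℓ m ω| / ((m:ℝ)+1) := by
          rw [hb_eq, mul_div_assoc, Finset.sum_div]
  set u : ℕ → ℝ := fun i => osc (xv i ω) with hu_def
  have hu_nonneg : ∀ i, 0 ≤ u i := fun i => osc_nonneg _
  have hu_rec : ∀ i, 1 ≤ i → u (i + n) ≤ (1-ε) * u i + ∑ t ∈ Finset.Icc 1 n, b (i+t) := by
    intro i hi
    refine le_trans (hosc_contract ω i hi) ?_
    have : ∑ t ∈ Finset.Icc 1 n, osc (yv (i+t) ω) ≤ ∑ t ∈ Finset.Icc 1 n, b (i+t) :=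
      Finset.sum_le_sum fun t _ => hosc_yb (i+t)
    linarith
  have hu_tendsto : Tendsto (fun i => u i / i) atTop (𝓝 0) :=
    seq_osc_tendsto u b (1-ε) (by linarith) (by linarith) n hn1 hu_nonneg hb_nonneg hu_rec
      hb_tendsto
  have hdiff : Tendsto (fun i => S i / i - u i / i) atTop (𝓝 gavg) := by
    simpa using hS_tendsto.sub hu_tendsto
  have hosc_spec : ∀ x : Fin K → ℝ,
      Finset.univ.inf' Finset.univ_nonempty x = Finset.univ.sup' Finset.univ_nonempty x - osc x := by
    intro x
    unfold MislearnAux.osc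
    ring
  have hxlow : ∀ i, S i - u i ≤ xv i ω k := by
    intro i
    have h1 : S i ≤ Finset.univ.sup' Finset.univ_nonempty (xv i ω) := by
      rw [hS_def]
      calc ∑ ℓ, v ℓ * xv i ω ℓ
          ≤ ∑ ℓ, v ℓ * (Finset.univ.sup' Finset.univ_nonempty (xv i ω)) :=
            Finset.sum_le_sum (fun ℓ _ =>
              mul_le_mul_of_nonneg_left (apply_le_sup _ ℓ) (hv_pos ℓ).le)
        _ = _ := by rw [← Finset.sum_mul, hv_sum, one_mul]
    have h2 := inf_le_apply (xv i ω) k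
    have h3 := hosc_spec (xv i ω)
    have h4 : u i = osc (xv i ω) := by rw [hu_def]
    linarith
  have hx_top : Tendsto (fun i => xv i ω k) atTop atTop := by
    have hev : ∀ᶠ i : ℕ in atTop, gavg/2 * (i:ℝ) ≤ xv i ω k := by
      have h1 : ∀ᶠ i : ℕ in atTop, gavg/2 < S i / i - u i / i :=
        hdiff.eventually (eventually_gt_nhds (by linarith))
      filter_upwards [h1, eventually_ge_atTop 1] with i hi1 hi2
      have hipos : (0:ℝ) < i := by exact_mod_cast hi2
      have h3 : gavg/2 * i ≤ (S i/i - u i/i) * i := by nlinarith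
      have h4 : (S i/i - u i/i) * i = S i - u i := by field_simp
      have h5 := hxlow i
      linarith
    exact tendsto_atTop_mono' _ hev
      (Tendsto.const_mul_atTop (by linarith : (0:ℝ) < gavg/2) tendsto_natCast_atTop_atTop)
  have hexp0 : Tendsto (fun i => Real.exp (-(xv i ω k))) atTop (𝓝 0) := by
    have hneg : Tendsto (fun i => -(xv i ω k)) atTop atBot := tendsto_neg_atBot_iff.2 hx_top
    exact Real.tendsto_exp_atBot.comp hneg
  have hform : Tendsto (fun i => 1 / (1 + ((H:ℝ)-1) * Real.exp (-(xv i ω k)))) atTop (𝓝 1) := by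
    have hden : Tendsto (fun i => 1 + ((H:ℝ)-1) * Real.exp (-(xv i ω k))) atTop
        (𝓝 (1 + ((H:ℝ)-1) * 0)) :=
      tendsto_const_nhds.add (hexp0.const_mul _)
    rw [mul_zero, add_zero] at hden
    have h := hden.inv₀ (by norm_num)
    rw [inv_one] at h
    simpa [one_div] using h
  apply hform.congr'
  filter_upwards [eventually_ge_atTop 1] with i hi using (hμb_formula i hi ω).symm
end
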